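/- arXiv:2601.08727 — 8 statements merged into one kernel-verified Lean document; each statement's English description precedes it below -/
import Mathlib

section
/- For every Boolean function f: {0,1}^n → {0,1}, rdeg(f) = max(ndeg(f), ndeg(¬f)), where ¬f denotes the pointwise negation of f. -/
open MvPolynomial

/-- A real multivariate polynomial is multilinear if every variable occurs with degree ≤ 1. -/
def Multilinear {σ : Type*} (p : MvPolynomial σ ℝ) : Prop :=
  ∀ i, MvPolynomial.degreeOf i p ≤ 1

/-- Evaluation of a polynomial at a Boolean point (true ↦ 1, false ↦ 0). -/
noncomputable def evalB {σ : Type*} (x : σ → Bool) (p : MvPolynomial σ ℝ) : ℝ :=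
  MvPolynomial.eval (fun i => if x i then (1:ℝ) else 0) p

/-- The real value of a Boolean (true ↦ 1, false ↦ 0). -/
def bval (b : Bool) : ℝ := if b then 1 else 0

/-- The rational degree of a Boolean function: the minimum of max(deg p, deg q) over all
rational representations p/q of f by multilinear real polynomials. -/
noncomputable def rdeg {n : ℕ} (f : (Fin n → Bool) → Bool) : ℕ :=
  sInf {d | ∃ p q : MvPolynomial (Fin n) ℝ, Multilinear p ∧ Multilinear q ∧
    (∀ x, evalB x q ≠ 0 ∧ evalB x p / evalB x q = bval (f x)) ∧
    max p.totalDegree q.totalDegree = d}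

/-- The nondeterministic degree of a Boolean function: the minimum degree of a multilinear
real polynomial that is nonzero exactly on f⁻¹(1). -/
noncomputable def ndeg {n : ℕ} (f : (Fin n → Bool) → Bool) : ℕ :=
  sInf {d | ∃ p : MvPolynomial (Fin n) ℝ, Multilinear p ∧
    (∀ x, evalB x p ≠ 0 ↔ f x = true) ∧ p.totalDegree = d}

/-- Indicator polynomial of a Boolean point. -/
noncomputable def indPoly {n : ℕ} (x : Fin n → Bool) : MvPolynomial (Fin n) ℝ :=
  ∏ i, if x i then X i else 1 - X i

lemma evalB_indPoly {n : ℕ} (x y : Fin n → Bool) :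
    evalB y (indPoly x) = if y = x then 1 else 0 := by
  unfold evalB indPoly
  rw [map_prod]
  have : ∀ i : Fin n,
      (eval fun i => if y i then (1:ℝ) else 0) (if x i then X i else 1 - X i)
        = if y i = x i then 1 else 0 := by
    intro i
    cases hx : x i <;> cases hy : y i <;> simp [hx, hy]
  simp_rw [this]
  rw [Finset.prod_boole]
  by_cases h : y = x
  · simp [h]
  · have hnall : ¬ ∀ i ∈ Finset.univ, y i = x i := by
      intro hall
      exact h (funext fun i => hall i (Finset.mem_univ i))
    rw [if_neg hnall, if_neg h]

lemma multilinear_indPoly {n : ℕ} (x : Fin n → Bool) : Multilinear (indPoly x) := by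
  intro j
  unfold indPoly
  refine (degreeOf_prod_le j _ _).trans ?_
  have h : ∀ i : Fin n,
      degreeOf j (if x i then (X i : MvPolynomial (Fin n) ℝ) else 1 - X i)
        ≤ if j = i then 1 else 0 := by
    intro i
    cases hx : x i
    · simp only [if_neg Bool.false_ne_true]
      refine (degreeOf_sub_le j 1 (X i)).trans ?_
      have h1 : degreeOf j (1 : MvPolynomial (Fin n) ℝ) = 0 := by
        simpa using degreeOf_C (1:ℝ) j
      rw [h1, degreeOf_X]
      simp
    · simp only [hx, if_true]
      rw [degreeOf_X]
  calc ∑ i, degreeOf j (if x i then (X i : MvPolynomial (Fin n) ℝ) else 1 - X i)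
      ≤ ∑ i : Fin n, if j = i then 1 else 0 := Finset.sum_le_sum fun i _ => h i
    _ = 1 := by simp

/-- The multilinear extension of a Boolean function. -/
noncomputable def mle {n : ℕ} (f : (Fin n → Bool) → Bool) : MvPolynomial (Fin n) ℝ :=
  ∑ x : Fin n → Bool, if f x then indPoly x else 0

lemma evalB_mle {n : ℕ} (f : (Fin n → Bool) → Bool) (y : Fin n → Bool) :
    evalB y (mle f) = bval (f y) := by
  unfold mle evalB
  rw [map_sum]
  have : ∀ x : Fin n → Bool,
      (eval fun i => if y i then (1:ℝ) else 0) (if f x then indPoly x else 0)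
        = if f x then (if y = x then 1 else 0) else 0 := by
    intro x
    by_cases h : f x <;> simp [h, ← evalB_indPoly x y, evalB]
  simp_rw [this]
  rw [Finset.sum_eq_single y]
  · by_cases h : f y <;> simp [h, bval]
  · intro x _ hxy
    simp [Ne.symm hxy]
  · intro h
    exact absurd (Finset.mem_univ y) h

lemma multilinear_mle {n : ℕ} (f : (Fin n → Bool) → Bool) : Multilinear (mle f) := by
  intro j
  refine (degreeOf_sum_le j _ _).trans ?_
  refine Finset.sup_le fun x _ => ?_
  by_cases h : f x
  · simpa [h] using multilinear_indPoly x j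
  · simp [h]

lemma ndeg_set_nonempty {n : ℕ} (f : (Fin n → Bool) → Bool) :
    {d | ∃ p : MvPolynomial (Fin n) ℝ, Multilinear p ∧
      (∀ x, evalB x p ≠ 0 ↔ f x = true) ∧ p.totalDegree = d}.Nonempty := by
  refine ⟨(mle f).totalDegree, mle f, multilinear_mle f, fun x => ?_, rfl⟩
  rw [evalB_mle]
  cases h : f x <;> simp [h, bval]

/-- For every Boolean function f : {0,1}^n → {0,1}, rdeg(f) = max(ndeg(f), ndeg(¬f)). -/
theorem stmt_3 (n : ℕ) (f : (Fin n → Bool) → Bool) :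
    rdeg f = max (ndeg f) (ndeg (fun x => !(f x))) := by
  classical
  obtain ⟨p, hpml, hpnz, hpd⟩ := Nat.sInf_mem (ndeg_set_nonempty f)
  obtain ⟨q, hqml, hqnz, hqd⟩ := Nat.sInf_mem (ndeg_set_nonempty (fun x => !(f x)))
  set S : Set ℕ := {d | ∃ p q : MvPolynomial (Fin n) ℝ, Multilinear p ∧ Multilinear q ∧
      (∀ x, evalB x q ≠ 0 ∧ evalB x p / evalB x q = bval (f x)) ∧
      max p.totalDegree q.totalDegree = d} with hS
  have hmem : max p.totalDegree (p + q).totalDegree ∈ S := by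
    refine ⟨p, p + q, hpml, fun i => (degreeOf_add_le i p q).trans
      (max_le (hpml i) (hqml i)), fun x => ?_, rfl⟩
    have hadd : evalB x (p + q) = evalB x p + evalB x q := by
      unfold evalB; rw [map_add]
    cases hf : f x
    · have hp0 : evalB x p = 0 := by
        by_contra h
        exact absurd ((hpnz x).mp h) (by simp [hf])
      have hq0 : evalB x q ≠ 0 := (hqnz x).mpr (by simp [hf])
      constructor
      · rw [hadd, hp0, zero_add]; exact hq0
      · rw [hadd, hp0, zero_add, zero_div, bval, if_neg (by simp)]
    · have hp0 : evalB x p ≠ 0 := (hpnz x).mpr hf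
      have hq0 : evalB x q = 0 := by
        by_contra h
        exact absurd ((hqnz x).mp h) (by simp [hf])
      constructor
      · rw [hadd, hq0, add_zero]; exact hp0
      · rw [hadd, hq0, add_zero, div_self hp0, bval, if_pos rfl]
  have hr_le : rdeg f ≤ max (ndeg f) (ndeg (fun x => !(f x))) := by
    refine (Nat.sInf_le hmem).trans ?_
    refine max_le (le_max_of_le_left hpd.le) ?_
    refine (totalDegree_add p q).trans (max_le ?_ ?_)
    · exact le_max_of_le_left hpd.le
    · exact le_max_of_le_right hqd.le
  refine le_antisymm hr_le ?_
  obtain ⟨P, Q, hPml, hQml, hPQ, hPQd⟩ := Nat.sInf_mem ⟨_, hmem⟩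
  have key : ∀ x, evalB x P = bval (f x) * evalB x Q := by
    intro x
    obtain ⟨hq0, hdiv⟩ := hPQ x
    field_simp at hdiv
    linarith [hdiv]
  have hwP : ∀ x, evalB x P ≠ 0 ↔ f x = true := by
    intro x
    have hP := key x
    cases hf : f x
    · simp [hP, hf, bval]
    · rw [hf] at hP
      norm_num [bval] at hP
      exact ⟨fun _ => rfl, fun _ => hP ▸ (hPQ x).1⟩
  have hwQ : ∀ x, evalB x (Q - P) ≠ 0 ↔ (!(f x)) = true := by
    intro x
    have hP := key x
    have hsub : evalB x (Q - P) = evalB x Q - evalB x P := by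
      unfold evalB; rw [map_sub]
    cases hf : f x
    · rw [hf] at hP
      norm_num [bval] at hP
      rw [hsub, hP, sub_zero]
      simp [(hPQ x).1]
    · rw [hf] at hP
      norm_num [bval] at hP
      simp [hsub, hP]
  have hdP : ndeg f ≤ rdeg f := by
    have h1 : ndeg f ≤ P.totalDegree := Nat.sInf_le ⟨P, hPml, hwP, rfl⟩
    have h2 : P.totalDegree ≤ max P.totalDegree Q.totalDegree := le_max_left _ _
    rw [hPQd] at h2
    exact h1.trans h2
  have hdQ : ndeg (fun x => !(f x)) ≤ rdeg f := by
    have hml : Multilinear (Q - P) := fun i =>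
      (degreeOf_sub_le i Q P).trans (max_le (hQml i) (hPml i))
    have h1 : ndeg (fun x => !(f x)) ≤ (Q - P).totalDegree :=
      Nat.sInf_le ⟨Q - P, hml, hwQ, rfl⟩
    have h2 : (Q - P).totalDegree ≤ max P.totalDegree Q.totalDegree :=
      (totalDegree_sub Q P).trans (by rw [max_comm])
    rw [hPQd] at h2
    exact h1.trans h2
  exact max_le hdP hdQ
end

section
/- For every Boolean function f: {0,1}^n → {0,1}, sdeg(f) ≤ 2·rdeg(f). -/
open MvPolynomial

/-- The sign degree of a Boolean function: the minimum degree of a multilinear real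
polynomial that is nonzero on the cube and negative exactly on f⁻¹(1). -/
noncomputable def sdeg {n : ℕ} (f : (Fin n → Bool) → Bool) : ℕ :=
  sInf {d | ∃ p : MvPolynomial (Fin n) ℝ, Multilinear p ∧ (∀ x, evalB x p ≠ 0) ∧
    (∀ x, evalB x p < 0 ↔ f x = true) ∧ p.totalDegree = d}


noncomputable def ML {σ : Type*} (p : MvPolynomial σ ℝ) : MvPolynomial σ ℝ :=
  ∑ s ∈ p.support, monomial (Finsupp.mapRange (fun e => min e 1) (by simp) s) (coeff s p)

lemma ML_deg1 {σ : Type*} (p : MvPolynomial σ ℝ) (i : σ) : degreeOf i (ML p) ≤ 1 := by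
  classical
  rw [degreeOf_le_iff]
  intro m hm
  obtain ⟨s, _, hs⟩ := Finset.mem_biUnion.mp (MvPolynomial.support_sum hm)
  have := support_monomial_subset hs
  simp only [Finset.mem_singleton] at this
  subst this
  simp [Finsupp.mapRange_apply]

lemma ML_totalDegree {σ : Type*} (p : MvPolynomial σ ℝ) : (ML p).totalDegree ≤ p.totalDegree := by
  refine (totalDegree_finset_sum _ _).trans (Finset.sup_le fun s hs => ?_)
  refine (totalDegree_monomial_le _ _).trans ?_
  refine le_trans ?_ (le_totalDegree hs)
  rw [Finsupp.sum_mapRange_index (by simp)]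
  exact Finsupp.sum_le_sum fun i _ => min_le_left _ _

lemma evalB_ML {σ : Type*} (x : σ → Bool) (p : MvPolynomial σ ℝ) : evalB x (ML p) = evalB x p := by
  unfold evalB ML
  conv_rhs => rw [p.as_sum]
  rw [map_sum, map_sum]
  refine Finset.sum_congr rfl fun s _ => ?_
  rw [eval_monomial, eval_monomial]
  congr 1
  rw [Finsupp.prod_mapRange_index (by simp)]
  refine Finsupp.prod_congr fun i _ => ?_
  rcases x i with _ | _ <;> simp <;> cases (s i) <;> simp

lemma rdeg_set_nonempty {n : ℕ} (f : (Fin n → Bool) → Bool) :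
    {d | ∃ p q : MvPolynomial (Fin n) ℝ, Multilinear p ∧ Multilinear q ∧
      (∀ x, evalB x q ≠ 0 ∧ evalB x p / evalB x q = bval (f x)) ∧
      max p.totalDegree q.totalDegree = d}.Nonempty := by
  classical
  set p0 : MvPolynomial (Fin n) ℝ :=
    ∑ a : Fin n → Bool, C (bval (f a)) * ∏ i, (if a i then X i else 1 - X i) with hp0
  have hev : ∀ x, evalB x p0 = bval (f x) := by
    intro x
    unfold evalB
    rw [hp0, map_sum]
    have : ∀ a : Fin n → Bool,
        (eval fun i => if x i then (1:ℝ) else 0)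
          (C (bval (f a)) * ∏ i, (if a i then X i else 1 - X i))
        = if a = x then bval (f a) else 0 := by
      intro a
      rw [map_mul, eval_C, map_prod]
      by_cases h : a = x
      · subst h
        have : ∀ i, (eval fun i => if a i then (1:ℝ) else 0) (if a i then X i else 1 - X i) = 1 := by
          intro i; rcases h : a i <;> simp [h]
        simp [this]
      · obtain ⟨i, hi⟩ := Function.ne_iff.mp h
        rw [Finset.prod_eq_zero (Finset.mem_univ i), if_neg h, mul_zero]
        rcases hx : x i <;> rcases ha : a i <;> simp_all
    simp only [this]
    simp
  refine ⟨_, ML p0, 1, fun i => ML_deg1 p0 i, fun i => by rw [← C_1, degreeOf_C]; exact zero_le_one, fun x => ?_, rfl⟩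
  constructor
  · simp [evalB]
  · rw [evalB_ML]
    simp [evalB] at *
    simp [hev x]

/-- For every Boolean function f : {0,1}^n → {0,1}, sdeg(f) ≤ 2·rdeg(f). -/
theorem stmt_4 (n : ℕ) (f : (Fin n → Bool) → Bool) :
    sdeg f ≤ 2 * rdeg f := by
  obtain ⟨p, q, hp, hq, h, hd⟩ := Nat.sInf_mem (rdeg_set_nonempty f)
  set r := ML (q * q - C 2 * (p * q)) with hr
  have hv : ∀ x, evalB x r = evalB x q * evalB x q - 2 * (evalB x p * evalB x q) := by
    intro x
    rw [hr, evalB_ML]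
    simp [evalB]
  have hsign : ∀ x, (evalB x r ≠ 0) ∧ (evalB x r < 0 ↔ f x = true) := by
    intro x
    obtain ⟨hq0, hpq⟩ := h x
    rw [div_eq_iff hq0] at hpq
    have hqq : 0 < evalB x q * evalB x q := mul_self_pos.mpr hq0
    rcases hfx : f x with _ | _
    · rw [hfx] at hpq
      simp [bval] at hpq
      rw [hv x, hpq]
      constructor
      · simp; positivity
      · simp; nlinarith
    · rw [hfx] at hpq
      simp [bval] at hpq
      rw [hv x, hpq]
      constructor
      · intro hcon; nlinarith
      · simp; nlinarith
  have hle : sdeg f ≤ r.totalDegree :=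
    Nat.sInf_le ⟨r, fun i => ML_deg1 _ i, fun x => (hsign x).1, fun x => (hsign x).2, rfl⟩
  refine hle.trans ?_
  have hpd : p.totalDegree ≤ rdeg f := le_of_max_le_left hd.le
  have hqd : q.totalDegree ≤ rdeg f := le_of_max_le_right hd.le
  refine (ML_totalDegree _).trans ?_
  rw [sub_eq_add_neg]
  refine (totalDegree_add _ _).trans (max_le ?_ ?_)
  · exact (totalDegree_mul _ _).trans (by omega)
  · rw [totalDegree_neg]
    refine (totalDegree_mul _ _).trans ?_
    rw [totalDegree_C]
    exact (Nat.zero_add _).le.trans ((totalDegree_mul _ _).trans (by omega))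
end

section
/- For every nonconstant Boolean function f: {0,1}^n → {0,1}, there exists x ∈ f^{-1}(0) such that bs_x(f) ≤ 2·ndeg(¬f)^2, where ¬f denotes the pointwise negation of f. -/
/-- `flipSet x B` is `x` with all bits in `B` flipped. -/
def flipSet {n : ℕ} (x : Fin n → Bool) (B : Finset (Fin n)) : Fin n → Bool :=
  fun i => if i ∈ B then !(x i) else x i

/-- The block sensitivity of `f` at `x`: the maximum number of pairwise disjoint
sensitive blocks of `f` at `x`. -/
noncomputable def bs {n : ℕ} (f : (Fin n → Bool) → Bool) (x : Fin n → Bool) : ℕ :=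
  sSup {k | ∃ Bs : Fin k → Finset (Fin n),
    (∀ i, f (flipSet x (Bs i)) ≠ f x) ∧ (∀ i j, i ≠ j → Disjoint (Bs i) (Bs j))}


namespace MK
open Polynomial Finset

lemma deriv_finset_prod {ι : Type*} [DecidableEq ι] (s : Finset ι) (f : ι → ℝ[X]) :
    derivative (∏ i ∈ s, f i) = ∑ i ∈ s, (∏ j ∈ s.erase i, f j) * derivative (f i) := by
  induction s using Finset.induction with
  | empty => simp
  | insert a s ha ih =>
    rw [Finset.prod_insert ha, derivative_mul, ih, Finset.sum_insert ha,
      Finset.erase_insert ha, Finset.mul_sum]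
    congr 1
    · rw [mul_comm]
    apply Finset.sum_congr rfl
    intro i hi
    rw [Finset.erase_insert_of_ne (by rintro rfl; exact ha hi), Finset.prod_insert
      (fun h => ha (Finset.mem_of_mem_erase h))]
    ring

lemma sign_prod_nonpos {ι : Type*} (s : Finset ι) (f : ι → ℝ) (h : ∀ i ∈ s, f i ≤ 0) :
    0 ≤ (-1 : ℝ) ^ s.card * ∏ i ∈ s, f i := by
  classical
  induction s using Finset.induction with
  | empty => simp
  | insert a s ha ih =>
    rw [Finset.prod_insert ha, Finset.card_insert_of_notMem ha, pow_succ]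
    have h1 : 0 ≤ (-1 : ℝ) ^ s.card * ∏ i ∈ s, f i :=
      ih (fun i hi => h i (Finset.mem_insert_of_mem hi))
    have h2 : f a ≤ 0 := h a (Finset.mem_insert_self a s)
    nlinarith

lemma U_eval_one : ∀ m : ℕ, (Polynomial.Chebyshev.U ℝ (m : ℤ)).eval 1 = (m : ℝ) + 1 := by
  have key : ∀ m : ℕ, (Polynomial.Chebyshev.U ℝ (m : ℤ)).eval 1 = (m : ℝ) + 1 ∧
      (Polynomial.Chebyshev.U ℝ ((m+1 : ℕ) : ℤ)).eval 1 = ((m+1 : ℕ) : ℝ) + 1 := by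
    intro m
    induction m with
    | zero => constructor <;> simp [Polynomial.Chebyshev.U_zero, Polynomial.Chebyshev.U_one] <;> norm_num
    | succ k ih =>
      refine ⟨ih.2, ?_⟩
      have e : ((k + 2 : ℕ) : ℤ) = (k : ℤ) + 2 := by push_cast; ring
      rw [e, Polynomial.Chebyshev.U_add_two]
      simp only [Polynomial.eval_sub, Polynomial.eval_mul, Polynomial.eval_ofNat,
        Polynomial.eval_X]
      have e1 : ((k + 1 : ℕ) : ℤ) = (k : ℤ) + 1 := by push_cast; ring
      rw [e1] at ih
      rw [ih.2, ih.1]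
      push_cast
      ring
  exact fun m => (key m).1

lemma T_deriv_one (d : ℕ) :
    (derivative (Polynomial.Chebyshev.T ℝ (d : ℤ))).eval 1 = (d : ℝ) ^ 2 := by
  rw [Polynomial.Chebyshev.T_derivative_eq_U]
  cases d with
  | zero => simp
  | succ k =>
    have e : ((k + 1 : ℕ) : ℤ) - 1 = (k : ℤ) := by push_cast; ring
    rw [e]
    simp only [Polynomial.eval_mul, Polynomial.eval_intCast]
    rw [U_eval_one]
    push_cast
    ring

lemma T_natDegree_le : ∀ d : ℕ, (Polynomial.Chebyshev.T ℝ (d : ℤ)).natDegree ≤ d := by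
  have key : ∀ m : ℕ, (Polynomial.Chebyshev.T ℝ (m : ℤ)).natDegree ≤ m ∧
      (Polynomial.Chebyshev.T ℝ ((m+1 : ℕ) : ℤ)).natDegree ≤ m + 1 := by
    intro m
    induction m with
    | zero =>
      constructor
      · simp [Polynomial.Chebyshev.T_zero]
      · simpa [Polynomial.Chebyshev.T_one] using Polynomial.natDegree_X_le
    | succ k ih =>
      refine ⟨ih.2, ?_⟩
      have e : ((k + 2 : ℕ) : ℤ) = (k : ℤ) + 2 := by push_cast; ring
      rw [e, Polynomial.Chebyshev.T_add_two]
      refine (Polynomial.natDegree_sub_le _ _).trans (max_le ?_ (ih.1.trans (by omega)))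
      refine (Polynomial.natDegree_mul_le).trans ?_
      have hX : (2 * X : ℝ[X]).natDegree ≤ 1 :=
        (Polynomial.natDegree_mul_le).trans (by simp)
      have e1 : ((k + 1 : ℕ) : ℤ) = (k : ℤ) + 1 := by push_cast; ring
      rw [← e1]
      have := ih.2
      omega
  exact fun d => (key d).1


lemma binom_one' {α : Type*} [DecidableEq α] {R : Type*} [CommRing R] (x y : R)
    (hxy : x + y = 1) (s : Finset α) :
    ∑ B ∈ s.powerset, x ^ B.card * y ^ (s.card - B.card) = 1 := by
  have h := Finset.prod_add (fun _ : α => x) (fun _ : α => y) s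
  rw [Finset.prod_congr rfl (fun i _ => hxy), Finset.prod_const_one] at h
  rw [h]
  refine Finset.sum_congr rfl fun B hB => ?_
  rw [Finset.prod_const, Finset.prod_const, Finset.card_sdiff_of_subset (Finset.mem_powerset.mp hB)]

lemma marg {k : ℕ} (J : Finset (Fin k)) (w : Finset (Fin k) → ℝ)
    (hw : ∀ T, w T = w (T ∩ J)) :
    ∑ T : Finset (Fin k), C (w T) * X ^ T.card * (1 - X) ^ (k - T.card)
      = ∑ T ∈ J.powerset, C (w T) * X ^ T.card * (1 - X) ^ (J.card - T.card) := by
  classical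
  have hmap : ∀ T ∈ (Finset.univ : Finset (Finset (Fin k))), T ∩ J ∈ J.powerset :=
    fun T _ => Finset.mem_powerset.mpr Finset.inter_subset_right
  rw [← Finset.sum_fiberwise_of_maps_to hmap
    (fun T => C (w T) * X ^ T.card * (1 - X) ^ (k - T.card))]
  refine Finset.sum_congr rfl fun A hA => ?_
  have hAJ : A ⊆ J := Finset.mem_powerset.mp hA
  -- inner sum over the fiber
  have hfib : ∀ T ∈ Finset.univ.filter (fun T : Finset (Fin k) => T ∩ J = A), w T = w A := by
    intro T hT
    rw [Finset.mem_filter] at hT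
    rw [hw T, hT.2]
  have hcompl : J.card + Jᶜ.card = k := by
    rw [Finset.card_compl]
    have := Finset.card_le_univ J
    simp only [Finset.card_univ, Fintype.card_fin] at *
    omega
  have key : ∑ T ∈ Finset.univ.filter (fun T : Finset (Fin k) => T ∩ J = A),
      (X : ℝ[X]) ^ T.card * (1 - X) ^ (k - T.card)
      = (X ^ A.card * (1 - X) ^ (J.card - A.card)) *
        ∑ B ∈ Jᶜ.powerset, (X : ℝ[X]) ^ B.card * (1 - X) ^ (Jᶜ.card - B.card) := by
    rw [Finset.mul_sum]
    refine Finset.sum_nbij' (fun T => T \ J) (fun B => A ∪ B) ?_ ?_ ?_ ?_ ?_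
    · intro T hT
      exact Finset.mem_powerset.mpr (Finset.sdiff_subset_sdiff (Finset.subset_univ T) le_rfl)
    · intro B hB
      rw [Finset.mem_filter]
      refine ⟨Finset.mem_univ _, ?_⟩
      have hB' : B ⊆ Jᶜ := Finset.mem_powerset.mp hB
      have hd : Disjoint B J :=
        Finset.disjoint_left.mpr (fun a haB haJ => (Finset.mem_compl.mp (hB' haB)) haJ)
      show (A ∪ B) ∩ J = A
      rw [Finset.union_inter_distrib_right, Finset.disjoint_iff_inter_eq_empty.mp hd,
        Finset.union_empty, Finset.inter_eq_left.mpr hAJ]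
    · intro T hT
      rw [Finset.mem_filter] at hT
      show A ∪ T \ J = T
      rw [← hT.2]
      exact (Finset.union_comm _ _).trans (Finset.sdiff_union_inter T J)
    · intro B hB
      have hB' : B ⊆ Jᶜ := Finset.mem_powerset.mp hB
      have hd : Disjoint B J :=
        Finset.disjoint_left.mpr (fun a haB haJ => (Finset.mem_compl.mp (hB' haB)) haJ)
      show (A ∪ B) \ J = B
      rw [Finset.union_sdiff_distrib]
      have h1 : A \ J = ∅ := Finset.sdiff_eq_empty_iff_subset.mpr hAJ
      have h2 : B \ J = B := Finset.sdiff_eq_self_iff_disjoint.mpr hd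
      rw [h1, h2, Finset.empty_union]
    · intro T hT
      rw [Finset.mem_filter] at hT
      have hcards : A.card + (T \ J).card = T.card := by
        rw [← hT.2]
        exact Finset.card_inter_add_card_sdiff T J
      have hc1 : A.card ≤ J.card := Finset.card_le_card hAJ
      have hc2 : (T \ J).card ≤ Jᶜ.card :=
        Finset.card_le_card (Finset.sdiff_subset_sdiff (Finset.subset_univ T) le_rfl)
      have he : k - T.card = (J.card - A.card) + (Jᶜ.card - (T \ J).card) := by omega
      rw [he, pow_add, ← hcards, pow_add]
      ring
  calc ∑ T ∈ Finset.univ.filter (fun T : Finset (Fin k) => T ∩ J = A),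
        C (w T) * X ^ T.card * (1 - X) ^ (k - T.card)
      = ∑ T ∈ Finset.univ.filter (fun T : Finset (Fin k) => T ∩ J = A),
        C (w A) * (X ^ T.card * (1 - X) ^ (k - T.card)) := by
        refine Finset.sum_congr rfl fun T hT => ?_
        rw [hfib T hT]; ring
    _ = C (w A) * ∑ T ∈ Finset.univ.filter (fun T : Finset (Fin k) => T ∩ J = A),
        (X : ℝ[X]) ^ T.card * (1 - X) ^ (k - T.card) := by rw [← Finset.mul_sum]
    _ = C (w A) * ((X ^ A.card * (1 - X) ^ (J.card - A.card)) * 1) := by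
        rw [key, binom_one' (X : ℝ[X]) (1 - X) (by ring) Jᶜ]
    _ = C (w A) * X ^ A.card * (1 - X) ^ (J.card - A.card) := by ring


lemma markov_endpoint (d : ℕ) (P : ℝ[X]) (M : ℝ)
    (hdeg : P.natDegree ≤ d)
    (hbd : ∀ t : ℝ, 0 ≤ t → t ≤ 1 → |P.eval t| ≤ M) :
    |(derivative P).eval 0| ≤ 2 * (d : ℝ) ^ 2 * M := by
  classical
  rcases Nat.eq_zero_or_pos d with rfl | hd
  · rw [Polynomial.eq_C_of_natDegree_le_zero hdeg]
    simp
  have hdR : (0 : ℝ) < d := by exact_mod_cast hd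
  set v : ℕ → ℝ := fun j => (1 - Real.cos (j * Real.pi / d)) / 2 with hv
  set s : Finset ℕ := Finset.range (d + 1) with hs
  have hcard : s.card = d + 1 := Finset.card_range _
  have hv0 : v 0 = 0 := by simp [hv]
  have hmono : ∀ {a b : ℕ}, b ≤ d → a < b → v a < v b := by
    intro a b hb hab
    have h1 : (0 : ℝ) ≤ (a : ℝ) * Real.pi / d := by positivity
    have h2 : (b : ℝ) * Real.pi / d ≤ Real.pi := by
      rw [div_le_iff₀ hdR]
      have : (b : ℝ) ≤ d := by exact_mod_cast hb
      nlinarith [Real.pi_pos]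
    have hlt : (a : ℝ) * Real.pi / d < (b : ℝ) * Real.pi / d := by
      have : (a : ℝ) < b := by exact_mod_cast hab
      gcongr
    have := Real.cos_lt_cos_of_nonneg_of_le_pi h1 h2 hlt
    simp only [hv]
    linarith
  have hvpos : ∀ j, 1 ≤ j → j ≤ d → 0 < v j := by
    intro j h1 h2
    rw [← hv0]; exact hmono h2 h1
  have hinj : Set.InjOn v s := by
    intro a ha b hb hab
    simp only [hs, Finset.coe_range, Set.mem_Iio] at ha hb
    by_contra hne
    rcases Nat.lt_or_ge a b with h | h
    · exact absurd hab (ne_of_lt (hmono (by omega) h))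
    · have : b < a := by omega
      exact absurd hab.symm (ne_of_lt (hmono (by omega) this))
  have hdegs : ∀ Q : ℝ[X], Q.natDegree ≤ d → Q.degree < s.card := by
    intro Q hQ
    rw [hcard]
    refine lt_of_le_of_lt (Polynomial.degree_le_natDegree) ?_
    exact_mod_cast Nat.lt_succ_of_le hQ
  set D : ℕ → ℝ := fun j => (derivative (Lagrange.basis s v j)).eval 0 with hD
  have keyrep : ∀ Q : ℝ[X], Q.natDegree ≤ d →
      (derivative Q).eval 0 = ∑ j ∈ s, Q.eval (v j) * D j := by
    intro Q hQ
    conv_lhs => rw [Lagrange.eq_interpolate hinj (hdegs Q hQ)]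
    rw [Lagrange.interpolate_apply, derivative_sum, eval_finset_sum]
    refine Finset.sum_congr rfl fun j hj => ?_
    rw [derivative_C_mul, eval_mul, eval_C]
  -- evaluation of basisDivisor and its derivative
  have bd_eval : ∀ x y : ℝ, (Lagrange.basisDivisor x y).eval 0 = (x - y)⁻¹ * (0 - y) := by
    intro x y; simp [Lagrange.basisDivisor]
  have bd_deriv : ∀ x y : ℝ, (derivative (Lagrange.basisDivisor x y)).eval 0 = (x - y)⁻¹ := by
    intro x y
    rw [Lagrange.basisDivisor, derivative_C_mul, derivative_X_sub_C]
    simp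
  have hDval : ∀ j ∈ s, D j = ∑ i ∈ s.erase j,
      (∏ i' ∈ (s.erase j).erase i, ((v j - v i')⁻¹ * (0 - v i'))) * (v j - v i)⁻¹ := by
    intro j hj
    rw [hD]
    show (derivative (Lagrange.basis s v j)).eval 0 = _
    rw [Lagrange.basis, deriv_finset_prod, eval_finset_sum]
    refine Finset.sum_congr rfl fun i hi => ?_
    rw [eval_mul, eval_prod, bd_deriv]
    congr 1
    exact Finset.prod_congr rfl fun i' _ => bd_eval _ _
  have hD0 : D 0 ≤ 0 := by
    rw [hDval 0 (by simp [hs])]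
    refine Finset.sum_nonpos fun i hi => ?_
    have hi' : 1 ≤ i ∧ i ≤ d := by
      simp only [hs, Finset.mem_erase, Finset.mem_range] at hi; omega
    have hvi : 0 < v i := hvpos i hi'.1 hi'.2
    have hprod : (∏ i' ∈ (s.erase 0).erase i, ((v 0 - v i')⁻¹ * (0 - v i'))) = 1 := by
      refine Finset.prod_eq_one fun i' hi' => ?_
      have h1 : 1 ≤ i' ∧ i' ≤ d := by
        simp only [hs, Finset.mem_erase, Finset.mem_range] at hi'; omega
      have : 0 < v i' := hvpos i' h1.1 h1.2
      rw [hv0]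
      field_simp
      exact div_self (by linarith)
    rw [hprod, one_mul, hv0]
    simp only [zero_sub]
    rw [inv_neg]
    simp [le_of_lt, hvi, inv_nonneg]
  have hDj : ∀ j, 1 ≤ j → j ≤ d → 0 ≤ (-1 : ℝ) ^ (j + 1) * D j := by
    intro j hj1 hjd
    have hjs : j ∈ s := by simp [hs]; omega
    have h0s : (0 : ℕ) ∈ s.erase j := by simp [hs]; omega
    have hvj : 0 < v j := hvpos j hj1 hjd
    rw [hDval j hjs]
    rw [Finset.sum_eq_single_of_mem 0 h0s ?side]
    case side =>
      intro i hi hne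
      have h0 : (0 : ℕ) ∈ (s.erase j).erase i := Finset.mem_erase.mpr ⟨Ne.symm hne, h0s⟩
      rw [Finset.prod_eq_zero h0 (by rw [hv0]; ring), zero_mul]
    -- now the single term
    set A : Finset ℕ := (s.erase j).erase 0 with hA
    set g : ℕ → ℝ := fun i' => (v j - v i')⁻¹ * (0 - v i') with hg
    have hsplit : A = Finset.Ico 1 j ∪ Finset.Ico (j+1) (d+1) := by
      ext i
      simp only [hA, hs, Finset.mem_erase, Finset.mem_range, Finset.mem_union, Finset.mem_Ico]
      omega
    have hdisj : Disjoint (Finset.Ico 1 j) (Finset.Ico (j+1) (d+1)) := by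
      rw [Finset.disjoint_left]
      intro i hi hi'
      simp only [Finset.mem_Ico] at hi hi'
      omega
    have hprod : (∏ i' ∈ A, g i') = (∏ i' ∈ Finset.Ico 1 j, g i') *
        (∏ i' ∈ Finset.Ico (j+1) (d+1), g i') := by
      rw [hsplit, Finset.prod_union hdisj]
    have hP1 : 0 ≤ (-1 : ℝ) ^ (j - 1) * ∏ i' ∈ Finset.Ico 1 j, g i' := by
      have hcard1 : (Finset.Ico 1 j).card = j - 1 := by rw [Nat.card_Ico]
      rw [← hcard1]
      refine sign_prod_nonpos _ _ fun i' hi' => ?_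
      simp only [Finset.mem_Ico] at hi'
      have h1 : 0 < v i' := hvpos i' hi'.1 (by omega)
      have h2 : v i' < v j := hmono hjd hi'.2
      show (v j - v i')⁻¹ * (0 - v i') ≤ 0
      have h3 : 0 < (v j - v i')⁻¹ := inv_pos.mpr (by linarith)
      nlinarith
    have hP2 : 0 ≤ ∏ i' ∈ Finset.Ico (j+1) (d+1), g i' := by
      refine Finset.prod_nonneg fun i' hi' => ?_
      simp only [Finset.mem_Ico] at hi'
      have h2 : v j < v i' := hmono (by omega) (by omega)
      have h1 : 0 < v i' := lt_trans hvj h2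
      show 0 ≤ (v j - v i')⁻¹ * (0 - v i')
      have h3 : (v j - v i')⁻¹ < 0 := inv_lt_zero.mpr (by linarith)
      nlinarith
    have hpow : (-1 : ℝ) ^ (j + 1) = (-1 : ℝ) ^ (j - 1) := by
      have : j + 1 = (j - 1) + 2 := by omega
      rw [this, pow_add]
      norm_num
    rw [hpow, hv0, sub_zero, hprod]
    have : (-1 : ℝ) ^ (j - 1) * ((∏ i' ∈ Finset.Ico 1 j, g i') *
        (∏ i' ∈ Finset.Ico (j+1) (d+1), g i') * (v j)⁻¹) =
        ((-1 : ℝ) ^ (j - 1) * ∏ i' ∈ Finset.Ico 1 j, g i') *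
        (∏ i' ∈ Finset.Ico (j+1) (d+1), g i') * (v j)⁻¹ := by ring
    rw [this]
    have hvinv : 0 ≤ (v j)⁻¹ := le_of_lt (by positivity)
    exact mul_nonneg (mul_nonneg hP1 hP2) hvinv
  -- Chebyshev composite
  set Tt : ℝ[X] := (Polynomial.Chebyshev.T ℝ (d : ℤ)).comp (C 1 - C 2 * X) with hTt
  have hTtdeg : Tt.natDegree ≤ d := by
    refine (Polynomial.natDegree_comp_le).trans ?_
    have h1 : (C (1:ℝ) - C 2 * X).natDegree ≤ 1 := by
      refine (Polynomial.natDegree_sub_le _ _).trans (max_le (by simp) ?_)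
      exact (Polynomial.natDegree_C_mul_le _ _).trans (by simp)
    calc (Polynomial.Chebyshev.T ℝ (d : ℤ)).natDegree * (C (1:ℝ) - C 2 * X).natDegree
        ≤ d * 1 := Nat.mul_le_mul (T_natDegree_le d) h1
      _ = d := by omega
  have hTteval : ∀ j ∈ s, Tt.eval (v j) = (-1 : ℝ) ^ j := by
    intro j hj
    have hjd : j ≤ d := by simp only [hs, Finset.mem_range] at hj; omega
    rw [hTt, Polynomial.eval_comp]
    have h1 : (C (1:ℝ) - C 2 * X).eval (v j) = Real.cos (j * Real.pi / d) := by
      simp [hv]; ring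
    rw [h1, Polynomial.Chebyshev.T_real_cos]
    have h2 : (((d : ℤ) : ℝ)) * ((j : ℝ) * Real.pi / d) = (j : ℝ) * Real.pi := by
      push_cast
      field_simp
    rw [h2]
    simpa using Real.cos_add_nat_mul_pi 0 j
  have hTtderiv : (derivative Tt).eval 0 = -(2 * (d : ℝ) ^ 2) := by
    rw [hTt, Polynomial.derivative_comp]
    have h1 : derivative (C (1:ℝ) - C 2 * X) = -(C 2) := by
      rw [derivative_sub, derivative_C, derivative_C_mul, derivative_X]
      simp
    rw [h1]
    simp only [eval_mul, eval_neg, eval_C, Polynomial.eval_comp, eval_sub, eval_one, eval_X,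
      eval_mul]
    norm_num [T_deriv_one]
  have hsum : ∑ j ∈ s, (-1 : ℝ) ^ j * D j = -(2 * (d : ℝ) ^ 2) := by
    rw [← hTtderiv, keyrep Tt hTtdeg]
    exact Finset.sum_congr rfl fun j hj => by rw [hTteval j hj]
  have habs : ∀ j ∈ s, |D j| = (-1 : ℝ) ^ (j + 1) * D j := by
    intro j hj
    have hjd : j ≤ d := by simp only [hs, Finset.mem_range] at hj; omega
    rcases Nat.eq_zero_or_pos j with rfl | hj1
    · rw [abs_of_nonpos hD0]; ring
    · have h := hDj j hj1 hjd
      have : |(-1 : ℝ) ^ (j + 1) * D j| = |D j| := by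
        rw [abs_mul, abs_pow, abs_neg, abs_one, one_pow, one_mul]
      rw [← this, abs_of_nonneg h]
  have hsumabs : ∑ j ∈ s, |D j| = 2 * (d : ℝ) ^ 2 := by
    rw [Finset.sum_congr rfl habs]
    have : ∀ j, (-1 : ℝ) ^ (j + 1) * D j = -((-1 : ℝ) ^ j * D j) := by
      intro j; rw [pow_succ]; ring
    rw [Finset.sum_congr rfl fun j _ => this j, Finset.sum_neg_distrib, hsum]
    ring
  have hM0 : 0 ≤ M := le_trans (abs_nonneg _) (hbd 0 le_rfl zero_le_one)
  calc |(derivative P).eval 0| = |∑ j ∈ s, P.eval (v j) * D j| := by rw [keyrep P hdeg]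
    _ ≤ ∑ j ∈ s, |P.eval (v j) * D j| := Finset.abs_sum_le_sum_abs _ _
    _ ≤ ∑ j ∈ s, M * |D j| := by
        refine Finset.sum_le_sum fun j hj => ?_
        rw [abs_mul]
        have hjd : j ≤ d := by simp only [hs, Finset.mem_range] at hj; omega
        have hb : |P.eval (v j)| ≤ M := by
          refine hbd (v j) ?_ ?_
          · simp only [hv]
            have := Real.cos_le_one ((j : ℝ) * Real.pi / d)
            linarith
          · simp only [hv]
            have := Real.neg_one_le_cos ((j : ℝ) * Real.pi / d)
            linarith
        exact mul_le_mul_of_nonneg_right hb (abs_nonneg _)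
    _ = M * ∑ j ∈ s, |D j| := by rw [← Finset.mul_sum]
    _ = 2 * (d : ℝ) ^ 2 * M := by rw [hsumabs]; ring



lemma binom_univ {k : ℕ} (t : ℝ) :
    ∑ T : Finset (Fin k), t ^ T.card * (1 - t) ^ (k - T.card) = 1 := by
  have h := binom_one' t (1 - t) (by ring) (Finset.univ : Finset (Fin k))
  rw [Finset.powerset_univ] at h
  simpa using h

lemma dere (c e : ℕ) : (derivative ((X : ℝ[X]) ^ c * (1 - X) ^ e)).eval 0
    = (if c = 1 then 1 else 0) - (if c = 0 then (e : ℝ) else 0) := by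
  rw [derivative_mul, derivative_X_pow, derivative_pow]
  have h1 : derivative (1 - X : ℝ[X]) = -1 := by
    rw [derivative_sub, derivative_one, derivative_X]; simp
  rw [h1]
  simp only [eval_add, eval_mul, eval_pow, eval_X, eval_C, eval_sub, eval_one, eval_neg,
    eval_natCast]
  match c with
  | 0 => norm_num
  | 1 => norm_num
  | (c + 2) =>
    rw [zero_pow (by omega : c + 2 ≠ 0), zero_pow (by omega : c + 2 - 1 ≠ 0),
      if_neg (by omega : ¬(c + 2 = 1)), if_neg (by omega : ¬(c + 2 = 0))]
    ring

set_option maxHeartbeats 1000000 in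
lemma core {n d k : ℕ} (p : MvPolynomial (Fin n) ℝ) (hdeg : p.totalDegree ≤ d)
    (x0 : Fin n → Bool) (hmax : ∀ x, |evalB x p| ≤ |evalB x0 p|) (hx0 : evalB x0 p ≠ 0)
    (Bs : Fin k → Finset (Fin n)) (hdisj : ∀ i j, i ≠ j → Disjoint (Bs i) (Bs j))
    (hzero : ∀ i, evalB (flipSet x0 (Bs i)) p = 0) : k ≤ 2 * d ^ 2 := by
  classical
  set v : Finset (Fin k) → ℝ := fun T => evalB (flipSet x0 (T.biUnion Bs)) p with hv
  have hflip_empty : flipSet x0 ((∅ : Finset (Fin k)).biUnion Bs) = x0 := by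
    funext i; simp [flipSet]
  have hvempty : v ∅ = evalB x0 p := by rw [hv]; simp only; rw [hflip_empty]
  have hvsingle : ∀ j : Fin k, v {j} = 0 := by
    intro j
    have h : ({j} : Finset (Fin k)).biUnion Bs = Bs j := Finset.singleton_biUnion
    rw [hv]; simp only; rw [h]; exact hzero j
  have hvbound : ∀ T, |v T| ≤ |v ∅| := by intro T; rw [hvempty]; exact hmax _
  set H : ℝ[X] := ∑ T : Finset (Fin k), C (v T) * X ^ T.card * (1 - X) ^ (k - T.card) with hH
  have hHdeg : H.natDegree ≤ d := by
    have hvT : ∀ T : Finset (Fin k), v T = ∑ m ∈ p.support, (MvPolynomial.coeff m p *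
        ∏ i ∈ m.support, (if flipSet x0 (T.biUnion Bs) i then (1:ℝ) else 0) ^ m i) := by
      intro T
      rw [hv]; simp only
      rw [evalB, MvPolynomial.eval_eq]
    have hswap : H = ∑ m ∈ p.support, ∑ T : Finset (Fin k),
        C (MvPolynomial.coeff m p *
          ∏ i ∈ m.support, (if flipSet x0 (T.biUnion Bs) i then (1:ℝ) else 0) ^ m i)
          * X ^ T.card * (1 - X) ^ (k - T.card) := by
      rw [hH]
      calc ∑ T : Finset (Fin k), C (v T) * X ^ T.card * (1 - X) ^ (k - T.card)
          = ∑ T : Finset (Fin k), ∑ m ∈ p.support,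
            C (MvPolynomial.coeff m p *
              ∏ i ∈ m.support, (if flipSet x0 (T.biUnion Bs) i then (1:ℝ) else 0) ^ m i)
              * X ^ T.card * (1 - X) ^ (k - T.card) := by
            refine Finset.sum_congr rfl fun T _ => ?_
            rw [hvT T, map_sum, Finset.sum_mul, Finset.sum_mul]
        _ = _ := Finset.sum_comm
    rw [hswap]
    refine Polynomial.natDegree_sum_le_of_forall_le _ _ fun m hm => ?_
    set J : Finset (Fin k) := Finset.univ.filter (fun j => (Bs j ∩ m.support).Nonempty) with hJ
    have hdep : ∀ T : Finset (Fin k),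
        (∏ i ∈ m.support, (if flipSet x0 (T.biUnion Bs) i then (1:ℝ) else 0) ^ m i)
        = (∏ i ∈ m.support, (if flipSet x0 ((T ∩ J).biUnion Bs) i then (1:ℝ) else 0) ^ m i) := by
      intro T
      refine Finset.prod_congr rfl fun i hi => ?_
      have hiff : (i ∈ T.biUnion Bs) ↔ (i ∈ (T ∩ J).biUnion Bs) := by
        simp only [Finset.mem_biUnion, Finset.mem_inter]
        constructor
        · rintro ⟨j, hjT, hij⟩
          refine ⟨j, ⟨hjT, ?_⟩, hij⟩
          rw [hJ]
          simp only [Finset.mem_filter]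
          exact ⟨Finset.mem_univ _, ⟨i, Finset.mem_inter.mpr ⟨hij, hi⟩⟩⟩
        · rintro ⟨j, hjT, hij⟩; exact ⟨j, hjT.1, hij⟩
      simp only [flipSet]
      by_cases h : i ∈ T.biUnion Bs
      · simp [h, hiff.mp h]
      · have h2 : i ∉ (T ∩ J).biUnion Bs := fun hc => h (hiff.mpr hc)
        simp [h, h2]
    have hmarg : (∑ T : Finset (Fin k),
        C (MvPolynomial.coeff m p *
          ∏ i ∈ m.support, (if flipSet x0 (T.biUnion Bs) i then (1:ℝ) else 0) ^ m i)
          * X ^ T.card * (1 - X) ^ (k - T.card))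
        = ∑ T ∈ J.powerset,
        C (MvPolynomial.coeff m p *
          ∏ i ∈ m.support, (if flipSet x0 (T.biUnion Bs) i then (1:ℝ) else 0) ^ m i)
          * X ^ T.card * (1 - X) ^ (J.card - T.card) :=
      marg J (fun T => MvPolynomial.coeff m p *
          ∏ i ∈ m.support, (if flipSet x0 (T.biUnion Bs) i then (1:ℝ) else 0) ^ m i)
        (fun T => by rw [hdep T])
    rw [hmarg]
    have hJd : J.card ≤ d := by
      have hsupd : m.support.card ≤ d := by
        have h1 : m.support.card ≤ m.sum fun _ e => e := by
          rw [Finset.card_eq_sum_ones]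
          exact Finset.sum_le_sum fun i hi =>
            Nat.one_le_iff_ne_zero.mpr (Finsupp.mem_support_iff.mp hi)
        exact h1.trans ((MvPolynomial.le_totalDegree hm).trans hdeg)
      refine le_trans ?_ hsupd
      rcases J.eq_empty_or_nonempty with hJe | hJne
      · rw [hJe]; simp
      · obtain ⟨j0, hj0⟩ := hJne
        have hj0' : (Bs j0 ∩ m.support).Nonempty := by
          rw [hJ] at hj0; exact (Finset.mem_filter.mp hj0).2
        set i0 : Fin n := hj0'.choose with hi0
        set φ : Fin k → Fin n := fun j =>
          if h : (Bs j ∩ m.support).Nonempty then h.choose else i0 with hφ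
        have hφmem : ∀ j ∈ J, φ j ∈ Bs j ∩ m.support := by
          intro j hj
          have hj' : (Bs j ∩ m.support).Nonempty := by
            rw [hJ] at hj; exact (Finset.mem_filter.mp hj).2
          rw [hφ]; simp only [dif_pos hj']
          exact hj'.choose_spec
        refine Finset.card_le_card_of_injOn φ
          (fun j hj => (Finset.mem_inter.mp (hφmem j hj)).2) ?_
        intro j1 hj1 j2 hj2 heq
        by_contra hne
        have h1 : φ j1 ∈ Bs j1 := (Finset.mem_inter.mp (hφmem j1 hj1)).1
        have h2 : φ j2 ∈ Bs j2 := (Finset.mem_inter.mp (hφmem j2 hj2)).1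
        rw [heq] at h1
        exact (Finset.disjoint_left.mp (hdisj j1 j2 hne)) (heq ▸ h1) h2
    refine Polynomial.natDegree_sum_le_of_forall_le _ _ fun A hA => ?_
    have hAJ : A ⊆ J := Finset.mem_powerset.mp hA
    have hAc : A.card ≤ J.card := Finset.card_le_card hAJ
    calc (C (MvPolynomial.coeff m p *
          ∏ i ∈ m.support, (if flipSet x0 (A.biUnion Bs) i then (1:ℝ) else 0) ^ m i)
          * X ^ A.card * (1 - X) ^ (J.card - A.card)).natDegree
        ≤ (C (MvPolynomial.coeff m p *
          ∏ i ∈ m.support, (if flipSet x0 (A.biUnion Bs) i then (1:ℝ) else 0) ^ m i)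
          * X ^ A.card).natDegree + ((1 - X : ℝ[X]) ^ (J.card - A.card)).natDegree :=
          Polynomial.natDegree_mul_le
      _ ≤ A.card + (J.card - A.card) := by
          gcongr
          · exact (Polynomial.natDegree_C_mul_le _ _).trans (by simp)
          · refine (Polynomial.natDegree_pow_le).trans ?_
            have : (1 - X : ℝ[X]).natDegree ≤ 1 :=
              (Polynomial.natDegree_sub_le _ _).trans (by simp)
            calc (J.card - A.card) * (1 - X : ℝ[X]).natDegree
                ≤ (J.card - A.card) * 1 := Nat.mul_le_mul_left _ this
              _ = J.card - A.card := by omega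
      _ = J.card := by omega
      _ ≤ d := hJd
  have hH0 : H.eval 0 = v ∅ := by
    rw [hH, Polynomial.eval_finset_sum]
    rw [Finset.sum_eq_single_of_mem ∅ (Finset.mem_univ _)]
    · simp
    · intro T _ hTne
      simp only [eval_mul, eval_pow, eval_C, eval_X]
      rw [zero_pow (fun h => hTne (Finset.card_eq_zero.mp h))]
      ring
  have hder : (derivative H).eval 0 = -(k : ℝ) * v ∅ := by
    rw [hH]
    have hassoc : ∀ T ∈ (Finset.univ : Finset (Finset (Fin k))),
        C (v T) * X ^ T.card * (1 - X) ^ (k - T.card)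
        = C (v T) * (X ^ T.card * (1 - X) ^ (k - T.card)) := fun T _ => by ring
    rw [Finset.sum_congr rfl hassoc, derivative_sum, Polynomial.eval_finset_sum]
    have hterm : ∀ T ∈ (Finset.univ : Finset (Finset (Fin k))),
        (derivative (C (v T) * (X ^ T.card * (1 - X) ^ (k - T.card)))).eval 0
        = (if T.card = 1 then v T else 0) - (if T.card = 0 then (k : ℝ) * v T else 0) := by
      intro T _
      rw [derivative_C_mul, eval_mul, eval_C, dere]
      by_cases h1 : T.card = 1
      · rw [h1]; norm_num
      · by_cases h0 : T.card = 0
        · rw [h0]; push_cast [Nat.sub_zero]; norm_num; ring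
        · rw [if_neg h1, if_neg h1, if_neg h0, if_neg h0]; ring
    rw [Finset.sum_congr rfl hterm, Finset.sum_sub_distrib]
    have hone : ∑ T : Finset (Fin k), (if T.card = 1 then v T else 0) = 0 := by
      refine Finset.sum_eq_zero fun T _ => ?_
      by_cases h : T.card = 1
      · rw [if_pos h]
        obtain ⟨j, rfl⟩ := Finset.card_eq_one.mp h
        exact hvsingle j
      · rw [if_neg h]
    have hzero' : ∑ T : Finset (Fin k), (if T.card = 0 then (k : ℝ) * v T else 0)
        = (k : ℝ) * v ∅ := by
      rw [Finset.sum_eq_single_of_mem ∅ (Finset.mem_univ _)]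
      · simp
      · intro T _ hTne
        rw [if_neg (fun h => hTne (Finset.card_eq_zero.mp h))]
    rw [hone, hzero']
    ring
  have hbound : ∀ t : ℝ, 0 ≤ t → t ≤ 1 → |H.eval t| ≤ |v ∅| := by
    intro t ht ht1
    rw [hH, Polynomial.eval_finset_sum]
    have h1t : 0 ≤ 1 - t := by linarith
    refine le_trans (Finset.abs_sum_le_sum_abs
      (fun T : Finset (Fin k) => (C (v T) * X ^ T.card * (1 - X) ^ (k - T.card)).eval t)
      Finset.univ) ?_
    have hstep : ∀ T ∈ (Finset.univ : Finset (Finset (Fin k))),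
        |(C (v T) * X ^ T.card * (1 - X) ^ (k - T.card)).eval t|
        ≤ |v ∅| * (t ^ T.card * (1 - t) ^ (k - T.card)) := by
      intro T _
      simp only [eval_mul, eval_pow, eval_C, eval_X, eval_sub, eval_one]
      rw [abs_mul, abs_mul, abs_pow, abs_pow, abs_of_nonneg ht, abs_of_nonneg h1t, mul_assoc]
      refine mul_le_mul_of_nonneg_right (hvbound T) ?_
      positivity
    refine le_trans (Finset.sum_le_sum hstep) ?_
    rw [← Finset.mul_sum, binom_univ, mul_one]
  have hM := markov_endpoint d H |v ∅| hHdeg hbound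
  rw [hder] at hM
  rw [abs_mul, abs_neg, Nat.abs_cast] at hM
  have hvpos : 0 < |v ∅| := abs_pos.mpr (by rw [hvempty]; exact hx0)
  have hk : (k : ℝ) ≤ 2 * (d : ℝ) ^ 2 := le_of_mul_le_mul_right hM hvpos
  exact_mod_cast hk


noncomputable def pb {n : ℕ} (y : Fin n → Bool) : MvPolynomial (Fin n) ℝ :=
  ∏ i : Fin n, (if y i then MvPolynomial.X i else 1 - MvPolynomial.X i)

lemma evalB_pb {n : ℕ} (x y : Fin n → Bool) :
    evalB x (pb y) = if x = y then 1 else 0 := by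
  rw [evalB, pb, map_prod]
  by_cases hxy : x = y
  · rw [if_pos hxy]
    subst hxy
    refine Finset.prod_eq_one fun i _ => ?_
    cases hx : x i <;> simp [hx]
  · rw [if_neg hxy]
    have hex : ∃ i, x i ≠ y i := by
      by_contra h
      push_neg at h
      exact hxy (funext h)
    obtain ⟨i, hi⟩ := hex
    refine Finset.prod_eq_zero (Finset.mem_univ i) ?_
    cases hy : y i <;> cases hx : x i <;> rw [hx, hy] at hi <;> simp [hx, hy] <;> simp at hi

lemma mult_pb {n : ℕ} (y : Fin n → Bool) : Multilinear (pb y) := by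
  intro i
  rw [pb]
  refine (MvPolynomial.degreeOf_prod_le _ _ _).trans ?_
  have h : ∀ i2 : Fin n,
      MvPolynomial.degreeOf i
        (if y i2 then (MvPolynomial.X i2 : MvPolynomial (Fin n) ℝ) else 1 - MvPolynomial.X i2)
      ≤ if i2 = i then 1 else 0 := by
    intro i2
    have hX : MvPolynomial.degreeOf i (MvPolynomial.X i2 : MvPolynomial (Fin n) ℝ)
        ≤ if i2 = i then 1 else 0 := by
      rw [MvPolynomial.degreeOf_X]
      by_cases h : i = i2
      · subst h; simp
      · rw [if_neg h, if_neg (fun hc => h hc.symm)]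
    have hX1 : MvPolynomial.degreeOf i ((1 - MvPolynomial.X i2 : MvPolynomial (Fin n) ℝ))
        ≤ if i2 = i then 1 else 0 := by
      refine (MvPolynomial.degreeOf_sub_le _ _ _).trans ?_
      have h1 : MvPolynomial.degreeOf i (1 : MvPolynomial (Fin n) ℝ) = 0 := by
        simpa using MvPolynomial.degreeOf_C (1 : ℝ) i
      rw [h1]
      simp only [max_le_iff]
      exact ⟨by positivity, hX⟩
    by_cases hy : y i2
    · rw [if_pos hy]; exact hX
    · rw [if_neg hy]; exact hX1
  refine le_trans (Finset.sum_le_sum fun i2 _ => h i2) ?_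
  rw [Finset.sum_ite_eq' Finset.univ i (fun _ => 1)]
  simp

lemma ndeg_set_nonempty {n : ℕ} (g : (Fin n → Bool) → Bool) :
    ∃ d, d ∈ {d | ∃ p : MvPolynomial (Fin n) ℝ, Multilinear p ∧
      (∀ x, evalB x p ≠ 0 ↔ g x = true) ∧ p.totalDegree = d} := by
  classical
  set p0 : MvPolynomial (Fin n) ℝ :=
    ∑ y : Fin n → Bool, if g y then pb y else 0 with hp0
  have heval : ∀ x, evalB x p0 = if g x then 1 else 0 := by
    intro x
    rw [hp0, evalB, map_sum]
    have hterm : ∀ y : Fin n → Bool,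
        MvPolynomial.eval (fun i => if x i then (1:ℝ) else 0) (if g y then pb y else 0)
        = if g y then (if x = y then (1:ℝ) else 0) else 0 := by
      intro y
      by_cases hgy : g y
      · rw [if_pos hgy, if_pos hgy, ← evalB_pb x y]; rfl
      · rw [if_neg hgy, if_neg hgy, map_zero]
    rw [Finset.sum_congr rfl fun y _ => hterm y]
    rw [Finset.sum_eq_single_of_mem x (Finset.mem_univ _)]
    · simp
    · intro y _ hyx
      by_cases hgy : g y
      · rw [if_pos hgy, if_neg (fun h => hyx h.symm)]
      · rw [if_neg hgy]
  refine ⟨p0.totalDegree, p0, ?_, ?_, rfl⟩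
  · intro i
    rw [hp0]
    refine (MvPolynomial.degreeOf_sum_le _ _ _).trans ?_
    refine Finset.sup_le fun y _ => ?_
    by_cases hgy : g y
    · rw [if_pos hgy]; exact mult_pb y i
    · rw [if_neg hgy, MvPolynomial.degreeOf_zero]; positivity
  · intro x
    rw [heval x]
    by_cases hgx : g x <;> simp [hgx]

end MK

/-- For every nonconstant Boolean function f, there exists x ∈ f⁻¹(0) with
bs_x(f) ≤ 2·ndeg(¬f)^2. -/
theorem stmt_6 (n : ℕ) (f : (Fin n → Bool) → Bool)
    (hf : ∃ x y : Fin n → Bool, f x ≠ f y) :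
    ∃ x : Fin n → Bool, f x = false ∧ bs f x ≤ 2 * ndeg (fun x => !(f x)) ^ 2 := by
  classical
  set g : (Fin n → Bool) → Bool := fun x => !(f x) with hg
  set S := {d | ∃ p : MvPolynomial (Fin n) ℝ, Multilinear p ∧
    (∀ x, evalB x p ≠ 0 ↔ g x = true) ∧ p.totalDegree = d} with hS
  have hne : S.Nonempty := MK.ndeg_set_nonempty g
  have hmem : ndeg g ∈ S := Nat.sInf_mem hne
  obtain ⟨p, hmult, hrep, hdeg⟩ := hmem
  -- a point where f is false
  have hzex : ∃ z, f z = false := by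
    obtain ⟨a, b, hab⟩ := hf
    cases ha : f a
    · exact ⟨a, ha⟩
    · cases hb : f b
      · exact ⟨b, hb⟩
      · rw [ha, hb] at hab; exact absurd rfl hab
  obtain ⟨z, hz⟩ := hzex
  have hpz : evalB z p ≠ 0 := (hrep z).mpr (by rw [hg]; simp [hz])
  -- maximize |evalB x p|
  obtain ⟨x0, hx0max⟩ := Finite.exists_max (fun x : Fin n → Bool => |evalB x p|)
  have hx0ne : evalB x0 p ≠ 0 := by
    intro h
    have := hx0max z
    rw [h, abs_zero] at this
    exact hpz (abs_eq_zero.mp (le_antisymm this (abs_nonneg _)))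
  have hfx0 : f x0 = false := by
    have := (hrep x0).mp hx0ne
    rw [hg] at this
    simpa using this
  refine ⟨x0, hfx0, ?_⟩
  -- bound the sup
  refine csSup_le ⟨0, Fin.elim0, fun i => i.elim0, fun i => i.elim0⟩ ?_
  rintro k ⟨Bs, hsens, hdisj⟩
  refine MK.core p (le_of_eq hdeg) x0 (fun x => hx0max x) hx0ne Bs hdisj ?_
  intro i
  have h1 : f (flipSet x0 (Bs i)) = true := by
    have := hsens i
    rw [hfx0] at this
    cases hc : f (flipSet x0 (Bs i))
    · exact absurd hc this
    · rfl
  have h2 : g (flipSet x0 (Bs i)) = false := by rw [hg]; simp [h1]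
  by_contra hcon
  have := (hrep _).mp hcon
  rw [h2] at this
  exact Bool.false_ne_true this
end

section
/- Let f: {0,1}^n → {0,1} be a nonconstant Boolean function and let p be a nondeterministic representation of f. Then for every x ∈ f^{-1}(0), p has a hitting set H with |H| ≤ deg(p)·bs_x(f); in particular, p has a hitting set of size at most deg(p)·min_{x ∈ f^{-1}(0)} bs_x(f). -/
open MvPolynomial

/-- `M` is a maxonomial of `p`: a monomial of maximal (total) degree with nonzero coefficient. -/
def IsMaxonomial {n : ℕ} (p : MvPolynomial (Fin n) ℝ) (M : Finset (Fin n)) : Prop :=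
  M.card = p.totalDegree ∧ MvPolynomial.coeff (∑ i ∈ M, Finsupp.single i 1) p ≠ 0

/-- `H` is a hitting set of `p`: it intersects every maxonomial of `p`. -/
def IsHittingSet {n : ℕ} (p : MvPolynomial (Fin n) ℝ) (H : Finset (Fin n)) : Prop :=
  ∀ M, IsMaxonomial p M → (H ∩ M).Nonempty

lemma ml_mem_le {n : ℕ} {q : MvPolynomial (Fin n) ℝ} (hml : Multilinear q)
    {d : Fin n →₀ ℕ} (hd : d ∈ q.support) (i : Fin n) : d i ≤ 1 := by
  calc d i ≤ q.support.sup (fun m => m i) := Finset.le_sup (f := fun m => m i) hd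
    _ = MvPolynomial.degreeOf i q := (MvPolynomial.degreeOf_eq_sup i q).symm
    _ ≤ 1 := hml i

lemma ml_eq_of_support_eq {n : ℕ} {q : MvPolynomial (Fin n) ℝ} (hml : Multilinear q)
    {d e : Fin n →₀ ℕ} (hd : d ∈ q.support) (he : e ∈ q.support)
    (h : d.support = e.support) : d = e := by
  ext i
  by_cases hi : i ∈ d.support
  · have h1 : 1 ≤ d i := Nat.one_le_iff_ne_zero.mpr (Finsupp.mem_support_iff.mp hi)
    have h2 : 1 ≤ e i := Nat.one_le_iff_ne_zero.mpr (Finsupp.mem_support_iff.mp (h ▸ hi))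
    have h3 := ml_mem_le hml hd i
    have h4 := ml_mem_le hml he i
    omega
  · have h1 : d i = 0 := Finsupp.notMem_support_iff.mp hi
    have h2 : e i = 0 := Finsupp.notMem_support_iff.mp (fun c => hi (h ▸ c))
    rw [h1, h2]

lemma multilinear_exists_nonzero {n : ℕ} (q : MvPolynomial (Fin n) ℝ)
    (hml : Multilinear q) (hq : q ≠ 0) : ∃ x : Fin n → Bool, evalB x q ≠ 0 := by
  obtain ⟨m, hm, hmin⟩ := Finset.exists_min_image q.support (fun d => d.support.card)
    (MvPolynomial.support_nonempty.mpr hq)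
  refine ⟨fun i => decide (i ∈ m.support), ?_⟩
  have hx : (fun i => if (decide (i ∈ m.support) : Bool) then (1:ℝ) else 0)
      = fun i => if i ∈ m.support then (1:ℝ) else 0 := by
    funext i; simp
  rw [evalB, hx, MvPolynomial.eval_eq]
  have key : ∀ d ∈ q.support,
      (∏ i ∈ d.support, (if i ∈ m.support then (1:ℝ) else 0) ^ d i)
      = if d.support ⊆ m.support then 1 else 0 := by
    intro d _
    by_cases h : d.support ⊆ m.support
    · rw [if_pos h]
      apply Finset.prod_eq_one
      intro i hi
      rw [if_pos (h hi), one_pow]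
    · rw [if_neg h]
      obtain ⟨i, hi, hni⟩ := Finset.not_subset.mp h
      apply Finset.prod_eq_zero hi
      rw [if_neg hni, zero_pow (Finsupp.mem_support_iff.mp hi)]
  rw [Finset.sum_congr rfl (fun d hd => by rw [key d hd])]
  rw [Finset.sum_eq_single m]
  · simp [MvPolynomial.mem_support_iff.mp hm]
  · intro d hd hdm
    rw [if_neg, mul_zero]
    intro hsub
    apply hdm
    apply ml_eq_of_support_eq hml hd hm
    apply Finset.eq_of_subset_of_card_le hsub (hmin d hd)
  · intro h; exact absurd hm h

lemma indC_apply {n : ℕ} (M : Finset (Fin n)) (j : Fin n) :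
    (∑ i ∈ M, Finsupp.single i (1:ℕ)) j = if j ∈ M then 1 else 0 := by
  classical
  rw [Finset.sum_apply']
  simp [Finsupp.single_apply]

lemma exists_flip_in_maxonomial {n : ℕ} (p : MvPolynomial (Fin n) ℝ) (hml : Multilinear p)
    {M : Finset (Fin n)} (hM : IsMaxonomial p M) (x : Fin n → Bool) :
    ∃ y : Fin n → Bool, (∀ i, i ∉ M → y i = x i) ∧ evalB y p ≠ 0 := by
  classical
  set oneM : Fin n →₀ ℕ := ∑ i ∈ M, Finsupp.single i 1 with honeM
  set c : (Fin n →₀ ℕ) → ℝ :=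
    fun d => MvPolynomial.coeff d p * ∏ i ∈ d.support \ M, bval (x i) with hc
  set q : MvPolynomial (Fin n) ℝ := ∑ d ∈ p.support,
    MvPolynomial.monomial (Finsupp.filter (· ∈ M) d) (c d) with hqdef
  have hcoeffq : ∀ e, MvPolynomial.coeff e q
      = ∑ d ∈ p.support, if Finsupp.filter (· ∈ M) d = e then c d else 0 := by
    intro e
    rw [hqdef, MvPolynomial.coeff_sum]
    exact Finset.sum_congr rfl fun d _ => MvPolynomial.coeff_monomial _ _ _
  -- q is multilinear
  have hmlq : Multilinear q := by
    intro i
    rw [MvPolynomial.degreeOf_eq_sup]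
    apply Finset.sup_le
    intro e he
    rw [MvPolynomial.mem_support_iff, hcoeffq] at he
    obtain ⟨d, hd, hne⟩ := Finset.exists_ne_zero_of_sum_ne_zero he
    by_cases hfd : Finsupp.filter (· ∈ M) d = e
    · rw [← hfd, Finsupp.filter_apply]
      split
      · exact ml_mem_le hml hd i
      · exact Nat.zero_le 1
    · simp [hfd] at hne
  -- every d in support mapping onto oneM is oneM
  have hforce : ∀ d ∈ p.support, Finsupp.filter (· ∈ M) d = oneM → d = oneM := by
    intro d hd hf
    have hMd : ∀ i ∈ M, d i = 1 := by
      intro i hi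
      have := congrArg (fun g => g i) hf
      simp only [Finsupp.filter_apply, honeM] at this
      rw [if_pos hi, indC_apply, if_pos hi] at this
      exact this
    have hsub : M ⊆ d.support := by
      intro i hi
      rw [Finsupp.mem_support_iff, hMd i hi]; exact one_ne_zero
    have hcard : d.support.card ≤ M.card := by
      have h1 : (d.sum fun _ e => e) ≤ p.totalDegree :=
        MvPolynomial.le_totalDegree hd
      have h2 : d.support.card ≤ d.sum fun _ e => e := by
        rw [Finsupp.sum]
        calc d.support.card = ∑ _i ∈ d.support, 1 := by simp
          _ ≤ ∑ i ∈ d.support, d i := Finset.sum_le_sum fun i hi =>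
              Nat.one_le_iff_ne_zero.mpr (Finsupp.mem_support_iff.mp hi)
      have h3 : M.card = p.totalDegree := hM.1
      omega
    have hsupp : d.support = M := (Finset.eq_of_subset_of_card_le hsub hcard).symm
    ext i
    rw [honeM, indC_apply]
    by_cases hi : i ∈ M
    · rw [if_pos hi]; exact hMd i hi
    · rw [if_neg hi]
      exact Finsupp.notMem_support_iff.mp (by rw [hsupp]; exact hi)
  have hfilter_oneM : Finsupp.filter (· ∈ M) oneM = oneM := by
    ext i
    rw [Finsupp.filter_apply]
    split
    · rfl
    · rw [honeM, indC_apply, if_neg (by assumption)]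
  have hsuppOneM : oneM.support ⊆ M := by
    intro i hi
    by_contra hni
    exact (Finsupp.mem_support_iff.mp hi) (by rw [honeM, indC_apply, if_neg hni])
  -- coeff of oneM in q is nonzero
  have hcq : MvPolynomial.coeff oneM q ≠ 0 := by
    rw [hcoeffq, Finset.sum_eq_single oneM]
    · rw [if_pos hfilter_oneM, hc]
      have : oneM.support \ M = ∅ := Finset.sdiff_eq_empty_iff_subset.mpr hsuppOneM
      simp only [this, Finset.prod_empty, mul_one]
      exact hM.2
    · intro d hd hdne
      rw [if_neg (fun hf => hdne (hforce d hd hf))]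
    · intro h
      exact absurd (MvPolynomial.mem_support_iff.mpr hM.2) h
  have hqne : q ≠ 0 := fun h => hcq (by rw [h, MvPolynomial.coeff_zero])
  obtain ⟨z, hz⟩ := multilinear_exists_nonzero q hmlq hqne
  refine ⟨fun i => if i ∈ M then z i else x i, fun i hi => by simp [hi], ?_⟩
  -- evalB of the mixed point on p equals evalB z q
  have heval : evalB (fun i => if i ∈ M then z i else x i) p = evalB z q := by
    rw [evalB, evalB, hqdef, map_sum, MvPolynomial.eval_eq]
    apply Finset.sum_congr rfl
    intro d hd
    rw [MvPolynomial.eval_monomial, hc]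
    set v : Fin n → ℝ := fun i => if z i then (1:ℝ) else 0 with hv
    set w : Fin n → ℝ := fun i => if (if i ∈ M then z i else x i) then (1:ℝ) else 0 with hw
    rw [← Finset.prod_filter_mul_prod_filter_not d.support (· ∈ M) (fun i => w i ^ d i)]
    have h1 : ∏ i ∈ d.support.filter (· ∈ M), w i ^ d i
        = (Finsupp.filter (· ∈ M) d).prod fun n e => v n ^ e := by
      rw [Finsupp.prod, Finsupp.support_filter]
      apply Finset.prod_congr rfl
      intro i hi
      have hiM : i ∈ M := (Finset.mem_filter.mp hi).2
      simp [hw, hv, hiM, Finsupp.filter_apply]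
    have h2 : ∏ i ∈ d.support.filter (fun i => ¬ i ∈ M), w i ^ d i
        = ∏ i ∈ d.support \ M, bval (x i) := by
      have hset : d.support.filter (fun i => ¬ i ∈ M) = d.support \ M := by
        ext i; simp [Finset.mem_sdiff, Finset.mem_filter]
      rw [hset]
      apply Finset.prod_congr rfl
      intro i hi
      have hiM : i ∉ M := (Finset.mem_sdiff.mp hi).2
      have hid : d i = 1 := by
        have h1 := ml_mem_le hml hd i
        have h2 : d i ≠ 0 := Finsupp.mem_support_iff.mp (Finset.mem_sdiff.mp hi).1
        omega
      simp [hw, hid, hiM, bval]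
    rw [h1, h2]; ring
  rw [heval]; exact hz

lemma bs_set_bdd {n : ℕ} (f : (Fin n → Bool) → Bool) (x : Fin n → Bool) :
    BddAbove {k | ∃ Bs : Fin k → Finset (Fin n),
      (∀ i, f (flipSet x (Bs i)) ≠ f x) ∧ (∀ i j, i ≠ j → Disjoint (Bs i) (Bs j))} := by
  refine ⟨n, fun k hk => ?_⟩
  obtain ⟨Bs, hsens, hdisj⟩ := hk
  have hne : ∀ i, (Bs i).Nonempty := by
    intro i
    rcases Finset.eq_empty_or_nonempty (Bs i) with h | h
    · exfalso; apply hsens i; congr 1; funext j; simp [flipSet, h]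
    · exact h
  choose c hc using hne
  have hinj : Function.Injective c := by
    intro i j hij
    by_contra hne'
    exact Finset.disjoint_left.mp (hdisj i j hne') (hc i) (hij ▸ hc j)
  simpa using Fintype.card_le_of_injective c hinj

/-- Let f be a nonconstant Boolean function and p a nondeterministic representation of f.
Then for every x ∈ f⁻¹(0), p has a hitting set H with |H| ≤ deg(p)·bs_x(f); in particular,
p has a hitting set of size at most deg(p)·min_{x ∈ f⁻¹(0)} bs_x(f). -/
theorem stmt_7 (n : ℕ) (f : (Fin n → Bool) → Bool)
    (hf : ∃ x y : Fin n → Bool, f x ≠ f y)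
    (p : MvPolynomial (Fin n) ℝ) (hml : Multilinear p)
    (hrep : ∀ x, evalB x p ≠ 0 ↔ f x = true) :
    (∀ x : Fin n → Bool, f x = false →
      ∃ H : Finset (Fin n), IsHittingSet p H ∧ H.card ≤ p.totalDegree * bs f x) ∧
    (∃ H : Finset (Fin n), IsHittingSet p H ∧
      H.card ≤ p.totalDegree * sInf {k | ∃ x : Fin n → Bool, f x = false ∧ bs f x = k}) := by
  classical
  have part1 : ∀ x : Fin n → Bool, f x = false →
      ∃ H : Finset (Fin n), IsHittingSet p H ∧ H.card ≤ p.totalDegree * bs f x := by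
    intro x hx
    set K : Set ℕ := {k | ∃ Bs : Fin k → Finset (Fin n),
      (∀ i, f (flipSet x (Bs i)) ≠ f x) ∧ (∀ i j, i ≠ j → Disjoint (Bs i) (Bs j)) ∧
      (∀ i, ∃ M, IsMaxonomial p M ∧ Bs i ⊆ M)} with hKdef
    have hK0 : (0:ℕ) ∈ K := ⟨fun i => i.elim0, fun i => i.elim0, fun i j _ => i.elim0, fun i => i.elim0⟩
    have hKsub : K ⊆ {k | ∃ Bs : Fin k → Finset (Fin n),
        (∀ i, f (flipSet x (Bs i)) ≠ f x) ∧ (∀ i j, i ≠ j → Disjoint (Bs i) (Bs j))} := by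
      rintro k ⟨Bs, h1, h2, _⟩; exact ⟨Bs, h1, h2⟩
    have hKbdd : BddAbove K := (bs_set_bdd f x).mono hKsub
    set k := sSup K with hk
    have hkK : k ∈ K := Nat.sSup_mem ⟨0, hK0⟩ hKbdd
    obtain ⟨Bs, hsens, hdisj, hmax⟩ := hkK
    set H : Finset (Fin n) := Finset.univ.biUnion Bs with hH
    have hhit : IsHittingSet p H := by
      intro M hM
      by_contra hni
      have hHM : Disjoint H M := by
        rw [Finset.disjoint_iff_inter_eq_empty]
        exact Finset.not_nonempty_iff_eq_empty.mp hni
      obtain ⟨y, hyx, hyp⟩ := exists_flip_in_maxonomial p hml hM x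
      have hfy : f y = true := (hrep y).mp hyp
      set B : Finset (Fin n) := M.filter (fun i => y i ≠ x i) with hB
      have hBM : B ⊆ M := Finset.filter_subset _ _
      have hflip : flipSet x B = y := by
        funext i
        by_cases hiB : i ∈ B
        · have h1 := (Finset.mem_filter.mp hiB).2
          simp only [flipSet, if_pos hiB]
          exact (Bool.eq_not_iff.mpr h1).symm
        · simp only [flipSet, if_neg hiB]
          by_cases hiM : i ∈ M
          · by_contra hne'
            exact hiB (Finset.mem_filter.mpr ⟨hiM, fun h => hne' h.symm⟩)
          · exact (hyx i hiM).symm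
      have hBsens : f (flipSet x B) ≠ f x := by rw [hflip, hfy, hx]; simp
      -- extend the family
      have hk1 : k + 1 ∈ K := by
        refine ⟨Fin.snoc Bs B, ?_, ?_, ?_⟩
        · intro i
          refine Fin.lastCases ?_ ?_ i
          · rw [Fin.snoc_last]; exact hBsens
          · intro j; rw [Fin.snoc_castSucc]; exact hsens j
        · have hBdisj : ∀ j, Disjoint B (Bs j) := by
            intro j
            have hBsH : Bs j ⊆ H := by
              intro a ha; exact Finset.mem_biUnion.mpr ⟨j, Finset.mem_univ j, ha⟩
            exact Disjoint.mono hBM hBsH hHM.symm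
          intro i j hij
          rcases Fin.eq_castSucc_or_eq_last i with ⟨i', rfl⟩ | rfl <;>
            rcases Fin.eq_castSucc_or_eq_last j with ⟨j', rfl⟩ | rfl
          · rw [Fin.snoc_castSucc, Fin.snoc_castSucc]
            exact hdisj i' j' (fun h => hij (congrArg Fin.castSucc h))
          · rw [Fin.snoc_castSucc, Fin.snoc_last]; exact (hBdisj i').symm
          · rw [Fin.snoc_last, Fin.snoc_castSucc]; exact hBdisj j'
          · exact absurd rfl hij
        · intro i
          refine Fin.lastCases ?_ ?_ i
          · rw [Fin.snoc_last]; exact ⟨M, hM, hBM⟩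
          · intro j; rw [Fin.snoc_castSucc]; exact hmax j
      have := le_csSup hKbdd hk1
      omega
    refine ⟨H, hhit, ?_⟩
    have hcard : H.card ≤ k * p.totalDegree := by
      calc H.card ≤ ∑ i, (Bs i).card := Finset.card_biUnion_le
        _ ≤ ∑ _i : Fin k, p.totalDegree := by
            apply Finset.sum_le_sum
            intro i _
            obtain ⟨M, hM, hsub⟩ := hmax i
            calc (Bs i).card ≤ M.card := Finset.card_le_card hsub
              _ = p.totalDegree := hM.1
        _ = k * p.totalDegree := by simp [Finset.sum_const, Finset.card_univ]
    have hkbs : k ≤ bs f x := le_csSup (bs_set_bdd f x) (hKsub ⟨Bs, hsens, hdisj, hmax⟩)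
    calc H.card ≤ k * p.totalDegree := hcard
      _ ≤ bs f x * p.totalDegree := Nat.mul_le_mul_right _ hkbs
      _ = p.totalDegree * bs f x := Nat.mul_comm _ _
  refine ⟨part1, ?_⟩
  have hSne : {k | ∃ x : Fin n → Bool, f x = false ∧ bs f x = k}.Nonempty := by
    obtain ⟨a, b, hab⟩ := hf
    rcases Bool.eq_false_or_eq_true (f a) with h | h
    · have hb : f b = false := by
        cases hfb : f b
        · rfl
        · exact absurd (h.trans hfb.symm) hab
      exact ⟨bs f b, b, hb, rfl⟩
    · exact ⟨bs f a, a, h, rfl⟩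
  obtain ⟨x0, hx0, hbs0⟩ := Nat.sInf_mem hSne
  obtain ⟨H, hH, hcard⟩ := part1 x0 hx0
  exact ⟨H, hH, by rw [← hbs0]; exact hcard⟩
end

section
/- Let f: {0,1}^n → {0,1} be a nonconstant Boolean function, let p be a nondeterministic representation of f, and let q be a nondeterministic representation of ¬f (the pointwise negation of f). Then either p has a hitting set of size at most 2·deg(p)·sdeg(f)^2, or q has a hitting set of size at most 2·deg(q)·sdeg(f)^2. -/
open MvPolynomial

namespace MarkovAux
open Polynomial Real Finset

lemma natDegree_T_le : ∀ n : ℕ, (Polynomial.Chebyshev.T ℝ (n : ℤ)).natDegree ≤ n := by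
  have key : ∀ n : ℕ, (Polynomial.Chebyshev.T ℝ (n : ℤ)).natDegree ≤ n ∧
      (Polynomial.Chebyshev.T ℝ ((n+1 : ℕ) : ℤ)).natDegree ≤ n + 1 := by
    intro n
    induction n with
    | zero =>
      constructor
      · simp [Polynomial.Chebyshev.T_zero]
      · simpa [Polynomial.Chebyshev.T_one] using Polynomial.natDegree_X_le
    | succ m ih =>
      refine ⟨ih.2, ?_⟩
      have h := Polynomial.Chebyshev.T_add_two ℝ (m : ℤ)
      have hcast : ((m + 2 : ℕ) : ℤ) = (m : ℤ) + 2 := by push_cast; ring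
      rw [hcast, h]
      refine le_trans (Polynomial.natDegree_sub_le _ _) ?_
      have h1 : (2 * Polynomial.X * Polynomial.Chebyshev.T ℝ ((m:ℤ) + 1)).natDegree ≤ m + 2 := by
        refine le_trans (Polynomial.natDegree_mul_le) ?_
        have hx : (2 * Polynomial.X : ℝ[X]).natDegree ≤ 1 := by
          refine le_trans (Polynomial.natDegree_mul_le) ?_
          simpa using Polynomial.natDegree_X_le
        have hT : (Polynomial.Chebyshev.T ℝ ((m:ℤ) + 1)).natDegree ≤ m + 1 := by
          have h2 := ih.2
          have hc : ((m + 1 : ℕ) : ℤ) = (m : ℤ) + 1 := by push_cast; ring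
          rwa [hc] at h2
        omega
      have h2 : (Polynomial.Chebyshev.T ℝ (m:ℤ)).natDegree ≤ m := ih.1
      simp only [max_le_iff]
      exact ⟨h1, by omega⟩

  exact fun n => (key n).1

lemma U_eval_one : ∀ n : ℕ, (Polynomial.Chebyshev.U ℝ (n : ℤ)).eval 1 = (n : ℝ) + 1 := by
  have key : ∀ n : ℕ, (Polynomial.Chebyshev.U ℝ (n : ℤ)).eval 1 = (n : ℝ) + 1 ∧
      (Polynomial.Chebyshev.U ℝ ((n+1:ℕ) : ℤ)).eval 1 = (n : ℝ) + 2 := by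
    intro n
    induction n with
    | zero =>
      constructor
      · simp [Polynomial.Chebyshev.U_zero]
      · norm_num [Polynomial.Chebyshev.U_one]
    | succ m ih =>
      refine ⟨by rw [ih.2]; push_cast; ring, ?_⟩
      have h := Polynomial.Chebyshev.U_add_two ℝ (m : ℤ)
      have hcast : ((m + 2 : ℕ) : ℤ) = (m : ℤ) + 2 := by push_cast; ring
      rw [hcast, h]
      have h1 : ((m+1:ℕ) : ℤ) = (m : ℤ) + 1 := by push_cast; ring
      rw [h1] at ih
      simp only [Polynomial.eval_sub, Polynomial.eval_mul, Polynomial.eval_ofNat,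
        Polynomial.eval_X, ih.1, ih.2]
      push_cast; ring
  exact fun n => (key n).1


variable {ι : Type*} [DecidableEq ι]

lemma derivative_finset_prod (s : Finset ι) (f : ι → ℝ[X]) :
    Polynomial.derivative (∏ i ∈ s, f i) =
      ∑ i ∈ s, (∏ j ∈ s.erase i, f j) * Polynomial.derivative (f i) := by
  classical
  induction s using Finset.induction_on with
  | empty => simp
  | insert a s ha ih =>
    rw [Finset.prod_insert ha, Polynomial.derivative_mul, ih, Finset.sum_insert ha,
      Finset.erase_insert ha]
    rw [Finset.mul_sum]
    congr 1
    · ring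
    · refine Finset.sum_congr rfl fun i hi => ?_
      rw [Finset.erase_insert_of_ne (fun h : a = i => ha (h ▸ hi)), Finset.prod_insert
        (fun h => ha (Finset.erase_subset _ _ h))]
      ring

/-- Chebyshev nodes. -/
noncomputable def v (S : ℕ) : ℕ → ℝ := fun j => Real.cos (j * π / S)

lemma v_zero (S : ℕ) : v S 0 = 1 := by simp [v]

lemma angle_mem {S j : ℕ} (hS : 1 ≤ S) (hj : j ≤ S) : (j : ℝ) * π / S ∈ Set.Icc 0 π := by
  have hπ := Real.pi_pos
  have hS' : (0:ℝ) < S := by positivity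
  constructor
  · positivity
  · rw [div_le_iff₀ hS']
    have : (j : ℝ) ≤ (S : ℝ) := by exact_mod_cast hj
    nlinarith

lemma v_anti {S i j : ℕ} (hS : 1 ≤ S) (hij : i < j) (hj : j ≤ S) : v S j < v S i := by
  have hπ := Real.pi_pos
  have hS' : (0:ℝ) < S := by positivity
  have hij' : (i : ℝ) * π / S < (j : ℝ) * π / S := by
    have h1 : (i : ℝ) < (j : ℝ) := by exact_mod_cast hij
    gcongr
  exact Real.strictAntiOn_cos (angle_mem hS (le_trans (Nat.le_of_lt hij) hj))
    (angle_mem hS hj) hij'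


lemma v_injOn {S : ℕ} (hS : 1  ≤ S) : Set.InjOn (v S) (Finset.range (S+1)) := by
  intro a ha b hb hab
  simp only [Finset.coe_range, Set.mem_Iio] at ha hb
  by_contra hne
  rcases Nat.lt_or_ge a b with h | h
  · exact absurd hab (ne_of_gt (v_anti hS h (by omega)))
  · have h' : b < a := by omega
    exact absurd hab.symm (ne_of_gt (v_anti hS h' (by omega)))

lemma v_lt_one {S j : ℕ} (hS : 1 ≤ S) (h1 : 1 ≤ j) (hj : j ≤ S) : v S j < 1 := by
  have := v_anti hS (show 0 < j by omega) hj
  rwa [v_zero] at this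

lemma v_mem_Icc {S j : ℕ} : v S j ∈ Set.Icc (-1 : ℝ) 1 :=
  ⟨Real.neg_one_le_cos _, Real.cos_le_one _⟩

lemma T_eval_node {S j : ℕ} (hS : 1 ≤ S) (hj : j ≤ S) :
    (Polynomial.Chebyshev.T ℝ (S : ℤ)).eval (v S j) = (-1 : ℝ) ^ j := by
  have hS' : (S : ℝ) ≠ 0 := by positivity
  rw [v, Polynomial.Chebyshev.T_real_cos]
  have harg : (S : ℤ) * ((j : ℝ) * π / S) = 0 + (j : ℕ) * π := by
    push_cast
    field_simp
    ring
  rw [show ((S : ℤ) : ℝ) * ((j : ℝ) * π / S) = 0 + (j : ℕ) * π by push_cast; field_simp; ring]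
  rw [Real.cos_add_nat_mul_pi, Real.cos_zero, mul_one]

/-- Derivative of the `i`-th Lagrange basis at `1`. -/
noncomputable def d (S i : ℕ) : ℝ :=
  (Polynomial.derivative (Lagrange.basis (Finset.range (S+1)) (v S) i)).eval 1

lemma basis_eq (S i : ℕ) :
    Lagrange.basis (Finset.range (S+1)) (v S) i =
      Polynomial.C (∏ j ∈ (Finset.range (S+1)).erase i, (v S i - v S j)⁻¹) *
        ∏ j ∈ (Finset.range (S+1)).erase i, (Polynomial.X - Polynomial.C (v S j)) := by
  rw [Lagrange.basis, map_prod, ← Finset.prod_mul_distrib]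
  rfl

lemma d_eq (S i : ℕ) :
    d S i = (∏ j ∈ (Finset.range (S+1)).erase i, (v S i - v S j)⁻¹) *
      ∑ l ∈ (Finset.range (S+1)).erase i,
        ∏ j ∈ ((Finset.range (S+1)).erase i).erase l, (1 - v S j) := by
  rw [d, basis_eq, Polynomial.derivative_C_mul, derivative_finset_prod]
  simp [Polynomial.eval_finset_sum, Polynomial.eval_prod]


lemma one_sub_v_nonneg (S j : ℕ) : 0 ≤ 1 - v S j := by
  have := Real.cos_le_one ((j : ℝ) * π / S)
  simpa [v] using this

lemma d_sign {S i : ℕ} (hS : 1 ≤ S) (hi : i ∈ Finset.range (S+1)) :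
    0 ≤ (-1 : ℝ)^i * d S i := by
  have hiS : i ≤ S := by simpa [Nat.lt_succ_iff] using hi
  rw [d_eq]
  set E := (Finset.range (S+1)).erase i with hE
  have hD : 0 ≤ ∑ l ∈ E, ∏ j ∈ E.erase l, (1 - v S j) := by
    refine Finset.sum_nonneg fun l _ => Finset.prod_nonneg fun j _ => one_sub_v_nonneg S j
  have hK : 0 ≤ (-1 : ℝ)^i * ∏ j ∈ E, (v S i - v S j)⁻¹ := by
    rw [Finset.prod_inv_distrib]
    have hQ : 0 ≤ (-1 : ℝ)^i * ∏ j ∈ E, (v S i - v S j) := by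
      have hsplit : E = Finset.range i ∪ Finset.Ico (i+1) (S+1) := by
        ext j
        simp only [hE, Finset.mem_erase, Finset.mem_range, Finset.mem_union, Finset.mem_Ico]
        omega
      have hdisj : Disjoint (Finset.range i) (Finset.Ico (i+1) (S+1)) := by
        rw [Finset.disjoint_left]
        intro j hj hj'
        simp only [Finset.mem_range] at hj
        simp only [Finset.mem_Ico] at hj'
        omega
      rw [hsplit, Finset.prod_union hdisj]
      have h1 : (-1 : ℝ)^i * ∏ j ∈ Finset.range i, (v S i - v S j)
          = ∏ j ∈ Finset.range i, (v S j - v S i) := by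
        calc (-1 : ℝ)^i * ∏ j ∈ Finset.range i, (v S i - v S j)
            = (∏ _j ∈ Finset.range i, (-1 : ℝ)) * ∏ j ∈ Finset.range i, (v S i - v S j) := by
              rw [Finset.prod_const, Finset.card_range]
        _ = ∏ j ∈ Finset.range i, ((-1) * (v S i - v S j)) := by rw [Finset.prod_mul_distrib]
        _ = ∏ j ∈ Finset.range i, (v S j - v S i) := Finset.prod_congr rfl fun j _ => by ring
      rw [← mul_assoc, h1]
      refine mul_nonneg (Finset.prod_nonneg fun j hj => ?_)
        (Finset.prod_nonneg fun j hj => ?_)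
      · simp only [Finset.mem_range] at hj
        have := v_anti hS hj hiS
        linarith
      · simp only [Finset.mem_Ico] at hj
        have := v_anti hS (show i < j by omega) (by omega)
        linarith
    have hinv : ((-1 : ℝ)^i)⁻¹ = (-1 : ℝ)^i := by
      rw [← inv_pow]; norm_num
    calc (0:ℝ) ≤ ((-1 : ℝ)^i * ∏ j ∈ E, (v S i - v S j))⁻¹ := inv_nonneg.mpr hQ
    _ = (-1 : ℝ)^i * (∏ j ∈ E, (v S i - v S j))⁻¹ := by rw [mul_inv, hinv]
  calc (0:ℝ) ≤ ((-1 : ℝ)^i * ∏ j ∈ E, (v S i - v S j)⁻¹) *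
      ∑ l ∈ E, ∏ j ∈ E.erase l, (1 - v S j) := mul_nonneg hK hD
  _ = (-1 : ℝ)^i * ((∏ j ∈ E, (v S i - v S j)⁻¹) *
      ∑ l ∈ E, ∏ j ∈ E.erase l, (1 - v S j)) := by ring

lemma abs_d {S i : ℕ} (hS : 1 ≤ S) (hi : i ∈ Finset.range (S+1)) :
    |d S i| = (-1 : ℝ)^i * d S i := by
  have h := d_sign hS hi
  have : |(-1 : ℝ)^i * d S i| = |d S i| := by
    rw [abs_mul, abs_pow, abs_neg, abs_one, one_pow, one_mul]
  rw [← this, abs_of_nonneg h]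

lemma degree_T_lt {S : ℕ} :
    (Polynomial.Chebyshev.T ℝ (S : ℤ)).degree < ((S+1 : ℕ) : WithBot ℕ) := by
  refine lt_of_le_of_lt Polynomial.degree_le_natDegree ?_
  exact_mod_cast Nat.lt_succ_of_le (natDegree_T_le S)

lemma deriv_interpolate_eval_one {S : ℕ} (r : ℕ → ℝ) :
    (Polynomial.derivative (Lagrange.interpolate (Finset.range (S+1)) (v S) r)).eval 1
      = ∑ j ∈ Finset.range (S+1), r j * d S j := by
  rw [Lagrange.interpolate_apply, map_sum]
  rw [Polynomial.eval_finset_sum]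
  refine Finset.sum_congr rfl fun j _ => ?_
  rw [Polynomial.derivative_C_mul, Polynomial.eval_mul, Polynomial.eval_C]
  rfl

lemma sum_d {S : ℕ} (hS : 1 ≤ S) :
    ∑ j ∈ Finset.range (S+1), (-1 : ℝ)^j * d S j = (S : ℝ)^2 := by
  have hinterp : Polynomial.Chebyshev.T ℝ (S : ℤ)
      = Lagrange.interpolate (Finset.range (S+1)) (v S) (fun j => (-1 : ℝ)^j) := by
    refine Lagrange.eq_interpolate_of_eval_eq _ (v_injOn hS) ?_ ?_
    · rw [Finset.card_range]; exact degree_T_lt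
    · intro j hj
      exact T_eval_node hS (by simpa [Nat.lt_succ_iff] using hj)
  have h1 : (Polynomial.derivative (Polynomial.Chebyshev.T ℝ (S : ℤ))).eval 1
      = ∑ j ∈ Finset.range (S+1), (-1 : ℝ)^j * d S j := by
    rw [hinterp, deriv_interpolate_eval_one]
  rw [← h1, Polynomial.Chebyshev.T_derivative_eq_U]
  have hS1 : (S : ℤ) - 1 = ((S - 1 : ℕ) : ℤ) := by
    have : 1 ≤ S := hS; push_cast [this]; ring
  rw [hS1]
  simp only [Polynomial.eval_mul, Polynomial.eval_intCast, U_eval_one]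
  have : ((S - 1 : ℕ) : ℝ) + 1 = (S : ℝ) := by
    have : 1 ≤ S := hS
    push_cast [this]; ring
  rw [this]
  push_cast
  ring

lemma cheb_bound {S : ℕ} (hS : 1 ≤ S) (P : Polynomial ℝ) (hdeg : P.natDegree ≤ S) {M : ℝ}
    (hb : ∀ x ∈ Set.Icc (-1 : ℝ) 1, |P.eval x| ≤ M) :
    |(Polynomial.derivative P).eval 1| ≤ (S : ℝ)^2 * M := by
  have hM : 0 ≤ M := le_trans (abs_nonneg _) (hb 1 (by norm_num))
  have hP : P = Lagrange.interpolate (Finset.range (S+1)) (v S) (fun j => P.eval (v S j)) := by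
    refine Lagrange.eq_interpolate (v_injOn hS) ?_
    rw [Finset.card_range]
    refine lt_of_le_of_lt Polynomial.degree_le_natDegree ?_
    exact_mod_cast Nat.lt_succ_of_le hdeg
  calc |(Polynomial.derivative P).eval 1|
      = |∑ j ∈ Finset.range (S+1), P.eval (v S j) * d S j| := by
        conv_lhs => rw [hP]
        rw [deriv_interpolate_eval_one]
  _ ≤ ∑ j ∈ Finset.range (S+1), |P.eval (v S j) * d S j| :=
        Finset.abs_sum_le_sum_abs _ _
  _ ≤ ∑ j ∈ Finset.range (S+1), M * ((-1 : ℝ)^j * d S j) := by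
        refine Finset.sum_le_sum fun j hj => ?_
        rw [abs_mul, abs_d hS hj]
        exact mul_le_mul_of_nonneg_right (hb _ v_mem_Icc) (d_sign hS hj)
  _ = M * ∑ j ∈ Finset.range (S+1), (-1 : ℝ)^j * d S j := by rw [Finset.mul_sum]
  _ = (S : ℝ)^2 * M := by rw [sum_d hS, mul_comm]

lemma markov01 {s : ℕ} (hs : 1 ≤ s) (p : Polynomial ℝ) (hdeg : p.natDegree ≤ s) {M : ℝ}
    (hb : ∀ t ∈ Set.Icc (0 : ℝ) 1, |p.eval t| ≤ M) :
    |p.coeff 1| ≤ 2 * (s : ℝ)^2 * M := by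
  set q : Polynomial ℝ := Polynomial.C (1/2 : ℝ) * (1 - Polynomial.X) with hq
  set P := p.comp q with hPdef
  have hqdeg : q.natDegree ≤ 1 := by
    refine le_trans Polynomial.natDegree_mul_le ?_
    simp only [Polynomial.natDegree_C, zero_add]
    refine le_trans (Polynomial.natDegree_sub_le _ _) ?_
    simp [Polynomial.natDegree_X_le]
  have hqeval : ∀ x : ℝ, q.eval x = (1 - x) / 2 := by
    intro x; simp [hq]; ring
  have hPdeg : P.natDegree ≤ s := by
    refine le_trans (Polynomial.natDegree_comp_le) ?_
    calc p.natDegree * q.natDegree ≤ s * 1 := Nat.mul_le_mul hdeg hqdeg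
    _ = s := by ring
  have hPb : ∀ x ∈ Set.Icc (-1 : ℝ) 1, |P.eval x| ≤ M := by
    intro x hx
    rw [hPdef, Polynomial.eval_comp, hqeval]
    refine hb _ ?_
    rcases hx with ⟨h1, h2⟩
    constructor <;> [linarith; linarith]
  have hder : (Polynomial.derivative P).eval 1 = -(1/2) * p.coeff 1 := by
    rw [hPdef, Polynomial.derivative_comp, Polynomial.eval_mul, Polynomial.eval_comp, hqeval]
    have h0 : (Polynomial.derivative p).eval ((1 - 1)/2 : ℝ) = p.coeff 1 := by
      norm_num
      rw [← Polynomial.coeff_zero_eq_eval_zero, Polynomial.coeff_derivative]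
      norm_num
    rw [h0]
    have : (Polynomial.derivative q).eval 1 = -(1/2 : ℝ) := by
      simp [hq, Polynomial.derivative_sub]
    rw [this]
  have := cheb_bound hs P hPdeg hPb
  rw [hder] at this
  rw [abs_mul] at this
  norm_num at this
  calc |p.coeff 1| = 2 * (1/2 * |p.coeff 1|) := by ring
  _ ≤ 2 * ((s:ℝ)^2 * M) := by linarith
  _ = 2 * (s : ℝ)^2 * M := by ring

end MarkovAux

namespace Stmt8

/-- Flip the coordinates in `S`. -/
def flipS {n : ℕ} (x : Fin n → Bool) (S : Finset (Fin n)) : Fin n → Bool :=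
  fun i => if i ∈ S then !(x i) else x i

variable {n : ℕ}

lemma exponent_le_one {p : MvPolynomial (Fin n) ℝ} (hml : Multilinear p)
    {m : Fin n →₀ ℕ} (hm : m ∈ p.support) (i : Fin n) : m i ≤ 1 := by
  have h := hml i
  rw [MvPolynomial.degreeOf_eq_sup] at h
  exact le_trans (Finset.le_sup (f := fun m => m i) hm) h

lemma exponent_eq_one {p : MvPolynomial (Fin n) ℝ} (hml : Multilinear p)
    {m : Fin n →₀ ℕ} (hm : m ∈ p.support) {i : Fin n} (hi : i ∈ m.support) : m i = 1 := by
  have h1 := exponent_le_one hml hm i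
  have h2 : m i ≠ 0 := Finsupp.mem_support_iff.mp hi
  omega

lemma evalB_eq_sum {p : MvPolynomial (Fin n) ℝ} (hml : Multilinear p) (x : Fin n → Bool) :
    evalB x p = ∑ m ∈ p.support, MvPolynomial.coeff m p * ∏ i ∈ m.support, bval (x i) := by
  rw [evalB, MvPolynomial.eval_eq']
  refine Finset.sum_congr rfl fun m hm => ?_
  congr 1
  rw [show (∏ i ∈ m.support, bval (x i)) = ∏ i ∈ m.support, (if x i then (1:ℝ) else 0) ^ m i from
    Finset.prod_congr rfl fun i hi => by rw [exponent_eq_one hml hm hi, pow_one, bval]]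
  exact (Finset.prod_subset (Finset.subset_univ m.support) (fun i _ hi => by
    rw [Finsupp.notMem_support_iff.mp hi, pow_zero])).symm

lemma support_card_le_totalDegree {p : MvPolynomial (Fin n) ℝ}
    {m : Fin n →₀ ℕ} (hm : m ∈ p.support) : m.support.card ≤ p.totalDegree := by
  refine le_trans ?_ (MvPolynomial.le_totalDegree hm)
  rw [Finsupp.sum]
  calc m.support.card = ∑ _i ∈ m.support, 1 := by simp
  _ ≤ ∑ i ∈ m.support, m i := Finset.sum_le_sum fun i hi =>
      Nat.one_le_iff_ne_zero.mpr (Finsupp.mem_support_iff.mp hi)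

lemma alt_sum {p : MvPolynomial (Fin n) ℝ} (hml : Multilinear p) (x : Fin n → Bool)
    (B : Finset (Fin n)) :
    ∑ S ∈ B.powerset, (-1 : ℝ) ^ S.card * evalB (flipS x S) p
      = ∑ m ∈ p.support, MvPolynomial.coeff m p *
          ((∏ i ∈ m.support \ B, bval (x i)) *
            (if B ⊆ m.support then ∏ i ∈ B, (bval (x i) - bval (!(x i))) else 0)) := by
  classical
  have hswap : ∑ S ∈ B.powerset, (-1 : ℝ) ^ S.card * evalB (flipS x S) p
      = ∑ m ∈ p.support, ∑ S ∈ B.powerset,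
          (-1 : ℝ) ^ S.card * (MvPolynomial.coeff m p * ∏ i ∈ m.support, bval (flipS x S i)) := by
    rw [Finset.sum_comm]
    refine Finset.sum_congr rfl fun S _ => ?_
    rw [evalB_eq_sum hml, Finset.mul_sum]
  rw [hswap]
  refine Finset.sum_congr rfl fun m hm => ?_
  -- factor the inner product
  have hfac : ∀ S ∈ B.powerset, (∏ i ∈ m.support, bval (flipS x S i))
      = (∏ i ∈ m.support \ B, bval (x i)) *
        ∏ i ∈ m.support ∩ B, (if i ∈ S then bval (!(x i)) else bval (x i)) := by
    intro S hS
    rw [Finset.mem_powerset] at hS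
    rw [← Finset.prod_sdiff (Finset.inter_subset_left : m.support ∩ B ⊆ m.support)]
    have h1 : m.support \ (m.support ∩ B) = m.support \ B := by
      ext i; simp only [Finset.mem_sdiff, Finset.mem_inter]; tauto
    rw [h1]
    congr 1
    · refine Finset.prod_congr rfl fun i hi => ?_
      have : i ∉ S := fun h => (Finset.mem_sdiff.mp hi).2 (hS h)
      simp [flipS, this]
    · refine Finset.prod_congr rfl fun i hi => ?_
      simp only [flipS]
      split_ifs <;> rfl
  calc ∑ S ∈ B.powerset,
        (-1 : ℝ) ^ S.card * (MvPolynomial.coeff m p * ∏ i ∈ m.support, bval (flipS x S i))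
      = MvPolynomial.coeff m p * ((∏ i ∈ m.support \ B, bval (x i)) *
          ∑ S ∈ B.powerset, (-1 : ℝ) ^ S.card *
            ∏ i ∈ m.support ∩ B, (if i ∈ S then bval (!(x i)) else bval (x i))) := by
        rw [Finset.mul_sum, Finset.mul_sum]
        refine Finset.sum_congr rfl fun S hS => ?_
        rw [hfac S hS]; ring
  _ = _ := by
      congr 1
      congr 1
      -- key step : product-of-sums expansion
      have hprodadd := Finset.prod_add
        (fun i => if i ∈ m.support then -(bval (!(x i))) else (-1 : ℝ))
        (fun i => if i ∈ m.support then bval (x i) else 1) B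
      have hLHS : ∀ S ∈ B.powerset,
          (∏ i ∈ S, (if i ∈ m.support then -(bval (!(x i))) else (-1 : ℝ))) *
            ∏ i ∈ B \ S, (if i ∈ m.support then bval (x i) else 1)
          = (-1 : ℝ) ^ S.card *
            ∏ i ∈ m.support ∩ B, (if i ∈ S then bval (!(x i)) else bval (x i)) := by
        intro S hS
        rw [Finset.mem_powerset] at hS
        have e1 : (∏ i ∈ S, (if i ∈ m.support then -(bval (!(x i))) else (-1 : ℝ)))
            = (-1 : ℝ) ^ S.card * ∏ i ∈ S, (if i ∈ m.support then bval (!(x i)) else 1) := by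
          calc (∏ i ∈ S, (if i ∈ m.support then -(bval (!(x i))) else (-1 : ℝ)))
              = ∏ i ∈ S, ((-1) * (if i ∈ m.support then bval (!(x i)) else 1)) := by
                refine Finset.prod_congr rfl fun i _ => ?_
                split_ifs <;> ring
          _ = (∏ _i ∈ S, (-1 : ℝ)) * ∏ i ∈ S, (if i ∈ m.support then bval (!(x i)) else 1) := by
                rw [Finset.prod_mul_distrib]
          _ = (-1 : ℝ) ^ S.card * ∏ i ∈ S, (if i ∈ m.support then bval (!(x i)) else 1) := by
                rw [Finset.prod_const]
        rw [e1, Finset.prod_ite_mem S m.support (fun i => bval (!(x i))),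
          Finset.prod_ite_mem (B \ S) m.support (fun i => bval (x i))]
        have hsplit : ∏ i ∈ m.support ∩ B, (if i ∈ S then bval (!(x i)) else bval (x i))
            = (∏ i ∈ (m.support ∩ B).filter (· ∈ S), bval (!(x i))) *
              ∏ i ∈ (m.support ∩ B).filter (¬ · ∈ S), bval (x i) := by
          rw [← Finset.prod_filter_mul_prod_filter_not (m.support ∩ B) (· ∈ S)]
          congr 1
          · exact Finset.prod_congr rfl fun i hi => by
              rw [if_pos (Finset.mem_filter.mp hi).2]
          · exact Finset.prod_congr rfl fun i hi => by
              rw [if_neg (Finset.mem_filter.mp hi).2]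
        have hs1 : S ∩ m.support = (m.support ∩ B).filter (· ∈ S) := by
          ext i
          simp only [Finset.mem_inter, Finset.mem_filter]
          constructor
          · rintro ⟨h1, h2⟩; exact ⟨⟨h2, hS h1⟩, h1⟩
          · rintro ⟨⟨h1, _⟩, h2⟩; exact ⟨h2, h1⟩
        have hs2 : (B \ S) ∩ m.support = (m.support ∩ B).filter (¬ · ∈ S) := by
          ext i
          simp only [Finset.mem_inter, Finset.mem_filter, Finset.mem_sdiff]
          tauto
        rw [hsplit, hs1, hs2]
        ring
      rw [Finset.sum_congr rfl hLHS] at hprodadd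
      rw [← hprodadd]
      by_cases hBm : B ⊆ m.support
      · rw [if_pos hBm]
        refine Finset.prod_congr rfl fun i hi => ?_
        rw [if_pos (hBm hi), if_pos (hBm hi)]
        ring
      · rw [if_neg hBm]
        obtain ⟨i, hiB, him⟩ : ∃ i ∈ B, i ∉ m.support := by
          by_contra h
          push_neg at h
          exact hBm h
        refine Finset.prod_eq_zero hiB ?_
        rw [if_neg him, if_neg him]
        ring

end Stmt8

namespace Stmt8

variable {n : ℕ}

lemma alt_sum_eq_zero {p : MvPolynomial (Fin n) ℝ} (hml : Multilinear p) (x : Fin n → Bool)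
    {B : Finset (Fin n)} (hB : p.totalDegree < B.card) :
    ∑ S ∈ B.powerset, (-1 : ℝ) ^ S.card * evalB (flipS x S) p = 0 := by
  rw [alt_sum hml x B]
  refine Finset.sum_eq_zero fun m hm => ?_
  have : ¬ B ⊆ m.support := by
    intro hsub
    have h1 := Finset.card_le_card hsub
    have h2 := support_card_le_totalDegree hm
    omega
  rw [if_neg this]
  ring

lemma bval_sub_ne_zero (b : Bool) : bval b - bval (!b) ≠ 0 := by
  cases b <;> simp [bval]

lemma block_card_le_totalDegree {p : MvPolynomial (Fin n) ℝ} (hml : Multilinear p)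
    (x : Fin n → Bool) {B : Finset (Fin n)}
    (hB : evalB (flipS x B) p ≠ 0)
    (hmin : ∀ S, S ⊆ B → S ≠ B → evalB (flipS x S) p = 0) :
    B.card ≤ p.totalDegree := by
  by_contra hlt
  push_neg at hlt
  have h0 := alt_sum_eq_zero hml x hlt
  have hsingle : ∑ S ∈ B.powerset, (-1 : ℝ) ^ S.card * evalB (flipS x S) p
      = (-1 : ℝ) ^ B.card * evalB (flipS x B) p := by
    refine Finset.sum_eq_single_of_mem B (Finset.mem_powerset_self B) fun S hS hne => ?_
    rw [hmin S (Finset.mem_powerset.mp hS) hne]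
    ring
  rw [hsingle] at h0
  rcases mul_eq_zero.mp h0 with h | h
  · exact (pow_ne_zero _ (by norm_num : (-1:ℝ) ≠ 0)) h
  · exact hB h

lemma indicator_finsupp_apply (B : Finset (Fin n)) (j : Fin n) :
    (∑ i ∈ B, Finsupp.single i 1) j = if j ∈ B then 1 else 0 := by
  classical
  rw [Finset.sum_apply']
  by_cases hj : j ∈ B
  · rw [if_pos hj, Finset.sum_eq_single_of_mem j hj (fun i _ hne => Finsupp.single_eq_of_ne' hne)]
    simp
  · rw [if_neg hj]
    refine Finset.sum_eq_zero fun i hi => ?_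
    exact Finsupp.single_eq_of_ne' (fun h => hj (h ▸ hi))

lemma indicator_support (B : Finset (Fin n)) :
    (∑ i ∈ B, Finsupp.single i (1:ℕ)).support = B := by
  ext j
  rw [Finsupp.mem_support_iff, indicator_finsupp_apply]
  by_cases hj : j ∈ B <;> simp [hj]

lemma maxonomial_flip {p : MvPolynomial (Fin n) ℝ} (hml : Multilinear p) (x : Fin n → Bool)
    {B : Finset (Fin n)} (hmax : IsMaxonomial p B) :
    ∃ S, S ⊆ B ∧ evalB (flipS x S) p ≠ 0 := by
  classical
  by_contra h
  push_neg at h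
  have hzero : ∀ S ∈ B.powerset, evalB (flipS x S) p = 0 := fun S hS =>
    h S (Finset.mem_powerset.mp hS)
  have h0 : ∑ S ∈ B.powerset, (-1 : ℝ) ^ S.card * evalB (flipS x S) p = 0 := by
    refine Finset.sum_eq_zero fun S hS => ?_
    rw [hzero S hS]; ring
  rw [alt_sum hml x B] at h0
  set mB : Fin n →₀ ℕ := ∑ i ∈ B, Finsupp.single i 1 with hmB
  have hmBsupp : mB.support = B := indicator_support B
  have hmBmem : mB ∈ p.support := MvPolynomial.mem_support_iff.mpr hmax.2
  have hsingle : ∑ m ∈ p.support, MvPolynomial.coeff m p *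
      ((∏ i ∈ m.support \ B, bval (x i)) *
        (if B ⊆ m.support then ∏ i ∈ B, (bval (x i) - bval (!(x i))) else 0))
      = MvPolynomial.coeff mB p * ∏ i ∈ B, (bval (x i) - bval (!(x i))) := by
    rw [Finset.sum_eq_single_of_mem mB hmBmem]
    · rw [hmBsupp]; simp
    · intro m hm hne
      by_cases hsub : B ⊆ m.support
      · exfalso
        apply hne
        have hcard : m.support.card ≤ B.card := by
          have h1 := support_card_le_totalDegree hm
          have h2 := hmax.1
          omega
        have hsuppeq : m.support = B := (Finset.eq_of_subset_of_card_le hsub hcard).symm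
        ext j
        rw [indicator_finsupp_apply]
        by_cases hj : j ∈ B
        · rw [if_pos hj]
          exact exponent_eq_one hml hm (hsuppeq ▸ hj)
        · rw [if_neg hj]
          exact Finsupp.notMem_support_iff.mp (fun h => hj (hsuppeq ▸ h))
      · rw [if_neg hsub]; ring
  rw [hsingle] at h0
  rcases mul_eq_zero.mp h0 with h | h
  · exact hmax.2 h
  · obtain ⟨i, _, hzero'⟩ := Finset.prod_eq_zero_iff.mp h
    exact bval_sub_ne_zero (x i) hzero'

end Stmt8

namespace Stmt8

variable {n : ℕ}

lemma flipS_empty (x : Fin n → Bool) : flipS x ∅ = x := by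
  funext i; simp [flipS]

lemma hitting_of_cert {p : MvPolynomial (Fin n) ℝ} (hml : Multilinear p)
    {f : (Fin n → Bool) → Bool} (hp : ∀ x, evalB x p ≠ 0 ↔ f x = true)
    (x : Fin n → Bool) {H : Finset (Fin n)}
    (hcert : ∀ y, (∀ i ∈ H, y i = x i) → f y = false) :
    IsHittingSet p H := by
  intro B hmaxB
  by_contra hne
  rw [Finset.not_nonempty_iff_eq_empty] at hne
  obtain ⟨S, hSB, hSne⟩ := maxonomial_flip hml x hmaxB
  have hfy : f (flipS x S) = true := (hp _).mp hSne
  have hfy' : f (flipS x S) = false := by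
    refine hcert _ fun i hi => ?_
    have hiS : i ∉ S := by
      intro hiS
      have hmem : i ∈ H ∩ B := Finset.mem_inter.mpr ⟨hi, hSB hiS⟩
      rw [hne] at hmem
      exact absurd hmem (Finset.notMem_empty i)
    simp [flipS, hiS]
  rw [hfy] at hfy'
  exact Bool.noConfusion hfy'

lemma evalB_eq_of_deg_zero {r : MvPolynomial (Fin n) ℝ} (h : r.totalDegree = 0)
    (x y : Fin n → Bool) : evalB x r = evalB y r := by
  have key : ∀ z : Fin n → Bool, evalB z r = ∑ m ∈ r.support, MvPolynomial.coeff m r := by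
    intro z
    rw [evalB, MvPolynomial.eval_eq']
    refine Finset.sum_congr rfl fun m hm => ?_
    have hm0 : ∀ i, m i = 0 := fun i =>
      (MvPolynomial.totalDegree_eq_zero_iff (Fin n) r).mp h m hm i
    rw [show (∏ i, (if z i then (1:ℝ) else 0) ^ m i) = 1 from
      Finset.prod_eq_one fun i _ => by rw [hm0 i, pow_zero], mul_one]
  rw [key x, key y]

lemma weight_sum (F : Finset (Finset (Fin n))) (t : ℝ) :
    ∑ A ∈ F.powerset, t ^ A.card * (1 - t) ^ (F.card - A.card) = 1 := by
  classical
  calc ∑ A ∈ F.powerset, t ^ A.card * (1 - t) ^ (F.card - A.card)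
      = ∑ A ∈ F.powerset, (∏ _B ∈ A, t) * (∏ _B ∈ F \ A, (1 - t)) := by
        refine Finset.sum_congr rfl fun A hA => ?_
        rw [Finset.mem_powerset] at hA
        rw [Finset.prod_const, Finset.prod_const, Finset.card_sdiff_of_subset hA]
  _ = ∏ _B ∈ F, (t + (1 - t)) := (Finset.prod_add _ _ F).symm
  _ = 1 := by
        rw [show t + (1 - t) = 1 by ring]
        exact Finset.prod_const_one

lemma coeff_one_eq_deriv (q : Polynomial ℝ) :
    q.coeff 1 = (Polynomial.derivative q).eval 0 := by
  rw [← Polynomial.coeff_zero_eq_eval_zero, Polynomial.coeff_derivative]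
  norm_num

lemma deriv_term_eval_zero (a b : ℕ) :
    (Polynomial.derivative ((Polynomial.X : Polynomial ℝ) ^ a * (1 - Polynomial.X) ^ b)).eval 0
      = (if a = 0 then -(b:ℝ) else if a = 1 then 1 else 0) := by
  rw [Polynomial.derivative_mul, Polynomial.eval_add, Polynomial.eval_mul, Polynomial.eval_mul]
  have h1 : (Polynomial.derivative ((Polynomial.X : Polynomial ℝ) ^ a)).eval 0
      = (if a = 1 then 1 else 0) := by
    rw [Polynomial.derivative_X_pow, Polynomial.eval_mul, Polynomial.eval_pow]
    rcases Nat.lt_or_ge a 1 with h | h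
    · interval_cases a
      simp
    rcases Nat.lt_or_ge a 2 with h2 | h2
    · interval_cases a
      simp
    · rw [if_neg (by omega)]
      simp only [Polynomial.eval_X]
      rw [zero_pow (by omega : a - 1 ≠ 0)]
      ring
  have h2 : (Polynomial.derivative ((1 - Polynomial.X : Polynomial ℝ) ^ b)).eval 0 = -(b:ℝ) := by
    rw [Polynomial.derivative_pow, Polynomial.eval_mul, Polynomial.eval_mul]
    simp [Polynomial.derivative_sub]
  rw [h1, h2]
  simp only [Polynomial.eval_pow, Polynomial.eval_X, Polynomial.eval_sub, Polynomial.eval_one,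
    Polynomial.eval_pow]
  rcases Nat.eq_zero_or_pos a with ha | ha
  · subst ha
    norm_num
  · rw [zero_pow (by omega : a ≠ 0)]
    rcases Nat.lt_or_ge a 2 with h2 | h2
    · interval_cases a
      norm_num
    · rw [if_neg (by omega), if_neg (by omega)]
      ring

end Stmt8

namespace Stmt8

variable {n : ℕ}

lemma u_eq_v {r : MvPolynomial (Fin n) ℝ} (hrml : Multilinear r)
    (x : Fin n → Bool) (F : Finset (Finset (Fin n)))
    (hdisj : (F : Set (Finset (Fin n))).Pairwise Disjoint) :
    (∑ A ∈ F.powerset, Polynomial.C (evalB (flipS x (A.biUnion id)) r) *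
        (Polynomial.X ^ A.card * (1 - Polynomial.X) ^ (F.card - A.card)))
    = ∑ m ∈ r.support, Polynomial.C (MvPolynomial.coeff m r *
          ∏ i ∈ m.support \ F.biUnion id, bval (x i)) *
        ∏ B ∈ F, (Polynomial.C (∏ i ∈ m.support ∩ B, bval (x i)) * (1 - Polynomial.X) +
          Polynomial.C (∏ i ∈ m.support ∩ B, bval (!(x i))) * Polynomial.X) := by
  classical
  refine Polynomial.funext fun t => ?_
  rw [Polynomial.eval_finset_sum, Polynomial.eval_finset_sum]
  have hLHS : ∀ A ∈ F.powerset,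
      (Polynomial.C (evalB (flipS x (A.biUnion id)) r) *
        (Polynomial.X ^ A.card * (1 - Polynomial.X) ^ (F.card - A.card))).eval t
      = evalB (flipS x (A.biUnion id)) r * (t ^ A.card * (1 - t) ^ (F.card - A.card)) := by
    intro A _; simp
  rw [Finset.sum_congr rfl hLHS]
  have hRHS : ∀ m ∈ r.support,
      (Polynomial.C (MvPolynomial.coeff m r * ∏ i ∈ m.support \ F.biUnion id, bval (x i)) *
        ∏ B ∈ F, (Polynomial.C (∏ i ∈ m.support ∩ B, bval (x i)) * (1 - Polynomial.X) +
          Polynomial.C (∏ i ∈ m.support ∩ B, bval (!(x i))) * Polynomial.X)).eval t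
      = (MvPolynomial.coeff m r * ∏ i ∈ m.support \ F.biUnion id, bval (x i)) *
        ∏ B ∈ F, ((∏ i ∈ m.support ∩ B, bval (x i)) * (1 - t) +
          (∏ i ∈ m.support ∩ B, bval (!(x i))) * t) := by
    intro m _
    rw [Polynomial.eval_mul, Polynomial.eval_C, Polynomial.eval_prod]
    congr 1
    refine Finset.prod_congr rfl fun B _ => by
      simp [Polynomial.eval_prod]
  rw [Finset.sum_congr rfl hRHS]
  -- expand evalB and swap sums
  have hexp : ∀ A ∈ F.powerset,
      evalB (flipS x (A.biUnion id)) r * (t ^ A.card * (1 - t) ^ (F.card - A.card))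
      = ∑ m ∈ r.support, MvPolynomial.coeff m r *
          (∏ i ∈ m.support, bval (flipS x (A.biUnion id) i)) *
          (t ^ A.card * (1 - t) ^ (F.card - A.card)) := by
    intro A _
    rw [evalB_eq_sum hrml, Finset.sum_mul]
  rw [Finset.sum_congr rfl hexp, Finset.sum_comm]
  refine Finset.sum_congr rfl fun m hm => ?_
  -- per-monomial identity
  set U := F.biUnion id with hU
  set π0 : Finset (Fin n) → ℝ := fun B => ∏ i ∈ m.support ∩ B, bval (x i) with hπ0
  set π1 : Finset (Fin n) → ℝ := fun B => ∏ i ∈ m.support ∩ B, bval (!(x i)) with hπ1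
  have hfacA : ∀ A ∈ F.powerset,
      (∏ i ∈ m.support, bval (flipS x (A.biUnion id) i))
      = (∏ i ∈ m.support \ U, bval (x i)) * ∏ B ∈ F, (if B ∈ A then π1 B else π0 B) := by
    intro A hA
    rw [Finset.mem_powerset] at hA
    rw [← Finset.prod_sdiff (Finset.inter_subset_left : m.support ∩ U ⊆ m.support)]
    have h1 : m.support \ (m.support ∩ U) = m.support \ U := by
      ext i; simp only [Finset.mem_sdiff, Finset.mem_inter]; tauto
    rw [h1]
    congr 1
    · refine Finset.prod_congr rfl fun i hi => ?_
      have hiU : i ∉ A.biUnion id := by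
        intro hmem
        refine (Finset.mem_sdiff.mp hi).2 ?_
        obtain ⟨B, hBA, hiB⟩ := Finset.mem_biUnion.mp hmem
        exact Finset.mem_biUnion.mpr ⟨B, hA hBA, hiB⟩
      simp [flipS, hiU]
    · have h2 : m.support ∩ U = F.biUnion (fun B => m.support ∩ B) := by
        ext i
        simp only [Finset.mem_inter, Finset.mem_biUnion, hU, id]
        tauto
      rw [h2, Finset.prod_biUnion]
      · refine Finset.prod_congr rfl fun B hB => ?_
        by_cases hBA : B ∈ A
        · rw [if_pos hBA, hπ1]
          refine Finset.prod_congr rfl fun i hi => ?_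
          have hiA : i ∈ A.biUnion id :=
            Finset.mem_biUnion.mpr ⟨B, hBA, (Finset.mem_inter.mp hi).2⟩
          simp [flipS, hiA]
        · rw [if_neg hBA, hπ0]
          refine Finset.prod_congr rfl fun i hi => ?_
          have hiA : i ∉ A.biUnion id := by
            intro hmem
            obtain ⟨B', hB'A, hiB'⟩ := Finset.mem_biUnion.mp hmem
            have hBB' : B ≠ B' := fun h => hBA (h ▸ hB'A)
            have := hdisj hB (hA hB'A) hBB'
            exact Finset.disjoint_left.mp this (Finset.mem_inter.mp hi).2 hiB'
          simp [flipS, hiA]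
      · intro B hB B' hB' hne
        have hd := hdisj hB hB' hne
        exact Finset.disjoint_left.mpr fun i hi hi' =>
          Finset.disjoint_left.mp hd (Finset.mem_inter.mp hi).2 (Finset.mem_inter.mp hi').2
  calc ∑ A ∈ F.powerset, MvPolynomial.coeff m r *
        (∏ i ∈ m.support, bval (flipS x (A.biUnion id) i)) *
        (t ^ A.card * (1 - t) ^ (F.card - A.card))
      = MvPolynomial.coeff m r * ((∏ i ∈ m.support \ U, bval (x i)) *
          ∑ A ∈ F.powerset, (∏ B ∈ A, (t * π1 B)) * ∏ B ∈ F \ A, ((1 - t) * π0 B)) := by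
        rw [Finset.mul_sum, Finset.mul_sum]
        refine Finset.sum_congr rfl fun A hA => ?_
        rw [hfacA A hA]
        have hAF : A ⊆ F := Finset.mem_powerset.mp hA
        have e1 : ∏ B ∈ A, (t * π1 B) = t ^ A.card * ∏ B ∈ A, π1 B := by
          rw [Finset.prod_mul_distrib, Finset.prod_const]
        have e2 : ∏ B ∈ F \ A, ((1 - t) * π0 B)
            = (1 - t) ^ (F.card - A.card) * ∏ B ∈ F \ A, π0 B := by
          rw [Finset.prod_mul_distrib, Finset.prod_const, Finset.card_sdiff_of_subset hAF]
        have e3 : ∏ B ∈ F, (if B ∈ A then π1 B else π0 B)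
            = (∏ B ∈ A, π1 B) * ∏ B ∈ F \ A, π0 B := by
          rw [← Finset.prod_sdiff hAF, mul_comm]
          congr 1
          · exact Finset.prod_congr rfl fun B hB => if_pos hB
          · exact Finset.prod_congr rfl fun B hB => if_neg (Finset.mem_sdiff.mp hB).2
        rw [e1, e2, e3]
        ring
  _ = _ := by
      have hpa := Finset.prod_add (fun B => t * π1 B) (fun B => (1 - t) * π0 B) F
      rw [← hpa]
      have : ∀ B ∈ F, t * π1 B + (1 - t) * π0 B = π0 B * (1 - t) + π1 B * t :=
        fun B _ => by ring
      rw [Finset.prod_congr rfl this]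
      ring

end Stmt8

namespace Stmt8

variable {n : ℕ}

lemma v_natDegree_le {r : MvPolynomial (Fin n) ℝ}
    (x : Fin n → Bool) (F : Finset (Finset (Fin n)))
    (hdisj : (F : Set (Finset (Fin n))).Pairwise Disjoint) :
    (∑ m ∈ r.support, Polynomial.C (MvPolynomial.coeff m r *
          ∏ i ∈ m.support \ F.biUnion id, bval (x i)) *
        ∏ B ∈ F, (Polynomial.C (∏ i ∈ m.support ∩ B, bval (x i)) * (1 - Polynomial.X) +
          Polynomial.C (∏ i ∈ m.support ∩ B, bval (!(x i))) * Polynomial.X)).natDegree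
      ≤ r.totalDegree := by
  classical
  refine Polynomial.natDegree_sum_le_of_forall_le _ _ fun m hm => ?_
  refine le_trans Polynomial.natDegree_mul_le ?_
  rw [Polynomial.natDegree_C, zero_add]
  set w : Finset (Fin n) → Polynomial ℝ := fun B =>
    Polynomial.C (∏ i ∈ m.support ∩ B, bval (x i)) * (1 - Polynomial.X) +
      Polynomial.C (∏ i ∈ m.support ∩ B, bval (!(x i))) * Polynomial.X with hw
  have hfilter : ∏ B ∈ F.filter (fun B => (m.support ∩ B).Nonempty), w B = ∏ B ∈ F, w B := by
    refine Finset.prod_filter_of_ne fun B _ hne => ?_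
    by_contra hempty
    rw [Finset.not_nonempty_iff_eq_empty] at hempty
    apply hne
    rw [hw]
    simp only [hempty, Finset.prod_empty, map_one, one_mul]
    ring
  rw [← hfilter]
  refine le_trans (Polynomial.natDegree_prod_le _ _) ?_
  have hdeg1 : ∀ B ∈ F.filter (fun B => (m.support ∩ B).Nonempty), (w B).natDegree ≤ 1 := by
    intro B _
    rw [hw]
    refine le_trans (Polynomial.natDegree_add_le _ _) ?_
    simp only [max_le_iff]
    constructor
    · refine le_trans Polynomial.natDegree_mul_le ?_
      rw [Polynomial.natDegree_C, zero_add]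
      refine le_trans (Polynomial.natDegree_sub_le _ _) ?_
      simp [Polynomial.natDegree_X_le]
    · refine le_trans Polynomial.natDegree_mul_le ?_
      rw [Polynomial.natDegree_C, zero_add]
      exact Polynomial.natDegree_X_le
  refine le_trans (Finset.sum_le_sum hdeg1) ?_
  rw [Finset.sum_const, smul_eq_mul, mul_one]
  -- card of the filtered family is at most the size of the support of m
  set Ff := F.filter (fun B => (m.support ∩ B).Nonempty) with hFf
  have hcard : Ff.card ≤ m.support.card := by
    have hbu : Ff.biUnion (fun B => m.support ∩ B) ⊆ m.support := by
      refine Finset.biUnion_subset.mpr fun B _ => Finset.inter_subset_left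
    have hbd : (Ff.biUnion (fun B => m.support ∩ B)).card
        = ∑ B ∈ Ff, (m.support ∩ B).card := by
      refine Finset.card_biUnion fun B hB B' hB' hne => ?_
      have hd := hdisj (Finset.mem_filter.mp hB).1 (Finset.mem_filter.mp hB').1 hne
      exact Finset.disjoint_left.mpr fun i hi hi' =>
        Finset.disjoint_left.mp hd (Finset.mem_inter.mp hi).2 (Finset.mem_inter.mp hi').2
    have h1 : Ff.card ≤ ∑ B ∈ Ff, (m.support ∩ B).card := by
      calc Ff.card = ∑ _B ∈ Ff, 1 := by simp
      _ ≤ ∑ B ∈ Ff, (m.support ∩ B).card := Finset.sum_le_sum fun B hB =>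
          Finset.card_pos.mpr (Finset.mem_filter.mp hB).2
    calc Ff.card ≤ ∑ B ∈ Ff, (m.support ∩ B).card := h1
    _ = (Ff.biUnion (fun B => m.support ∩ B)).card := hbd.symm
    _ ≤ m.support.card := Finset.card_le_card hbu
  exact le_trans hcard (support_card_le_totalDegree hm)

end Stmt8

namespace Stmt8

variable {n : ℕ}

lemma markov01' {s : ℕ} (hs : 1 ≤ s) (p : Polynomial ℝ) (hdeg : p.natDegree ≤ s) {M : ℝ}
    (hb : ∀ t ∈ Set.Icc (0:ℝ) 1, |p.eval t| ≤ M) : |p.coeff 1| ≤ 2 * (s:ℝ)^2 * M :=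
  MarkovAux.markov01 hs p hdeg hb

lemma key_count {r : MvPolynomial (Fin n) ℝ} (hrml : Multilinear r)
    (x : Fin n → Bool) (F : Finset (Finset (Fin n)))
    (hdisj : (F : Set (Finset (Fin n))).Pairwise Disjoint)
    (hmax : ∀ y, |evalB y r| ≤ evalB x r)
    (hneg : ∀ B ∈ F, evalB (flipS x B) r < 0)
    (hk : 1 ≤ F.card) :
    F.card < 2 * r.totalDegree ^ 2 := by
  classical
  set M := evalB x r with hM
  obtain ⟨B₀, hB₀⟩ : F.Nonempty := Finset.card_pos.mp (by omega)
  have hMpos : 0 < M := by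
    have h1 := hneg B₀ hB₀
    have h2 := hmax (flipS x B₀)
    have h3 : 0 < |evalB (flipS x B₀) r| := abs_pos.mpr (ne_of_lt h1)
    linarith
  have hs1 : 1 ≤ r.totalDegree := by
    by_contra h
    push_neg at h
    have h0 : r.totalDegree = 0 := by omega
    have hc := evalB_eq_of_deg_zero h0 x (flipS x B₀)
    have hn := hneg B₀ hB₀
    rw [← hc] at hn
    rw [← hM] at hn
    linarith
  set u : Polynomial ℝ := ∑ A ∈ F.powerset,
    Polynomial.C (evalB (flipS x (A.biUnion id)) r) *
      (Polynomial.X ^ A.card * (1 - Polynomial.X) ^ (F.card - A.card)) with hu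
  -- bound on [0,1]
  have hubound : ∀ t ∈ Set.Icc (0:ℝ) 1, |u.eval t| ≤ M := by
    intro t ht
    have hueval : u.eval t = ∑ A ∈ F.powerset,
        evalB (flipS x (A.biUnion id)) r * (t ^ A.card * (1 - t) ^ (F.card - A.card)) := by
      rw [hu, Polynomial.eval_finset_sum]
      exact Finset.sum_congr rfl fun A _ => by simp
    rw [hueval]
    have habs : |∑ A ∈ F.powerset,
        evalB (flipS x (A.biUnion id)) r * (t ^ A.card * (1 - t) ^ (F.card - A.card))|
        ≤ ∑ A ∈ F.powerset, M * (t ^ A.card * (1 - t) ^ (F.card - A.card)) := by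
      refine le_trans (Finset.abs_sum_le_sum_abs _ _) (Finset.sum_le_sum fun A _ => ?_)
      rw [abs_mul]
      have h0 : (0:ℝ) ≤ t := ht.1
      have h1 : t ≤ 1 := ht.2
      have hw : (0:ℝ) ≤ t ^ A.card * (1 - t) ^ (F.card - A.card) :=
        mul_nonneg (pow_nonneg h0 _) (pow_nonneg (by linarith) _)
      rw [abs_of_nonneg hw]
      exact mul_le_mul_of_nonneg_right (hmax _) hw
    rw [← Finset.mul_sum, weight_sum, mul_one] at habs
    exact habs
  -- degree bound
  have hudeg : u.natDegree ≤ r.totalDegree := by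
    rw [hu, u_eq_v hrml x F hdisj]
    exact v_natDegree_le x F hdisj
  -- coefficient of X^1
  have hcoeff : u.coeff 1 = (∑ B ∈ F, evalB (flipS x B) r) - F.card * M := by
    rw [hu, Polynomial.finset_sum_coeff]
    have hterm : ∀ A ∈ F.powerset,
        (Polynomial.C (evalB (flipS x (A.biUnion id)) r) *
          (Polynomial.X ^ A.card * (1 - Polynomial.X) ^ (F.card - A.card))).coeff 1
        = evalB (flipS x (A.biUnion id)) r *
            (if A.card = 0 then -((F.card - A.card : ℕ) : ℝ) else if A.card = 1 then 1 else 0) := by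
      intro A _
      rw [Polynomial.coeff_C_mul, coeff_one_eq_deriv, deriv_term_eval_zero]
    rw [Finset.sum_congr rfl hterm]
    rw [← Finset.sum_filter_add_sum_filter_not F.powerset (fun A => A.card = 0)]
    have hf0 : F.powerset.filter (fun A => A.card = 0) = {∅} := by
      ext A
      simp only [Finset.mem_filter, Finset.mem_powerset, Finset.mem_singleton,
        Finset.card_eq_zero]
      exact ⟨fun h => h.2, fun h => ⟨h ▸ Finset.empty_subset F, h⟩⟩
    have h1 : ∑ A ∈ F.powerset.filter (fun A => A.card = 0),
        evalB (flipS x (A.biUnion id)) r *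
          (if A.card = 0 then -((F.card - A.card : ℕ) : ℝ) else if A.card = 1 then 1 else 0)
        = -(F.card * M) := by
      rw [hf0, Finset.sum_singleton]
      rw [show ((∅ : Finset (Finset (Fin n))).biUnion id) = ∅ by simp]
      rw [flipS_empty, ← hM]
      norm_num
      ring
    rw [h1]
    have h2 : ∑ A ∈ F.powerset.filter (fun A => ¬ A.card = 0),
        evalB (flipS x (A.biUnion id)) r *
          (if A.card = 0 then -((F.card - A.card : ℕ) : ℝ) else if A.card = 1 then 1 else 0)
        = ∑ B ∈ F, evalB (flipS x B) r := by
      rw [← Finset.sum_filter_add_sum_filter_not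
        (F.powerset.filter (fun A => ¬ A.card = 0)) (fun A => A.card = 1)]
      have hz : ∑ A ∈ (F.powerset.filter (fun A => ¬ A.card = 0)).filter
          (fun A => ¬ A.card = 1),
          evalB (flipS x (A.biUnion id)) r *
            (if A.card = 0 then -((F.card - A.card : ℕ) : ℝ) else if A.card = 1 then 1 else 0)
          = 0 := by
        refine Finset.sum_eq_zero fun A hA => ?_
        have h3 := Finset.mem_filter.mp hA
        have h4 := Finset.mem_filter.mp h3.1
        rw [if_neg h4.2, if_neg h3.2]
        ring
      rw [hz, add_zero]
      have hff : (F.powerset.filter (fun A => ¬ A.card = 0)).filter (fun A => A.card = 1)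
          = F.powerset.filter (fun A => A.card = 1) := by
        ext A
        simp only [Finset.mem_filter]
        constructor
        · rintro ⟨⟨h5, _⟩, h6⟩; exact ⟨h5, h6⟩
        · rintro ⟨h5, h6⟩; exact ⟨⟨h5, by omega⟩, h6⟩
      rw [hff]
      refine (Finset.sum_bij
        (fun (B : Finset (Fin n)) (_ : B ∈ F) => ({B} : Finset (Finset (Fin n))))
        ?_ ?_ ?_ ?_).symm
      · intro B hB
        refine Finset.mem_filter.mpr ⟨Finset.mem_powerset.mpr ?_, Finset.card_singleton B⟩
        exact Finset.singleton_subset_iff.mpr hB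
      · intro B hB B' hB' h
        exact Finset.singleton_injective h
      · intro A hA
        have h5 := Finset.mem_filter.mp hA
        obtain ⟨b, hb⟩ := Finset.card_eq_one.mp h5.2
        refine ⟨b, ?_, hb.symm⟩
        have h6 := Finset.mem_powerset.mp h5.1
        rw [hb] at h6
        exact h6 (Finset.mem_singleton_self b)
      · intro B hB
        rw [if_neg (by simp : ¬ ({B} : Finset (Finset (Fin n))).card = 0),
          if_pos (Finset.card_singleton B), Finset.singleton_biUnion]
        simp
    rw [h2]
    ring
  -- conclude via Markov
  have hneg' : u.coeff 1 < -(F.card * M) := by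
    rw [hcoeff]
    have hsumneg : ∑ B ∈ F, evalB (flipS x B) r < 0 :=
      Finset.sum_neg hneg ⟨B₀, hB₀⟩
    linarith
  have habs : (F.card : ℝ) * M < |u.coeff 1| := by
    have h1 : 0 ≤ (F.card : ℝ) * M := by positivity
    rw [abs_of_neg (by linarith : u.coeff 1 < 0)]
    linarith
  have hmar := markov01' hs1 u hudeg hubound
  have hfin : (F.card : ℝ) * M < 2 * (r.totalDegree : ℝ)^2 * M := lt_of_lt_of_le habs hmar
  have : (F.card : ℝ) < 2 * (r.totalDegree : ℝ)^2 := by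
    by_contra hcon
    push_neg at hcon
    nlinarith
  exact_mod_cast this

end Stmt8

namespace Stmt8

variable {n : ℕ}

lemma bool_eq_not {a b : Bool} (h : a ≠ b) : a = !b := by
  cases a <;> cases b <;> simp_all

lemma exists_sign_rep (f : (Fin n → Bool) → Bool) :
    ∃ r : MvPolynomial (Fin n) ℝ, Multilinear r ∧ (∀ x, evalB x r ≠ 0) ∧
      (∀ x, evalB x r < 0 ↔ f x = true) ∧ r.totalDegree = sdeg f := by
  classical
  set δ : (Fin n → Bool) → MvPolynomial (Fin n) ℝ := fun a =>
    ∏ i, (if a i then (MvPolynomial.X i : MvPolynomial (Fin n) ℝ) else 1 - MvPolynomial.X i)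
    with hδ
  have hδeval : ∀ (x a : Fin n → Bool), evalB x (δ a) = if x = a then 1 else 0 := by
    intro x a
    rw [hδ, evalB, MvPolynomial.eval_prod]
    have hfac : ∀ i : Fin n,
        MvPolynomial.eval (fun i => if x i then (1:ℝ) else 0)
          (if a i then (MvPolynomial.X i : MvPolynomial (Fin n) ℝ) else 1 - MvPolynomial.X i)
        = if x i = a i then 1 else 0 := by
      intro i
      by_cases hai : a i
      · rw [if_pos hai, MvPolynomial.eval_X]
        cases hxi : x i <;> simp [hxi, hai]
      · rw [if_neg hai]
        simp only [map_sub, map_one, MvPolynomial.eval_X]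
        cases hxi : x i <;> simp [hxi, hai]
    rw [Finset.prod_congr rfl fun i _ => hfac i]
    by_cases hxa : x = a
    · rw [if_pos hxa]
      exact Finset.prod_eq_one fun i _ => by rw [if_pos (congrFun hxa i)]
    · rw [if_neg hxa]
      obtain ⟨i, hi⟩ := Function.ne_iff.mp hxa
      exact Finset.prod_eq_zero (Finset.mem_univ i) (if_neg hi)
  have hδml : ∀ a, Multilinear (δ a) := by
    intro a j
    rw [hδ]
    refine le_trans (MvPolynomial.degreeOf_prod_le j Finset.univ _) ?_
    have hterm : ∀ i : Fin n,
        MvPolynomial.degreeOf j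
          (if a i then (MvPolynomial.X i : MvPolynomial (Fin n) ℝ) else 1 - MvPolynomial.X i)
        ≤ if j = i then 1 else 0 := by
      intro i
      by_cases hai : a i
      · rw [if_pos hai, MvPolynomial.degreeOf_X]
      · rw [if_neg hai]
        refine le_trans (MvPolynomial.degreeOf_sub_le j 1 (MvPolynomial.X i)) ?_
        have h1 : MvPolynomial.degreeOf j (1 : MvPolynomial (Fin n) ℝ) = 0 := by
          rw [← MvPolynomial.C_1]
          exact MvPolynomial.degreeOf_C 1 j
        rw [h1, MvPolynomial.degreeOf_X]
        simp
    refine le_trans (Finset.sum_le_sum fun i _ => hterm i) ?_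
    rw [Finset.sum_ite_eq Finset.univ j (fun _ => 1)]
    simp
  set r0 : MvPolynomial (Fin n) ℝ :=
    MvPolynomial.C (1/2) - ∑ a ∈ Finset.univ.filter (fun a => f a = true), δ a with hr0def
  have hr0eval : ∀ x, evalB x r0 = 1/2 - (if f x = true then 1 else 0) := by
    intro x
    rw [hr0def, evalB, map_sub, MvPolynomial.eval_C, map_sum]
    congr 1
    have : ∀ a ∈ Finset.univ.filter (fun a => f a = true),
        MvPolynomial.eval (fun i => if x i then (1:ℝ) else 0) (δ a)
          = if x = a then 1 else 0 := fun a _ => hδeval x a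
    rw [Finset.sum_congr rfl this]
    by_cases hfx : f x = true
    · rw [if_pos hfx]
      rw [Finset.sum_eq_single_of_mem x
        (Finset.mem_filter.mpr ⟨Finset.mem_univ x, hfx⟩)
        (fun a _ hne => if_neg (fun h : x = a => hne h.symm))]
      exact if_pos rfl
    · rw [if_neg hfx]
      refine Finset.sum_eq_zero fun a ha => ?_
      refine if_neg fun h => hfx ?_
      rw [h]
      exact (Finset.mem_filter.mp ha).2
  have hr0ml : Multilinear r0 := by
    intro j
    rw [hr0def]
    refine le_trans (MvPolynomial.degreeOf_sub_le j _ _) ?_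
    rw [max_le_iff]
    constructor
    · rw [MvPolynomial.degreeOf_C]
      omega
    · refine le_trans (MvPolynomial.degreeOf_sum_le j _ _) ?_
      exact Finset.sup_le fun a _ => hδml a j
  have hr0ne : ∀ x, evalB x r0 ≠ 0 := by
    intro x
    rw [hr0eval]
    by_cases hfx : f x = true <;> simp [hfx] <;> norm_num
  have hr0sign : ∀ x, evalB x r0 < 0 ↔ f x = true := by
    intro x
    rw [hr0eval]
    by_cases hfx : f x = true <;> simp [hfx] <;> norm_num
  have hset : {d | ∃ p : MvPolynomial (Fin n) ℝ, Multilinear p ∧ (∀ x, evalB x p ≠ 0) ∧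
      (∀ x, evalB x p < 0 ↔ f x = true) ∧ p.totalDegree = d}.Nonempty :=
    ⟨r0.totalDegree, r0, hr0ml, hr0ne, hr0sign, rfl⟩
  have hmem := Nat.sInf_mem hset
  obtain ⟨r, h1, h2, h3, h4⟩ := hmem
  exact ⟨r, h1, h2, h3, h4⟩

end Stmt8

namespace Stmt8

variable {n : ℕ}

lemma aux {f : (Fin n → Bool) → Bool} {p r : MvPolynomial (Fin n) ℝ}
    (hpml : Multilinear p) (hrml : Multilinear r)
    (hp : ∀ x, evalB x p ≠ 0 ↔ f x = true)
    (hr0 : ∀ x, evalB x r ≠ 0)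
    (hrs : ∀ x, evalB x r < 0 ↔ f x = true)
    (x : Fin n → Bool) (hmax : ∀ y, |evalB y r| ≤ evalB x r) :
    ∃ H : Finset (Fin n), IsHittingSet p H ∧
      H.card ≤ 2 * p.totalDegree * r.totalDegree ^ 2 := by
  classical
  have hMpos : 0 < evalB x r := by
    have h1 := hmax x
    have h2 := le_abs_self (evalB x r)
    have h3 := abs_nonneg (evalB x r)
    rcases lt_trichotomy (evalB x r) 0 with h | h | h
    · linarith [abs_of_neg h]
    · exact absurd h (hr0 x)
    · exact h
  have hfx : f x = false := by
    cases hb : f x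
    · rfl
    · exact absurd ((hrs x).mpr hb) (not_lt.mpr (le_of_lt hMpos))
  set Valid : Finset (Finset (Fin n)) → Prop := fun F =>
    (∀ B ∈ F, f (flipS x B) = true ∧ ∀ S ⊆ B, S ≠ B → f (flipS x S) = false)
      ∧ (F : Set (Finset (Fin n))).Pairwise Disjoint with hValid
  have hne : (Finset.univ.filter Valid).Nonempty := by
    refine ⟨∅, Finset.mem_filter.mpr ⟨Finset.mem_univ _, ?_, ?_⟩⟩
    · intro B hB
      exact absurd hB (Finset.notMem_empty B)
    · simp
  obtain ⟨F, hFmem, hFmax⟩ := Finset.exists_max_image (Finset.univ.filter Valid)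
    Finset.card hne
  have hFvalid : Valid F := (Finset.mem_filter.mp hFmem).2
  set H := F.biUnion id with hH
  have hDH' : ∀ B ∈ F, B ⊆ H := fun B hB => Finset.subset_biUnion_of_mem id hB
  have hcert : ∀ y, (∀ i ∈ H, y i = x i) → f y = false := by
    intro y hy
    cases hfy : f y
    · rfl
    exfalso
    set D := Finset.univ.filter (fun i => y i ≠ x i) with hD
    have hyD : y = flipS x D := by
      funext i
      by_cases hi : y i = x i
      · have hiD : i ∉ D := by
          rw [hD]
          simp [hi]
        simp [flipS, hiD, hi]
      · have hiD : i ∈ D := by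
          rw [hD]
          simp [hi]
        simp only [flipS, if_pos hiD]
        exact bool_eq_not hi
    have hDHdisj : ∀ i ∈ D, i ∉ H := fun i hiD hiH =>
      (Finset.mem_filter.mp hiD).2 (hy i hiH)
    set 𝒮 := D.powerset.filter (fun S => f (flipS x S) = true) with h𝒮
    have h𝒮ne : 𝒮.Nonempty := by
      refine ⟨D, Finset.mem_filter.mpr ⟨Finset.mem_powerset_self D, ?_⟩⟩
      rw [← hyD]
      exact hfy
    obtain ⟨S₀, hS₀mem, hS₀min⟩ := Finset.exists_min_image 𝒮 Finset.card h𝒮ne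
    have hS₀D : S₀ ⊆ D := Finset.mem_powerset.mp (Finset.mem_filter.mp hS₀mem).1
    have hS₀sens : f (flipS x S₀) = true := (Finset.mem_filter.mp hS₀mem).2
    have hS₀minimal : ∀ S ⊆ S₀, S ≠ S₀ → f (flipS x S) = false := by
      intro S hS hne'
      cases hfS : f (flipS x S)
      · rfl
      exfalso
      have hSmem : S ∈ 𝒮 := Finset.mem_filter.mpr
        ⟨Finset.mem_powerset.mpr (hS.trans hS₀D), hfS⟩
      have hlt : S.card < S₀.card := Finset.card_lt_card (ssubset_of_subset_of_ne hS hne')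
      exact absurd (hS₀min S hSmem) (by omega)
    have hS₀ne : S₀ ≠ ∅ := by
      intro h
      rw [h, flipS_empty, hfx] at hS₀sens
      exact Bool.noConfusion hS₀sens
    have hS₀disj : ∀ B ∈ F, Disjoint S₀ B := by
      intro B hB
      refine Finset.disjoint_left.mpr fun i hiS hiB => ?_
      exact hDHdisj i (hS₀D hiS) (hDH' B hB hiB)
    have hS₀F : S₀ ∉ F := by
      intro hmem
      obtain ⟨i, hi⟩ := Finset.nonempty_iff_ne_empty.mpr hS₀ne
      exact hDHdisj i (hS₀D hi) (hDH' S₀ hmem hi)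
    have hvalid' : Valid (insert S₀ F) := by
      constructor
      · intro B hB
        rcases Finset.mem_insert.mp hB with h | h
        · subst h
          exact ⟨hS₀sens, hS₀minimal⟩
        · exact hFvalid.1 B h
      · rw [Finset.coe_insert]
        rw [Set.pairwise_insert_of_symm]
        exact ⟨hFvalid.2, fun B hB _ => hS₀disj B hB⟩
    have hc := hFmax (insert S₀ F)
      (Finset.mem_filter.mpr ⟨Finset.mem_univ _, hvalid'⟩)
    rw [Finset.card_insert_of_notMem hS₀F] at hc
    omega
  have hhit : IsHittingSet p H := hitting_of_cert hpml hp x hcert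
  have hsize : H.card ≤ F.card * p.totalDegree := by
    calc H.card ≤ ∑ B ∈ F, (id B).card := Finset.card_biUnion_le
    _ ≤ ∑ _B ∈ F, p.totalDegree := by
        refine Finset.sum_le_sum fun B hB => ?_
        refine block_card_le_totalDegree hpml x ?_ ?_
        · exact (hp _).mpr (hFvalid.1 B hB).1
        · intro S hS hne'
          have hfS := (hFvalid.1 B hB).2 S hS hne'
          by_contra hne''
          have := (hp _).mp hne''
          rw [hfS] at this
          exact Bool.noConfusion this
    _ = F.card * p.totalDegree := by rw [Finset.sum_const, smul_eq_mul]
  rcases Nat.eq_zero_or_pos F.card with h0 | h1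
  · refine ⟨H, hhit, ?_⟩
    rw [h0, zero_mul] at hsize
    omega
  · have hcount := key_count hrml x F hFvalid.2 hmax
      (fun B hB => (hrs _).mpr (hFvalid.1 B hB).1) h1
    refine ⟨H, hhit, ?_⟩
    calc H.card ≤ F.card * p.totalDegree := hsize
    _ ≤ (2 * r.totalDegree ^ 2) * p.totalDegree :=
        Nat.mul_le_mul_right _ (le_of_lt hcount)
    _ = 2 * p.totalDegree * r.totalDegree ^ 2 := by ring

end Stmt8


/-- Let f be a nonconstant Boolean function, p a nondeterministic representation of f, and
q a nondeterministic representation of ¬f. Then either p has a hitting set of size at most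
2·deg(p)·sdeg(f)^2, or q has a hitting set of size at most 2·deg(q)·sdeg(f)^2. -/
theorem stmt_8 (n : ℕ) (f : (Fin n → Bool) → Bool)
    (hf : ∃ x y : Fin n → Bool, f x ≠ f y)
    (p q : MvPolynomial (Fin n) ℝ) (hpml : Multilinear p) (hqml : Multilinear q)
    (hp : ∀ x, evalB x p ≠ 0 ↔ f x = true)
    (hq : ∀ x, evalB x q ≠ 0 ↔ (!(f x)) = true) :
    (∃ H : Finset (Fin n), IsHittingSet p H ∧ H.card ≤ 2 * p.totalDegree * sdeg f ^ 2) ∨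
    (∃ K : Finset (Fin n), IsHittingSet q K ∧ K.card ≤ 2 * q.totalDegree * sdeg f ^ 2) := by
  classical
  obtain ⟨r, hrml, hr0, hrs, hrdeg⟩ := Stmt8.exists_sign_rep f
  obtain ⟨x, hx⟩ := Finite.exists_max (fun y : Fin n → Bool => |evalB y r|)
  have hqreval : ∀ z : Fin n → Bool, evalB z (-r) = - evalB z r := by
    intro z
    unfold evalB
    exact map_neg _ _
  rcases lt_trichotomy (evalB x r) 0 with hneg | hzero | hpos
  · right
    have hrml' : Multilinear (-r) := fun i => by
      rw [MvPolynomial.degreeOf_neg]; exact hrml i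
    have hr0' : ∀ z, evalB z (-r) ≠ 0 := fun z => by
      rw [hqreval]; exact neg_ne_zero.mpr (hr0 z)
    have hrs' : ∀ z, evalB z (-r) < 0 ↔ (!(f z)) = true := by
      intro z
      rw [hqreval, neg_lt_zero]
      rcases lt_trichotomy (evalB z r) 0 with h | h | h
      · constructor
        · intro h2; linarith
        · intro h2
          have h3 := (hrs z).mp h
          rw [h3] at h2
          simp at h2
      · exact absurd h (hr0 z)
      · constructor
        · intro _
          have hfz : f z = false := by
            cases hb : f z
            · rfl
            · exact absurd ((hrs z).mpr hb) (not_lt.mpr (le_of_lt h))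
          rw [hfz]
          rfl
        · intro _; exact h
    have hmax' : ∀ y, |evalB y (-r)| ≤ evalB x (-r) := by
      intro y
      rw [hqreval, hqreval, abs_neg]
      calc |evalB y r| ≤ |evalB x r| := hx y
      _ = -(evalB x r) := abs_of_neg hneg
    obtain ⟨K, hK1, hK2⟩ := Stmt8.aux hqml hrml' hq hr0' hrs' x hmax'
    refine ⟨K, hK1, ?_⟩
    rwa [MvPolynomial.totalDegree_neg, hrdeg] at hK2
  · exact absurd hzero (hr0 x)
  · left
    have hmax' : ∀ y, |evalB y r| ≤ evalB x r := by
      intro y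
      calc |evalB y r| ≤ |evalB x r| := hx y
      _ = evalB x r := abs_of_pos hpos
    obtain ⟨H, hH1, hH2⟩ := Stmt8.aux hpml hrml hp hr0 hrs x hmax'
    refine ⟨H, hH1, ?_⟩
    rwa [hrdeg] at hH2
end

section
/- For every real polynomial p in n variables, there exists a univariate real polynomial P with deg(P) ≤ deg(p) such that for all i ∈ {0,1,...,n}, binom(n,i)·P(i) = Σ_{x∈{0,1}^n, |x|=i} p(x). -/
open MvPolynomial

/-- The Hamming weight of a Boolean string. -/
def wt {n : ℕ} (x : Fin n → Bool) : ℕ := (Finset.univ.filter fun i => x i = true).card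

-- counting lemma
lemma count_superset (n i : ℕ) (S : Finset (Fin n)) (hsi : S.card ≤ i) :
    (Finset.univ.filter fun x : Fin n → Bool => wt x = i ∧ ∀ j ∈ S, x j = true).card
      = (n - S.card).choose (i - S.card) := by
  have : (n - S.card).choose (i - S.card)
      = (Finset.powersetCard (i - S.card) Sᶜ).card := by
    rw [Finset.card_powersetCard, Finset.card_compl, Fintype.card_fin]
  rw [this]
  apply Finset.card_bij' (fun x _ => (Finset.univ.filter fun j => x j = true) \ S)
    (fun T _ => fun j => decide (j ∈ S ∪ T))
  · intro x hx
    simp only [Finset.mem_filter, Finset.mem_univ, true_and] at hx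
    obtain ⟨hw, hS⟩ := hx
    simp only [Finset.mem_powersetCard]
    constructor
    · intro j hj
      simp only [Finset.mem_sdiff] at hj
      simpa using hj.2
    · rw [Finset.card_sdiff_of_subset (fun j hj => by simp [hS j hj])]
      rw [← wt, hw]
  · intro T hT
    simp only [Finset.mem_powersetCard] at hT
    simp only [Finset.mem_filter, Finset.mem_univ, true_and]
    constructor
    · have hdisj : Disjoint S T := by
        rw [Finset.disjoint_right]
        intro a haT haS
        have := hT.1 haT
        simp [haS] at this
      have : (Finset.univ.filter fun j => decide (j ∈ S ∪ T) = true) = S ∪ T := by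
        ext j; simp
      rw [wt, this, Finset.card_union_of_disjoint hdisj, hT.2]
      omega
    · intro j hj; simp [hj]
  · intro x hx
    simp only [Finset.mem_filter, Finset.mem_univ, true_and] at hx
    funext j
    by_cases h : x j = true
    · simp [h]
    · have h' : x j = false := by simpa using h
      have : j ∉ S := fun hj => h (hx.2 j hj)
      simp [h', this]
  · intro T hT
    simp only [Finset.mem_powersetCard] at hT
    have hdisj : Disjoint S T := by
      rw [Finset.disjoint_right]
      intro a haT haS
      have := hT.1 haT
      simp [haS] at this
    have : (Finset.univ.filter fun j => decide (j ∈ S ∪ T) = true) = S ∪ T := by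
      ext j; simp
    rw [this, Finset.union_sdiff_cancel_left hdisj]

lemma count_superset_lt (n i : ℕ) (S : Finset (Fin n)) (hsi : i < S.card) :
    (Finset.univ.filter fun x : Fin n → Bool => wt x = i ∧ ∀ j ∈ S, x j = true) = ∅ := by
  rw [Finset.filter_eq_empty_iff]
  rintro x - ⟨hw, hS⟩
  have : S ⊆ Finset.univ.filter fun j => x j = true := fun j hj => by simp [hS j hj]
  have := Finset.card_le_card this
  rw [← wt, hw] at this
  omega

lemma evalB_monomial {n : ℕ} (x : Fin n → Bool) (m : Fin n →₀ ℕ) (c : ℝ) :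
    evalB x (monomial m c) = if ∀ j ∈ m.support, x j = true then c else 0 := by
  rw [evalB, eval_monomial]
  by_cases h : ∀ j ∈ m.support, x j = true
  · rw [if_pos h]
    have : (m.prod fun i e => (if x i then (1:ℝ) else 0) ^ e) = 1 := by
      rw [Finsupp.prod]
      apply Finset.prod_eq_one
      intro j hj
      rw [if_pos (h j hj), one_pow]
    rw [this, mul_one]
  · rw [if_neg h]
    push_neg at h
    obtain ⟨j, hj, hxj⟩ := h
    have hxj' : x j = false := by simpa using hxj
    rw [Finsupp.prod]
    rw [Finset.prod_eq_zero hj]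
    · ring
    · rw [hxj']
      simp [Finsupp.mem_support_iff.mp hj]

/-- Minsky–Papert symmetrization: for every real polynomial p in n variables there is a
univariate real polynomial P with deg(P) ≤ deg(p) such that for all 0 ≤ i ≤ n,
binom(n,i)·P(i) = Σ_{x ∈ {0,1}^n, |x| = i} p(x). -/
theorem stmt_11 (n : ℕ) (p : MvPolynomial (Fin n) ℝ) :
    ∃ P : Polynomial ℝ, P.natDegree ≤ p.totalDegree ∧
      ∀ i : ℕ, i ≤ n →
        (n.choose i : ℝ) * P.eval (i : ℝ) =
          ∑ x ∈ Finset.univ.filter (fun x : Fin n → Bool => wt x = i), evalB x p := by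
  classical
  set Pm : (Fin n →₀ ℕ) → Polynomial ℝ := fun m =>
    Polynomial.C ((((m.support.card).factorial : ℝ) * (n.choose m.support.card : ℝ))⁻¹ * p.coeff m) *
      descPochhammer ℝ m.support.card with hPm
  refine ⟨∑ m ∈ p.support, Pm m, ?_, ?_⟩
  · apply Polynomial.natDegree_sum_le_of_forall_le
    intro m hm
    calc (Pm m).natDegree ≤ (descPochhammer ℝ m.support.card).natDegree :=
          Polynomial.natDegree_C_mul_le _ _
      _ = m.support.card := descPochhammer_natDegree ℝ _
      _ ≤ m.sum fun _ e => e := by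
          rw [Finsupp.sum]
          calc m.support.card = ∑ j ∈ m.support, 1 := by rw [Finset.card_eq_sum_ones]
            _ ≤ ∑ j ∈ m.support, m j := by
                apply Finset.sum_le_sum
                intro j hj
                exact Nat.one_le_iff_ne_zero.mpr (Finsupp.mem_support_iff.mp hj)
      _ ≤ p.totalDegree := le_totalDegree hm
  · intro i hi
    -- rewrite RHS
    have hrhs : ∀ x : Fin n → Bool, evalB x p =
        ∑ m ∈ p.support, evalB x (monomial m (p.coeff m)) := by
      intro x
      conv_lhs => rw [← p.support_sum_monomial_coeff]
      rw [evalB, map_sum]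
      rfl
    rw [Finset.sum_congr rfl fun x _ => hrhs x, Finset.sum_comm]
    rw [Polynomial.eval_finset_sum, Finset.mul_sum]
    apply Finset.sum_congr rfl
    intro m hm
    set s := m.support.card with hs
    have hsn : s ≤ n := by
      calc s ≤ Finset.univ.card := Finset.card_le_card (Finset.subset_univ _)
        _ = n := Finset.card_univ.trans (Fintype.card_fin n)
    -- RHS of the per-monomial identity
    have hsum : ∑ x ∈ Finset.univ.filter (fun x : Fin n → Bool => wt x = i),
        evalB x (monomial m (p.coeff m))
        = (if s ≤ i then ((n - s).choose (i - s) : ℝ) else 0) * p.coeff m := by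
      rw [Finset.sum_congr rfl fun x _ => evalB_monomial x m (p.coeff m)]
      rw [Finset.sum_ite, Finset.sum_const, Finset.sum_const, smul_zero, add_zero]
      rw [Finset.filter_filter]
      by_cases h : s ≤ i
      · rw [if_pos h, count_superset n i m.support h, nsmul_eq_mul]
      · rw [if_neg h, count_superset_lt n i m.support (by omega), Finset.card_empty,
          zero_smul, zero_mul]
    rw [hsum]
    -- LHS
    rw [hPm]
    simp only [Polynomial.eval_mul, Polynomial.eval_C]
    rw [descPochhammer_eval_eq_descFactorial]
    simp only [← hs]
    have hcn : ((n.choose s : ℝ)) ≠ 0 := by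
      exact Nat.cast_ne_zero.mpr (Nat.choose_pos hsn).ne'
    have hfs : ((s.factorial : ℝ)) ≠ 0 := Nat.cast_ne_zero.mpr (Nat.factorial_ne_zero s)
    by_cases h : s ≤ i
    · rw [if_pos h]
      have key : (n.choose i) * (i.descFactorial s) = (s.factorial * n.choose s) * ((n - s).choose (i - s)) := by
        rw [Nat.descFactorial_eq_factorial_mul_choose]
        calc n.choose i * (s.factorial * i.choose s) = (n.choose i * i.choose s) * s.factorial := by ring
          _ = (n.choose s * (n - s).choose (i - s)) * s.factorial := by rw [Nat.choose_mul h]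
          _ = s.factorial * n.choose s * ((n - s).choose (i - s)) := by ring
      have key' : (n.choose i : ℝ) * (i.descFactorial s : ℝ)
          = ((s.factorial : ℝ) * (n.choose s : ℝ)) * ((n - s).choose (i - s) : ℝ) := by
        exact_mod_cast congrArg (Nat.cast : ℕ → ℝ) key
      field_simp
      linear_combination coeff m p * key'
    · rw [if_neg h]
      have : i.descFactorial s = 0 := Nat.descFactorial_eq_zero_iff_lt.mpr (by omega)
      rw [this]
      simp
end

section
/- Let p be a nonzero multilinear real polynomial in n variables. Then the number of points x ∈ {0,1}^n with p(x) ≠ 0 is at least 2^{n − deg(p)}; equivalently, for x chosen uniformly at random from {0,1}^n, Pr[p(x) ≠ 0] ≥ 2^{−deg(p)}. -/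
open MvPolynomial

open scoped Classical in
/-- Schwartz-type lemma: a nonzero multilinear real polynomial in n variables is nonzero on
at least 2^{n - deg(p)} points of the cube (so Pr[p(x) ≠ 0] ≥ 2^{-deg(p)}). -/
theorem stmt_12 (n : ℕ) (p : MvPolynomial (Fin n) ℝ) (hml : Multilinear p) (hp : p ≠ 0) :
    2 ^ (n - p.totalDegree) ≤
      (Finset.univ.filter (fun x : Fin n → Bool => evalB x p ≠ 0)).card := by
  classical
  induction n with
  | zero =>
    rw [Nat.zero_sub, pow_zero]
    refine Finset.card_pos.mpr ⟨fun i => false, ?_⟩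
    simp only [Finset.mem_filter, Finset.mem_univ, true_and]
    rw [eq_C_of_isEmpty p] at hp ⊢
    simp only [evalB, eval_C]
    intro h
    exact hp (by rw [h, map_zero])
  | succ n ih =>
    set Pl := finSuccEquiv ℝ n p with hPl
    set q := Pl.coeff 1 with hq
    set r := Pl.coeff 0 with hr
    have hdeg1 : Pl.natDegree ≤ 1 := by
      rw [hPl, natDegree_finSuccEquiv]; exact hml 0
    have hPeq : Pl = Polynomial.C q * Polynomial.X + Polynomial.C r :=
      Polynomial.eq_X_add_C_of_natDegree_le_one hdeg1
    -- evaluation on slices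
    have hcons : ∀ (b : Bool) (x : Fin n → Bool),
        (fun i => if (Fin.cons b x : Fin (n+1) → Bool) i then (1:ℝ) else 0)
          = Fin.cons (if b then (1:ℝ) else 0) (fun i => if x i then (1:ℝ) else 0) := by
      intro b x; funext i
      refine Fin.cases ?_ ?_ i <;> simp
    have hev : ∀ (b : Bool) (x : Fin n → Bool),
        evalB (Fin.cons b x) p
          = (if b then (1:ℝ) else 0) * evalB x q + evalB x r := by
      intro b x
      rw [evalB, hcons, eval_eq_eval_mv_eval', ← hPl, hPeq]
      simp only [Polynomial.map_add, Polynomial.map_mul, Polynomial.map_C, Polynomial.map_X,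
        Polynomial.eval_add, Polynomial.eval_mul, Polynomial.eval_C, Polynomial.eval_X, evalB]
      ring
    have hev0 : ∀ x : Fin n → Bool, evalB (Fin.cons false x) p = evalB x r := by
      intro x; rw [hev]; simp
    have hev1 : ∀ x : Fin n → Bool, evalB (Fin.cons true x) p = evalB x (q + r) := by
      intro x; rw [hev]; simp [evalB]
    -- counting
    set F := Finset.univ.filter (fun x : Fin (n+1) → Bool => evalB x p ≠ 0) with hF
    set S0 := Finset.univ.filter (fun x : Fin n → Bool => evalB x r ≠ 0) with hS0
    set S1 := Finset.univ.filter (fun x : Fin n → Bool => evalB x (q + r) ≠ 0) with hS1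
    set A := S0.image (fun x : Fin n → Bool => (Fin.cons false x : Fin (n+1) → Bool)) with hA
    set B := S1.image (fun x : Fin n → Bool => (Fin.cons true x : Fin (n+1) → Bool)) with hB
    have hAcard : A.card = S0.card :=
      Finset.card_image_of_injective _ (Fin.cons_right_injective (α := fun _ : Fin (n+1) => Bool) _)
    have hBcard : B.card = S1.card :=
      Finset.card_image_of_injective _ (Fin.cons_right_injective (α := fun _ : Fin (n+1) => Bool) _)
    have hdisj : Disjoint A B := by
      rw [Finset.disjoint_left]
      rintro a ha hb
      simp only [hA, hB, Finset.mem_image] at ha hb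
      obtain ⟨x, -, rfl⟩ := ha
      obtain ⟨y, -, hy⟩ := hb
      have := congrFun hy 0
      simp at this
    have hsub : A ∪ B ⊆ F := by
      intro a ha
      simp only [hA, hB, hF, Finset.mem_union, Finset.mem_image, Finset.mem_filter,
        Finset.mem_univ, true_and] at ha ⊢
      rcases ha with ⟨x, hx, rfl⟩ | ⟨x, hx, rfl⟩
      · rw [hev0]
        simpa [hS0] using hx
      · rw [hev1]
        simpa [hS1] using hx
    have hcount : S0.card + S1.card ≤ F.card := by
      calc S0.card + S1.card = A.card + B.card := by rw [hAcard, hBcard]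
        _ = (A ∪ B).card := (Finset.card_union_of_disjoint hdisj).symm
        _ ≤ F.card := Finset.card_le_card hsub
    -- degree facts
    have hqd : q ≠ 0 → q.totalDegree + 1 ≤ p.totalDegree := fun h => by
      simpa using totalDegree_coeff_finSuccEquiv_add_le p 1 h
    have hrd : r ≠ 0 → r.totalDegree ≤ p.totalDegree := fun h => by
      simpa using totalDegree_coeff_finSuccEquiv_add_le p 0 h
    -- multilinearity
    have hmlq : Multilinear q := fun j =>
      le_trans (degreeOf_coeff_finSuccEquiv p j 1) (hml j.succ)
    have hmlr : Multilinear r := fun j =>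
      le_trans (degreeOf_coeff_finSuccEquiv p j 0) (hml j.succ)
    have hmlqr : Multilinear (q + r) := fun j =>
      le_trans (degreeOf_add_le j q r) (max_le (hmlq j) (hmlr j))
    -- nonzero
    have hne : q ≠ 0 ∨ r ≠ 0 := by
      by_contra h
      push_neg at h
      apply hp
      apply (finSuccEquiv ℝ n).injective
      rw [map_zero, ← hPl, hPeq, h.1, h.2]
      simp
    set d := p.totalDegree with hd
    by_cases hq0 : q = 0
    · have hr0 : r ≠ 0 := hne.resolve_left (not_not.mpr hq0)
      have h1 := ih r hmlr hr0
      have hS01 : S1 = S0 := by rw [hS1, hS0, hq0, zero_add]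
      have hle : 2 ^ (n + 1 - d) ≤ 2 ^ (n - r.totalDegree) + 2 ^ (n - r.totalDegree) := by
        rw [← two_mul, ← pow_succ']
        exact Nat.pow_le_pow_right (by norm_num) (by have := hrd hr0; omega)
      calc 2 ^ (n + 1 - d) ≤ 2 ^ (n - r.totalDegree) + 2 ^ (n - r.totalDegree) := hle
        _ ≤ S0.card + S1.card := by rw [hS01]; exact Nat.add_le_add h1 h1
        _ ≤ F.card := hcount
    · by_cases hqr : q + r = 0
      · have hrq : r = -q := by linear_combination hqr
        have hr0 : r ≠ 0 := by
          rw [hrq]; simpa using hq0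
        have h1 := ih r hmlr hr0
        have hrdeg : r.totalDegree + 1 ≤ d := by
          rw [hrq, totalDegree_neg]; exact hqd hq0
        calc 2 ^ (n + 1 - d) ≤ 2 ^ (n - r.totalDegree) :=
              Nat.pow_le_pow_right (by norm_num) (by omega)
          _ ≤ S0.card := h1
          _ ≤ S0.card + S1.card := Nat.le_add_right _ _
          _ ≤ F.card := hcount
      · by_cases hr0 : r = 0
        · have h1 := ih (q + r) hmlqr hqr
          have hqdeg : (q + r).totalDegree + 1 ≤ d := by
            rw [hr0, add_zero]; exact hqd hq0
          calc 2 ^ (n + 1 - d) ≤ 2 ^ (n - (q + r).totalDegree) :=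
                Nat.pow_le_pow_right (by norm_num) (by omega)
            _ ≤ S1.card := h1
            _ ≤ S0.card + S1.card := Nat.le_add_left _ _
            _ ≤ F.card := hcount
        · have h0 := ih r hmlr hr0
          have h1 := ih (q + r) hmlqr hqr
          have hrdeg : r.totalDegree ≤ d := hrd hr0
          have hqrdeg : (q + r).totalDegree ≤ d :=
            le_trans (totalDegree_add q r) (max_le (by have := hqd hq0; omega) hrdeg)
          have hle : 2 ^ (n + 1 - d) ≤ 2 ^ (n - d) + 2 ^ (n - d) := by
            rw [← two_mul, ← pow_succ']
            exact Nat.pow_le_pow_right (by norm_num) (by omega)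
          calc 2 ^ (n + 1 - d) ≤ 2 ^ (n - d) + 2 ^ (n - d) := hle
            _ ≤ 2 ^ (n - r.totalDegree) + 2 ^ (n - (q + r).totalDegree) :=
                Nat.add_le_add (Nat.pow_le_pow_right (by norm_num) (by omega))
                  (Nat.pow_le_pow_right (by norm_num) (by omega))
            _ ≤ S0.card + S1.card := Nat.add_le_add h0 h1
            _ ≤ F.card := hcount
end

section
/- Let n ≥ 1 and consider the real polynomials in 2n variables g1 = X_1 + ⋯ + X_n and g2 = X_1 + ⋯ + X_n + Y_1 + ⋯ + Y_n − (n+1). Then deg(g1) = deg(g2) = 1, g1 and g2 have no common zeros on {0,1}^{2n}, and for any real polynomials h1, h2 in 2n variables satisfying h1(x,y)·g1(x,y) + h2(x,y)·g2(x,y) = 1 for all (x,y) ∈ {0,1}^n × {0,1}^n, one has max(deg(ml(h1·g1)), deg(ml(h2·g2))) ≥ n, where ml(r) denotes the unique multilinear real polynomial agreeing with r on {0,1}^{2n}. -/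
set_option maxHeartbeats 1000000

open MvPolynomial

open Finset

namespace Stmt14


lemma evalB_eq_sum {σ : Type*} [DecidableEq σ] (z : σ → Bool) (p : MvPolynomial σ ℝ) :
    evalB z p = ∑ e ∈ p.support, p.coeff e * (if ∀ i ∈ e.support, z i = true then 1 else 0) := by
  rw [evalB, eval_eq]
  refine Finset.sum_congr rfl fun e he => ?_
  congr 1
  by_cases h : ∀ i ∈ e.support, z i = true
  · rw [if_pos h]
    exact Finset.prod_eq_one fun i hi => by rw [h i hi, if_pos rfl, one_pow]
  · rw [if_neg h]
    push_neg at h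
    obtain ⟨i, hi, hzi⟩ := h
    refine Finset.prod_eq_zero hi ?_
    rw [if_neg hzi]
    exact zero_pow (Finsupp.mem_support_iff.mp hi)

lemma evalB_mul {σ : Type*} (z : σ → Bool) (p q : MvPolynomial σ ℝ) :
    evalB z (p * q) = evalB z p * evalB z q := by
  simp [evalB]

variable {n : ℕ}

def KA (B : Finset (Fin n ⊕ Fin n)) : Finset (Fin n) := univ.filter fun a => Sum.inl a ∈ B
def LB (B : Finset (Fin n ⊕ Fin n)) : Finset (Fin n) := univ.filter fun b => Sum.inr b ∈ B

lemma card_KA_add_LB (B : Finset (Fin n ⊕ Fin n)) : (KA B).card + (LB B).card = B.card := by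
  classical
  have h1 : (KA B).card = (B.filter (fun i => i.isLeft)).card := by
    apply Finset.card_bij (fun a _ => Sum.inl a)
    · intro a ha
      simp only [KA, mem_filter, mem_univ, true_and] at ha
      simp [ha]
    · intro a _ b _ h
      exact Sum.inl.inj h
    · rintro (a | b) hi
      · exact ⟨a, by simp only [KA, mem_filter, mem_univ, true_and]; exact (mem_filter.mp hi).1, rfl⟩
      · exact absurd (mem_filter.mp hi).2 (by simp)
  have h2 : (LB B).card = (B.filter (fun i => ¬ i.isLeft)).card := by
    apply Finset.card_bij (fun b _ => Sum.inr b)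
    · intro b hb
      simp only [LB, mem_filter, mem_univ, true_and] at hb
      simp [hb]
    · intro a _ b _ h
      exact Sum.inr.inj h
    · rintro (a | b) hi
      · exact absurd (mem_filter.mp hi).2 (by simp)
      · exact ⟨b, by simp only [LB, mem_filter, mem_univ, true_and]; exact (mem_filter.mp hi).1, rfl⟩
  rw [h1, h2]
  exact Finset.card_filter_add_card_filter_not _

def pt (X Y : Finset (Fin n)) : (Fin n ⊕ Fin n) → Bool :=
  Sum.elim (fun a => decide (a ∈ X)) (fun b => decide (b ∈ Y))

lemma pt_cond_iff (X Y : Finset (Fin n)) (B : Finset (Fin n ⊕ Fin n)) :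
    (∀ i ∈ B, pt X Y i = true) ↔ (KA B ⊆ X ∧ LB B ⊆ Y) := by
  constructor
  · intro h
    constructor
    · intro a ha
      have := h (Sum.inl a) (by simpa [KA] using ha)
      simpa [pt] using this
    · intro b hb
      have := h (Sum.inr b) (by simpa [LB] using hb)
      simpa [pt] using this
  · rintro ⟨hA, hB⟩ i hi
    rcases i with a | b
    · simp only [pt, Sum.elim_inl, decide_eq_true_eq]
      exact hA (by simp [KA, hi])
    · simp only [pt, Sum.elim_inr, decide_eq_true_eq]
      exact hB (by simp [LB, hi])

lemma card_superset_mul (A : Finset (Fin n)) (s : ℕ) :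
    #((powersetCard s (univ : Finset (Fin n))).filter fun X => A ⊆ X) * n.choose A.card
      = n.choose s * s.choose A.card := by
  classical
  by_cases has : A.card ≤ s
  · by_cases hsn : s ≤ n
    · have hcount : #((powersetCard s (univ : Finset (Fin n))).filter fun X => A ⊆ X)
          = #(powersetCard (s - A.card) ((univ : Finset (Fin n)) \ A)) := by
        apply Finset.card_bij' (fun X _ => X \ A) (fun Z _ => Z ∪ A)
        · intro X hX
          rw [mem_filter, mem_powersetCard] at hX
          rw [mem_powersetCard]
          exact ⟨Finset.sdiff_subset_sdiff hX.1.1 le_rfl,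
            by rw [Finset.card_sdiff_of_subset hX.2, hX.1.2]⟩
        · intro Z hZ
          rw [mem_powersetCard] at hZ
          have hdisj : Disjoint Z A := Finset.disjoint_of_subset_left hZ.1 (Finset.sdiff_disjoint)
          rw [mem_filter, mem_powersetCard]
          refine ⟨⟨Finset.subset_univ _, ?_⟩, Finset.subset_union_right⟩
          rw [Finset.card_union_of_disjoint hdisj, hZ.2]
          omega
        · intro X hX
          rw [mem_filter] at hX
          exact Finset.sdiff_union_of_subset hX.2
        · intro Z hZ
          rw [mem_powersetCard] at hZ
          have hdisj : Disjoint Z A := Finset.disjoint_of_subset_left hZ.1 (Finset.sdiff_disjoint)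
          rw [Finset.union_sdiff_right]
          exact Finset.sdiff_eq_self_of_disjoint hdisj
      rw [hcount, card_powersetCard, Finset.card_sdiff_of_subset (Finset.subset_univ A), card_univ,
        Fintype.card_fin, Nat.choose_mul has, Nat.mul_comm]
    · push_neg at hsn
      have he : powersetCard s (univ : Finset (Fin n)) = ∅ := by
        rw [Finset.powersetCard_eq_empty, card_univ, Fintype.card_fin]; exact hsn
      rw [he, Finset.filter_empty, Finset.card_empty, Nat.choose_eq_zero_of_lt hsn]
      simp
  · push_neg at has
    have he : ((powersetCard s (univ : Finset (Fin n))).filter fun X => A ⊆ X) = ∅ := by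
      rw [Finset.filter_eq_empty_iff]
      intro X hX hAX
      rw [mem_powersetCard] at hX
      have := Finset.card_le_card hAX
      omega
    rw [he, Finset.card_empty, Nat.choose_eq_zero_of_lt has]
    simp



noncomputable def bp (k : ℕ) : Polynomial ℝ :=
  Polynomial.C ((k.factorial : ℝ)⁻¹) * ∏ j ∈ Finset.range k, (Polynomial.X - Polynomial.C (j:ℝ))

noncomputable def bq (n l : ℕ) : Polynomial ℝ :=
  Polynomial.C ((l.factorial : ℝ)⁻¹) *
    ∏ j ∈ Finset.range l, (Polynomial.C ((n:ℝ)+1) - Polynomial.X - Polynomial.C (j:ℝ))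

lemma prod_cast_desc (t k : ℕ) :
    ∏ j ∈ Finset.range k, ((t:ℝ) - (j:ℝ)) = (t.descFactorial k : ℝ) := by
  by_cases h : k ≤ t
  · rw [Nat.descFactorial_eq_prod_range, Nat.cast_prod]
    refine Finset.prod_congr rfl fun j hj => ?_
    have hj' : j ≤ t := le_trans (Nat.le_of_lt_succ (Nat.lt_succ_of_lt (Finset.mem_range.mp hj))) h
    rw [Nat.cast_sub hj']
  · push_neg at h
    rw [Nat.descFactorial_eq_zero_iff_lt.mpr h, Nat.cast_zero]
    apply Finset.prod_eq_zero (Finset.mem_range.mpr h)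
    simp

lemma bp_eval (k t : ℕ) : (bp k).eval (t:ℝ) = (t.choose k : ℝ) := by
  simp only [bp, Polynomial.eval_mul, Polynomial.eval_C, Polynomial.eval_prod,
    Polynomial.eval_sub, Polynomial.eval_X]
  rw [prod_cast_desc, Nat.descFactorial_eq_factorial_mul_choose]
  push_cast
  rw [← mul_assoc, inv_mul_cancel₀ (Nat.cast_ne_zero.mpr k.factorial_ne_zero), one_mul]

lemma bq_eval (n l t : ℕ) (ht : t ≤ n + 1) :
    (bq n l).eval (t:ℝ) = ((n + 1 - t).choose l : ℝ) := by
  have hcast : ((n:ℝ) + 1 - (t:ℝ)) = ((n + 1 - t : ℕ) : ℝ) := by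
    rw [Nat.cast_sub ht]; push_cast; ring
  simp only [bq, Polynomial.eval_mul, Polynomial.eval_C, Polynomial.eval_prod,
    Polynomial.eval_sub, Polynomial.eval_X]
  have hc : ∀ j ∈ Finset.range l, (n:ℝ) + 1 - (t:ℝ) - (j:ℝ) = ((n + 1 - t : ℕ):ℝ) - (j:ℝ) :=
    fun j _ => by rw [← hcast]
  rw [Finset.prod_congr rfl hc, prod_cast_desc, Nat.descFactorial_eq_factorial_mul_choose]
  push_cast
  rw [← mul_assoc, inv_mul_cancel₀ (Nat.cast_ne_zero.mpr l.factorial_ne_zero), one_mul]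

lemma natDegree_bp_le (k : ℕ) : (bp k).natDegree ≤ k := by
  refine (Polynomial.natDegree_mul_le).trans ?_
  simp only [Polynomial.natDegree_C, zero_add]
  refine (Polynomial.natDegree_prod_le _ _).trans ?_
  refine le_trans (Finset.sum_le_sum fun j _ => le_of_eq (Polynomial.natDegree_X_sub_C _)) ?_
  simp

lemma natDegree_bq_le (n l : ℕ) : (bq n l).natDegree ≤ l := by
  refine (Polynomial.natDegree_mul_le).trans ?_
  simp only [Polynomial.natDegree_C, zero_add]
  refine (Polynomial.natDegree_prod_le _ _).trans ?_
  have hf : ∀ j ∈ Finset.range l,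
      (Polynomial.C ((n:ℝ)+1) - Polynomial.X - Polynomial.C (j:ℝ)).natDegree ≤ 1 := by
    intro j _
    have hC : ∀ a : ℝ, (Polynomial.C a).natDegree ≤ 1 := fun a => by
      rw [Polynomial.natDegree_C]; exact Nat.zero_le _
    exact (Polynomial.natDegree_sub_le _ _).trans (max_le
      ((Polynomial.natDegree_sub_le _ _).trans
        (max_le (hC _) (le_of_eq Polynomial.natDegree_X))) (hC _))
  refine le_trans (Finset.sum_le_sum hf) ?_
  simp

lemma powersum (m : MvPolynomial (Fin n ⊕ Fin n) ℝ)
    (h0 : ∀ z : Fin n ⊕ Fin n → Bool, (∀ a : Fin n, z (Sum.inl a) = false) → evalB z m = 0)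
    (B : Finset (Fin n ⊕ Fin n)) (hall : ∀ i ∈ B, i.isRight = true) :
    ∑ B' ∈ B.powerset, (∑ e ∈ m.support.filter (fun e => e.support = B'), m.coeff e) = 0 := by
  classical
  have hz : evalB (fun i => decide (i ∈ B)) m = 0 := by
    apply h0
    intro a
    rw [decide_eq_false_iff_not]
    intro hmem
    exact absurd (hall _ hmem) (by simp)
  rw [evalB_eq_sum] at hz
  have hz2 : ∑ e ∈ m.support.filter (fun e => e.support ⊆ B), m.coeff e = 0 := by
    rw [← hz, Finset.sum_filter]
    refine Finset.sum_congr rfl fun e he => ?_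
    by_cases hsub : e.support ⊆ B
    · rw [if_pos hsub,
        if_pos (show ∀ i ∈ e.support, decide (i ∈ B) = true from fun i hi => decide_eq_true (hsub hi)),
        mul_one]
    · have hc : ¬(∀ i ∈ e.support, decide (i ∈ B) = true) :=
        fun hc => hsub fun i hi => of_decide_eq_true (hc i hi)
      rw [if_neg hsub, if_neg hc, mul_zero]
  calc ∑ B' ∈ B.powerset, (∑ e ∈ m.support.filter (fun e => e.support = B'), m.coeff e)
      = ∑ B' ∈ B.powerset,
          (∑ e ∈ (m.support.filter (fun e => e.support ⊆ B)).filter (fun e => e.support = B'),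
            m.coeff e) := by
        refine Finset.sum_congr rfl fun B' hB' => ?_
        congr 1
        ext e
        simp only [Finset.mem_filter]
        constructor
        · rintro ⟨he, hsupp⟩
          exact ⟨⟨he, hsupp ▸ (Finset.mem_powerset.mp hB')⟩, hsupp⟩
        · rintro ⟨⟨he, _⟩, hsupp⟩
          exact ⟨he, hsupp⟩
    _ = ∑ e ∈ m.support.filter (fun e => e.support ⊆ B), m.coeff e :=
        Finset.sum_fiberwise_of_maps_to
          (fun e he => Finset.mem_powerset.mpr ((Finset.mem_filter.mp he).2)) _
    _ = 0 := hz2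

lemma SS_zero (m : MvPolynomial (Fin n ⊕ Fin n) ℝ)
    (h0 : ∀ z : Fin n ⊕ Fin n → Bool, (∀ a : Fin n, z (Sum.inl a) = false) → evalB z m = 0)
    (B : Finset (Fin n ⊕ Fin n)) (hall : ∀ i ∈ B, i.isRight = true) :
    (∑ e ∈ m.support.filter (fun e => e.support = B), m.coeff e) = 0 := by
  classical
  have key : ∀ N : ℕ, ∀ B : Finset (Fin n ⊕ Fin n), B.card ≤ N → (∀ i ∈ B, i.isRight = true) →
      (∑ e ∈ m.support.filter (fun e => e.support = B), m.coeff e) = 0 := by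
    intro N
    induction N with
    | zero =>
      intro B hB hall'
      have hBe : B = ∅ := Finset.card_eq_zero.mp (Nat.le_zero.mp hB)
      subst hBe
      have h := powersum m h0 ∅ (by simp)
      simpa using h
    | succ N ih =>
      intro B hB hall'
      have hps := powersum m h0 B hall'
      rw [← Finset.add_sum_erase _ _ (Finset.mem_powerset_self B)] at hps
      have hrest : ∀ B' ∈ B.powerset.erase B,
          (∑ e ∈ m.support.filter (fun e => e.support = B'), m.coeff e) = 0 := by
        intro B' hB'
        have hB'B : B' ⊆ B := Finset.mem_powerset.mp (Finset.mem_of_mem_erase hB')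
        have hne : B' ≠ B := Finset.ne_of_mem_erase hB'
        have hcard : B'.card < B.card := Finset.card_lt_card (HasSubset.Subset.ssubset_of_ne hB'B hne)
        exact ih B' (by omega) (fun i hi => hall' i (hB'B hi))
      rw [Finset.sum_eq_zero hrest, add_zero] at hps
      exact hps
  exact key B.card B le_rfl hall

lemma slice_sum (m : MvPolynomial (Fin n ⊕ Fin n) ℝ)
    (hone : ∀ X Y : Finset (Fin n), X.card + Y.card = n + 1 → evalB (pt X Y) m = 1)
    (s : ℕ) (hs1 : 1 ≤ s) (hsn : s ≤ n) :
    ∑ e ∈ m.support, m.coeff e *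
        ((#((powersetCard s (univ : Finset (Fin n))).filter fun X => KA e.support ⊆ X) : ℝ) *
         (#((powersetCard (n+1-s) (univ : Finset (Fin n))).filter fun Y => LB e.support ⊆ Y) : ℝ))
      = (n.choose s : ℝ) * (n.choose (n+1-s) : ℝ) := by
  classical
  have lhs_eq : ∑ X ∈ powersetCard s (univ : Finset (Fin n)),
      ∑ Y ∈ powersetCard (n+1-s) (univ : Finset (Fin n)), evalB (pt X Y) m
      = (n.choose s : ℝ) * (n.choose (n+1-s) : ℝ) := by
    have hval : ∀ X ∈ powersetCard s (univ : Finset (Fin n)),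
        ∀ Y ∈ powersetCard (n+1-s) (univ : Finset (Fin n)), evalB (pt X Y) m = 1 := by
      intro X hX Y hY
      apply hone
      have h1' := (Finset.mem_powersetCard.mp hX).2
      have h2' := (Finset.mem_powersetCard.mp hY).2
      omega
    rw [Finset.sum_congr rfl fun X hX => Finset.sum_congr rfl fun Y hY => hval X hX Y hY]
    simp only [Finset.sum_const, nsmul_eq_mul, mul_one, card_powersetCard, card_univ,
      Fintype.card_fin]
  have rhs_eq : ∑ X ∈ powersetCard s (univ : Finset (Fin n)),
      ∑ Y ∈ powersetCard (n+1-s) (univ : Finset (Fin n)), evalB (pt X Y) m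
      = ∑ e ∈ m.support, m.coeff e *
        ((#((powersetCard s (univ : Finset (Fin n))).filter fun X => KA e.support ⊆ X) : ℝ) *
         (#((powersetCard (n+1-s) (univ : Finset (Fin n))).filter fun Y => LB e.support ⊆ Y) : ℝ)) := by
    rw [Finset.sum_congr rfl fun X _ => Finset.sum_congr rfl fun Y _ => evalB_eq_sum (pt X Y) m]
    rw [Finset.sum_congr rfl fun X _ => Finset.sum_comm, Finset.sum_comm]
    refine Finset.sum_congr rfl fun e _ => ?_
    rw [← Finset.sum_boole (fun X => KA e.support ⊆ X) (powersetCard s (univ : Finset (Fin n))),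
      ← Finset.sum_boole (fun Y => LB e.support ⊆ Y) (powersetCard (n+1-s) (univ : Finset (Fin n))),
      Finset.sum_mul_sum, Finset.mul_sum]
    refine Finset.sum_congr rfl fun X _ => ?_
    rw [Finset.mul_sum]
    refine Finset.sum_congr rfl fun Y _ => ?_
    congr 1
    by_cases hA : KA e.support ⊆ X <;> by_cases hB : LB e.support ⊆ Y
    · rw [if_pos ((pt_cond_iff X Y e.support).mpr ⟨hA, hB⟩), if_pos hA, if_pos hB, mul_one]
    · rw [if_neg (fun h => hB ((pt_cond_iff X Y e.support).mp h).2), if_neg hB, mul_zero]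
    · rw [if_neg (fun h => hA ((pt_cond_iff X Y e.support).mp h).1), if_neg hA, zero_mul]
    · rw [if_neg (fun h => hA ((pt_cond_iff X Y e.support).mp h).1), if_neg hA, zero_mul]
  rw [← rhs_eq, lhs_eq]


variable {n : ℕ}

lemma evalB_sum_inl (z : Fin n ⊕ Fin n → Bool) :
    evalB z (∑ i : Fin n, X (Sum.inl i) : MvPolynomial (Fin n ⊕ Fin n) ℝ)
      = #(univ.filter fun a : Fin n => z (Sum.inl a) = true) := by
  rw [evalB, map_sum]
  simp only [eval_X]
  rw [Finset.sum_boole]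

lemma evalB_sum_inr (z : Fin n ⊕ Fin n → Bool) :
    evalB z (∑ i : Fin n, X (Sum.inr i) : MvPolynomial (Fin n ⊕ Fin n) ℝ)
      = #(univ.filter fun b : Fin n => z (Sum.inr b) = true) := by
  rw [evalB, map_sum]
  simp only [eval_X]
  rw [Finset.sum_boole]

lemma filter_pt_inl (X Y : Finset (Fin n)) :
    (univ.filter fun a : Fin n => pt X Y (Sum.inl a) = true) = X := by
  ext a
  simp [pt]

lemma filter_pt_inr (X Y : Finset (Fin n)) :
    (univ.filter fun b : Fin n => pt X Y (Sum.inr b) = true) = Y := by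
  ext b
  simp [pt]

end Stmt14

open Stmt14

/-- Counterexample construction: with g₁ = X₁+⋯+Xₙ and g₂ = X₁+⋯+Xₙ+Y₁+⋯+Yₙ−(n+1)
(in 2n variables, indexed by Fin n ⊕ Fin n), both of degree 1 and with no common zeros
on {0,1}^{2n}, any h₁, h₂ with h₁g₁ + h₂g₂ = 1 on the cube must have
max(deg(ml(h₁g₁)), deg(ml(h₂g₂))) ≥ n. -/
theorem stmt_14 (n : ℕ) (hn : 1 ≤ n) (g₁ g₂ : MvPolynomial (Fin n ⊕ Fin n) ℝ)
    (hg₁ : g₁ = ∑ i : Fin n, MvPolynomial.X (Sum.inl i))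
    (hg₂ : g₂ = (∑ i : Fin n, MvPolynomial.X (Sum.inl i)) +
      (∑ i : Fin n, MvPolynomial.X (Sum.inr i)) - MvPolynomial.C ((n : ℝ) + 1)) :
    g₁.totalDegree = 1 ∧ g₂.totalDegree = 1 ∧
    (∀ z : Fin n ⊕ Fin n → Bool, evalB z g₁ ≠ 0 ∨ evalB z g₂ ≠ 0) ∧
    ∀ h₁ h₂ : MvPolynomial (Fin n ⊕ Fin n) ℝ,
      (∀ z : Fin n ⊕ Fin n → Bool, evalB z h₁ * evalB z g₁ + evalB z h₂ * evalB z g₂ = 1) →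
      ∀ m₁ m₂ : MvPolynomial (Fin n ⊕ Fin n) ℝ, Multilinear m₁ → Multilinear m₂ →
        (∀ z : Fin n ⊕ Fin n → Bool, evalB z m₁ = evalB z (h₁ * g₁)) →
        (∀ z : Fin n ⊕ Fin n → Bool, evalB z m₂ = evalB z (h₂ * g₂)) →
        n ≤ max m₁.totalDegree m₂.totalDegree := by
  classical
  subst hg₁ hg₂
  set G1 : MvPolynomial (Fin n ⊕ Fin n) ℝ := ∑ i : Fin n, MvPolynomial.X (Sum.inl i) with hG1
  set G2 : MvPolynomial (Fin n ⊕ Fin n) ℝ := (∑ i : Fin n, MvPolynomial.X (Sum.inl i)) +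
      (∑ i : Fin n, MvPolynomial.X (Sum.inr i)) - MvPolynomial.C ((n : ℝ) + 1) with hG2
  -- evaluation formulas
  have hEg1 : ∀ z : Fin n ⊕ Fin n → Bool,
      evalB z G1 = #(univ.filter fun a : Fin n => z (Sum.inl a) = true) := fun z => evalB_sum_inl z
  have hEg2 : ∀ z : Fin n ⊕ Fin n → Bool,
      evalB z G2 = (#(univ.filter fun a : Fin n => z (Sum.inl a) = true) : ℝ)
        + #(univ.filter fun b : Fin n => z (Sum.inr b) = true) - ((n : ℝ) + 1) := by
    intro z
    rw [hG2, evalB, map_sub, map_add]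
    have hC : MvPolynomial.eval (fun i => if z i then (1:ℝ) else 0) (MvPolynomial.C ((n : ℝ) + 1))
        = (n : ℝ) + 1 := MvPolynomial.eval_C _
    rw [hC]
    have h1 := evalB_sum_inl (n := n) z
    have h2 := evalB_sum_inr (n := n) z
    rw [evalB] at h1 h2
    rw [h1, h2]
  have hcardL : ∀ z : Fin n ⊕ Fin n → Bool,
      #(univ.filter fun b : Fin n => z (Sum.inr b) = true) ≤ n := by
    intro z
    calc #(univ.filter fun b : Fin n => z (Sum.inr b) = true) ≤ #(univ : Finset (Fin n)) :=
          Finset.card_filter_le _ _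
      _ = n := by rw [card_univ, Fintype.card_fin]
  refine ⟨?_, ?_, ?_, ?_⟩
  · -- totalDegree G1 = 1
    apply le_antisymm
    · exact totalDegree_finsetSum_le fun i _ => le_of_eq (totalDegree_X _)
    · have hcoeff : MvPolynomial.coeff (Finsupp.single (Sum.inl (⟨0, hn⟩ : Fin n)) 1) G1 = 1 := by
        rw [hG1, MvPolynomial.coeff_sum]
        rw [Finset.sum_congr rfl fun i _ =>
          MvPolynomial.coeff_X' (R := ℝ) (Sum.inl i) (Finsupp.single (Sum.inl (⟨0, hn⟩ : Fin n)) 1)]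
        have hcond : ∀ i : Fin n,
            ((Finsupp.single (Sum.inl i) 1 : (Fin n ⊕ Fin n) →₀ ℕ)
                = Finsupp.single (Sum.inl (⟨0, hn⟩ : Fin n)) 1)
              ↔ i = ⟨0, hn⟩ := by
          intro i
          rw [Finsupp.single_left_inj (one_ne_zero)]
          exact ⟨fun h => Sum.inl.inj h, fun h => by rw [h]⟩
        rw [Finset.sum_congr rfl fun i _ => if_congr (hcond i) rfl rfl]
        simp
      have hmem : (Finsupp.single (Sum.inl (⟨0, hn⟩ : Fin n)) 1) ∈ G1.support := by
        rw [MvPolynomial.mem_support_iff, hcoeff]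
        exact one_ne_zero
      have hle := MvPolynomial.le_totalDegree hmem
      rwa [Finsupp.sum_single_index rfl] at hle
  · -- totalDegree G2 = 1
    apply le_antisymm
    · rw [hG2]
      refine (totalDegree_sub _ _).trans (max_le ?_ ?_)
      · refine (totalDegree_add _ _).trans (max_le ?_ ?_) <;>
          exact totalDegree_finsetSum_le fun i _ => le_of_eq (totalDegree_X _)
      · rw [totalDegree_C]
        exact Nat.zero_le _
    · have hcoeff : MvPolynomial.coeff (Finsupp.single (Sum.inl (⟨0, hn⟩ : Fin n)) 1) G2 = 1 := by
        rw [hG2, MvPolynomial.coeff_sub, MvPolynomial.coeff_add, MvPolynomial.coeff_sum,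
          MvPolynomial.coeff_sum]
        have e1 : ∑ i : Fin n, MvPolynomial.coeff (Finsupp.single (Sum.inl (⟨0, hn⟩ : Fin n)) 1)
            (MvPolynomial.X (Sum.inl i) : MvPolynomial (Fin n ⊕ Fin n) ℝ) = 1 := by
          rw [Finset.sum_congr rfl fun i _ =>
            MvPolynomial.coeff_X' (R := ℝ) (Sum.inl i) (Finsupp.single (Sum.inl (⟨0, hn⟩ : Fin n)) 1)]
          have hcond : ∀ i : Fin n,
              ((Finsupp.single (Sum.inl i) 1 : (Fin n ⊕ Fin n) →₀ ℕ)
                  = Finsupp.single (Sum.inl (⟨0, hn⟩ : Fin n)) 1)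
                ↔ i = ⟨0, hn⟩ := by
            intro i
            rw [Finsupp.single_left_inj (one_ne_zero)]
            exact ⟨fun h => Sum.inl.inj h, fun h => by rw [h]⟩
          rw [Finset.sum_congr rfl fun i _ => if_congr (hcond i) rfl rfl]
          simp
        have e2 : ∑ i : Fin n, MvPolynomial.coeff (Finsupp.single (Sum.inl (⟨0, hn⟩ : Fin n)) 1)
            (MvPolynomial.X (Sum.inr i) : MvPolynomial (Fin n ⊕ Fin n) ℝ) = 0 := by
          refine Finset.sum_eq_zero fun i _ => ?_
          rw [MvPolynomial.coeff_X' (R := ℝ) (Sum.inr i)]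
          rw [if_neg]
          intro h
          have := (Finsupp.single_left_inj (α := Fin n ⊕ Fin n) (one_ne_zero (α := ℕ))).mp h
          exact Sum.inr_ne_inl this
        have e3 : MvPolynomial.coeff (Finsupp.single (Sum.inl (⟨0, hn⟩ : Fin n)) 1)
            (MvPolynomial.C ((n:ℝ)+1) : MvPolynomial (Fin n ⊕ Fin n) ℝ) = 0 := by
          rw [MvPolynomial.coeff_C, if_neg]
          intro h
          exact one_ne_zero (α := ℕ) (Finsupp.single_eq_zero.mp h.symm)
        rw [e1, e2, e3]
        ring
      have hmem : (Finsupp.single (Sum.inl (⟨0, hn⟩ : Fin n)) 1) ∈ G2.support := by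
        rw [MvPolynomial.mem_support_iff, hcoeff]
        exact one_ne_zero
      have hle := MvPolynomial.le_totalDegree hmem
      rwa [Finsupp.sum_single_index rfl] at hle
  · -- no common zeros
    intro z
    by_contra hcon
    push_neg at hcon
    obtain ⟨hz1, hz2⟩ := hcon
    rw [hEg1] at hz1
    rw [hEg2] at hz2
    rw [hz1] at hz2
    have hcR : (#(univ.filter fun b : Fin n => z (Sum.inr b) = true) : ℝ) = ((n + 1 : ℕ) : ℝ) := by
      push_cast
      linarith
    have := Nat.cast_injective (R := ℝ) hcR
    have := hcardL z
    omega
  · -- main part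
    intro h₁ h₂ hcube m₁ m₂ hml₁ hml₂ hme₁ hme₂
    by_contra hcon
    push_neg at hcon
    have hdeg : m₁.totalDegree < n := lt_of_le_of_lt (le_max_left _ _) hcon
    -- m₁ vanishes when all x-variables are false
    have h0 : ∀ z : Fin n ⊕ Fin n → Bool, (∀ a : Fin n, z (Sum.inl a) = false) → evalB z m₁ = 0 := by
      intro z hz
      rw [hme₁ z, evalB_mul]
      have hzero : evalB z G1 = 0 := by
        rw [hEg1]
        have : (univ.filter fun a : Fin n => z (Sum.inl a) = true) = ∅ := by
          refine Finset.filter_false_of_mem fun a _ => ?_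
          rw [hz a]
          simp
        rw [this]
        simp
      rw [hzero, mul_zero]
    -- m₁ equals 1 on the slice |X| + |Y| = n + 1
    have hone : ∀ X Y : Finset (Fin n), X.card + Y.card = n + 1 → evalB (pt X Y) m₁ = 1 := by
      intro X Y hXY
      rw [hme₁, evalB_mul]
      have hg2z : evalB (pt X Y) G2 = 0 := by
        rw [hEg2, filter_pt_inl, filter_pt_inr]
        have : (X.card : ℝ) + (Y.card : ℝ) = (n : ℝ) + 1 := by
          exact_mod_cast congrArg (Nat.cast (R := ℝ)) hXY
        linarith
      have hcube' := hcube (pt X Y)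
      rw [hg2z, mul_zero, add_zero] at hcube'
      exact hcube'
    -- the auxiliary univariate polynomial
    set v : Polynomial ℝ := ∑ e ∈ m₁.support,
        Polynomial.C (MvPolynomial.coeff e m₁ /
            ((n.choose (KA e.support).card : ℝ) * (n.choose (LB e.support).card : ℝ))) *
          (bp (KA e.support).card * bq n (LB e.support).card) with hv
    have hsupc : ∀ e ∈ m₁.support, (KA e.support).card + (LB e.support).card ≤ n - 1 := by
      intro e he
      rw [card_KA_add_LB]
      have h1' : e.support.card ≤ e.sum fun _ x => x := by
        rw [Finsupp.sum]
        calc e.support.card = ∑ _i ∈ e.support, 1 := by simp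
          _ ≤ ∑ i ∈ e.support, e i :=
            Finset.sum_le_sum fun i hi => Nat.one_le_iff_ne_zero.mpr (Finsupp.mem_support_iff.mp hi)
      have h2' := MvPolynomial.le_totalDegree he
      omega
    have hk_le : ∀ B : Finset (Fin n ⊕ Fin n), (KA B).card ≤ n := fun B =>
      le_trans (Finset.card_le_card (Finset.subset_univ _)) (by rw [card_univ, Fintype.card_fin])
    have hl_le : ∀ B : Finset (Fin n ⊕ Fin n), (LB B).card ≤ n := fun B =>
      le_trans (Finset.card_le_card (Finset.subset_univ _)) (by rw [card_univ, Fintype.card_fin])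
    have hvdeg : v.natDegree < n := by
      have hle : v.natDegree ≤ n - 1 := by
        rw [hv]
        apply Polynomial.natDegree_sum_le_of_forall_le
        intro e he
        refine (Polynomial.natDegree_mul_le).trans ?_
        rw [Polynomial.natDegree_C, zero_add]
        refine (Polynomial.natDegree_mul_le).trans ?_
        have hb1 := natDegree_bp_le (KA e.support).card
        have hb2 := natDegree_bq_le n (LB e.support).card
        have := hsupc e he
        omega
      omega
    have heval : ∀ s : ℕ, s ≤ n + 1 → v.eval (s:ℝ) =
        ∑ e ∈ m₁.support, MvPolynomial.coeff e m₁ /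
            ((n.choose (KA e.support).card : ℝ) * (n.choose (LB e.support).card : ℝ)) *
          ((s.choose (KA e.support).card : ℝ) * ((n + 1 - s).choose (LB e.support).card : ℝ)) := by
      intro s hs
      rw [hv, Polynomial.eval_finset_sum]
      refine Finset.sum_congr rfl fun e he => ?_
      rw [Polynomial.eval_mul, Polynomial.eval_mul, Polynomial.eval_C, bp_eval,
        bq_eval n _ s hs]
    have hv1 : ∀ s : ℕ, 1 ≤ s → s ≤ n → v.eval (s:ℝ) = 1 := by
      intro s hs1 hsn
      have hCns : ((n.choose s : ℕ) : ℝ) ≠ 0 := Nat.cast_ne_zero.mpr (Nat.choose_pos hsn).ne'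
      have hCnt : ((n.choose (n+1-s) : ℕ) : ℝ) ≠ 0 :=
        Nat.cast_ne_zero.mpr (Nat.choose_pos (by omega)).ne'
      have hkey : v.eval (s:ℝ) * ((n.choose s : ℝ) * (n.choose (n+1-s) : ℝ))
          = ∑ e ∈ m₁.support, MvPolynomial.coeff e m₁ *
            ((#((powersetCard s (univ : Finset (Fin n))).filter fun X => KA e.support ⊆ X) : ℝ) *
             (#((powersetCard (n+1-s) (univ : Finset (Fin n))).filter
                fun Y => LB e.support ⊆ Y) : ℝ)) := by
        rw [heval s (by omega), Finset.sum_mul]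
        refine Finset.sum_congr rfl fun e he => ?_
        have hCk : ((n.choose (KA e.support).card : ℕ) : ℝ) ≠ 0 :=
          Nat.cast_ne_zero.mpr (Nat.choose_pos (hk_le _)).ne'
        have hCl : ((n.choose (LB e.support).card : ℕ) : ℝ) ≠ 0 :=
          Nat.cast_ne_zero.mpr (Nat.choose_pos (hl_le _)).ne'
        have e1 : (#((powersetCard s (univ : Finset (Fin n))).filter fun X => KA e.support ⊆ X) : ℝ)
            * (n.choose (KA e.support).card : ℝ)
            = (n.choose s : ℝ) * (s.choose (KA e.support).card : ℝ) := by
          exact_mod_cast congrArg (Nat.cast (R := ℝ)) (card_superset_mul (KA e.support) s)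
        have e2 : (#((powersetCard (n+1-s) (univ : Finset (Fin n))).filter
              fun Y => LB e.support ⊆ Y) : ℝ) * (n.choose (LB e.support).card : ℝ)
            = (n.choose (n+1-s) : ℝ) * ((n+1-s).choose (LB e.support).card : ℝ) := by
          exact_mod_cast congrArg (Nat.cast (R := ℝ)) (card_superset_mul (LB e.support) (n+1-s))
        have hc1 : (#((powersetCard s (univ : Finset (Fin n))).filter
              fun X => KA e.support ⊆ X) : ℝ)
            = (n.choose s : ℝ) * (s.choose (KA e.support).card : ℝ) /
              (n.choose (KA e.support).card : ℝ) := (eq_div_iff hCk).mpr e1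
        have hc2 : (#((powersetCard (n+1-s) (univ : Finset (Fin n))).filter
              fun Y => LB e.support ⊆ Y) : ℝ)
            = (n.choose (n+1-s) : ℝ) * ((n+1-s).choose (LB e.support).card : ℝ) /
              (n.choose (LB e.support).card : ℝ) := (eq_div_iff hCl).mpr e2
        rw [hc1, hc2]
        field_simp
      rw [slice_sum m₁ hone s hs1 hsn] at hkey
      exact mul_right_cancel₀ (mul_ne_zero hCns hCnt) (hkey.trans (one_mul _).symm)
    have hv0 : v.eval 0 = 0 := by
      have h00 := heval 0 (by omega)
      rw [Nat.cast_zero] at h00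
      rw [h00]
      have hterm : ∀ e ∈ m₁.support, MvPolynomial.coeff e m₁ /
            ((n.choose (KA e.support).card : ℝ) * (n.choose (LB e.support).card : ℝ)) *
          (((0:ℕ).choose (KA e.support).card : ℝ) * ((n + 1 - 0).choose (LB e.support).card : ℝ))
          = MvPolynomial.coeff e m₁ *
            ((((0:ℕ).choose (KA e.support).card : ℝ) * (((n + 1).choose (LB e.support).card : ℝ))) /
              ((n.choose (KA e.support).card : ℝ) * (n.choose (LB e.support).card : ℝ))) := by
        intro e _
        rw [show n + 1 - 0 = n + 1 from rfl]
        ring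
      rw [Finset.sum_congr rfl hterm]
      -- group by support
      have hfib := Finset.sum_fiberwise_of_maps_to (s := m₁.support)
        (g := fun e : (Fin n ⊕ Fin n) →₀ ℕ => e.support)
        (t := (univ : Finset (Fin n ⊕ Fin n)).powerset)
        (fun e _ => Finset.mem_powerset.mpr (Finset.subset_univ _))
        (fun e => MvPolynomial.coeff e m₁ *
            ((((0:ℕ).choose (KA e.support).card : ℝ) * (((n + 1).choose (LB e.support).card : ℝ))) /
              ((n.choose (KA e.support).card : ℝ) * (n.choose (LB e.support).card : ℝ))))
      rw [← hfib]
      refine Finset.sum_eq_zero fun B _ => ?_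
      have hinner : ∑ e ∈ m₁.support.filter (fun e => e.support = B),
          MvPolynomial.coeff e m₁ *
            ((((0:ℕ).choose (KA e.support).card : ℝ) * (((n + 1).choose (LB e.support).card : ℝ))) /
              ((n.choose (KA e.support).card : ℝ) * (n.choose (LB e.support).card : ℝ)))
          = (∑ e ∈ m₁.support.filter (fun e => e.support = B), MvPolynomial.coeff e m₁) *
            ((((0:ℕ).choose (KA B).card : ℝ) * (((n + 1).choose (LB B).card : ℝ))) /
              ((n.choose (KA B).card : ℝ) * (n.choose (LB B).card : ℝ))) := by
        rw [Finset.sum_mul]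
        refine Finset.sum_congr rfl fun e he => ?_
        rw [(Finset.mem_filter.mp he).2]
      rw [hinner]
      by_cases hB : ∀ i ∈ B, i.isRight = true
      · rw [SS_zero m₁ h0 B hB, zero_mul]
      · push_neg at hB
        obtain ⟨i, hiB, hiR⟩ := hB
        have hKA : (KA B).card ≠ 0 := by
          rcases i with a | b
          · exact Finset.card_ne_zero_of_mem (show a ∈ KA B by simp [KA, hiB])
          · exact absurd rfl hiR
        have : ((0:ℕ).choose (KA B).card : ℝ) = 0 := by
          rw [Nat.choose_eq_zero_of_lt (Nat.pos_of_ne_zero hKA)]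
          exact Nat.cast_zero
        rw [this, zero_mul, zero_div, mul_zero]
    -- conclude
    have hinj : Function.Injective (fun i : Fin n => ((i:ℕ):ℝ) + 1) := by
      intro i j hij
      simp only at hij
      have : ((i:ℕ):ℝ) = ((j:ℕ):ℝ) := by linarith
      exact Fin.ext (Nat.cast_injective this)
    have hzero : v - Polynomial.C 1 = 0 := by
      apply Polynomial.eq_zero_of_natDegree_lt_card_of_eval_eq_zero (v - Polynomial.C 1) hinj
      · intro i
        rw [Polynomial.eval_sub, Polynomial.eval_C]
        have hcast : (((i:ℕ):ℝ) + 1) = (((i:ℕ) + 1 : ℕ):ℝ) := by push_cast; ring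
        rw [hcast, hv1 ((i:ℕ)+1) (by omega) (by omega)]
        ring
      · rw [Fintype.card_fin]
        have h1' : (v - Polynomial.C 1).natDegree ≤ max v.natDegree (Polynomial.C (1:ℝ)).natDegree :=
          Polynomial.natDegree_sub_le _ _
        rw [Polynomial.natDegree_C] at h1'
        omega
    have hv_eq : v = Polynomial.C 1 := sub_eq_zero.mp hzero
    rw [hv_eq] at hv0
    rw [Polynomial.eval_C] at hv0
    exact one_ne_zero hv0
end
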